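/- arXiv:math/0411386 — 6 statements merged into one kernel-verified Lean document; each statement's English description precedes it below -/
import Mathlib

section
/- For every fixed x ∈ ℝ^d and t > 0, the map (s, y) ↦ V^s(x, y, t) is continuous on [0,∞) × ℝ^d. -/
open MeasureTheory Set Filter Topology
open scoped RealInnerProductSpace ENNReal

/-- The frozen rate function `I^s_{0T}` on paths `[0,T] → ℝ^d`:
`(1/2)∫₀^T ‖φ̇_t − b(s,φ_t)‖² dt` if `φ` is absolutely continuous with `L²` derivative,
and `+∞` otherwise. -/
noncomputable def frozenRate {d : ℕ}
    (b : ℝ → EuclideanSpace ℝ (Fin d) → EuclideanSpace ℝ (Fin d))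
    (s T : ℝ) (φ : ℝ → EuclideanSpace ℝ (Fin d)) : ℝ≥0∞ :=
  ⨅ g ∈ {g : ℝ → EuclideanSpace ℝ (Fin d) |
      MemLp g 2 (volume.restrict (Ioc (0:ℝ) T)) ∧
      ∀ t ∈ Icc (0:ℝ) T, φ t = φ 0 + ∫ u in (0:ℝ)..t, g u},
    ∫⁻ t in Ioc (0:ℝ) T, ENNReal.ofReal ((1/2) * ‖g t - b s (φ t)‖^2)

/-- The cost function `V^s(x,y,t)`. -/
noncomputable def costFn {d : ℕ}
    (b : ℝ → EuclideanSpace ℝ (Fin d) → EuclideanSpace ℝ (Fin d))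
    (s : ℝ) (x y : EuclideanSpace ℝ (Fin d)) (t : ℝ) : ℝ≥0∞ :=
  ⨅ φ ∈ {φ : ℝ → EuclideanSpace ℝ (Fin d) |
      ContinuousOn φ (Icc (0:ℝ) t) ∧ φ 0 = x ∧ φ t = y},
    frozenRate b s t φ

section helpers
variable {d : ℕ}
local notation "E" => EuclideanSpace ℝ (Fin d)

theorem cont_b (b : ℝ → E → E)
    (hLipX : ∀ R > (0:ℝ), ∀ x : E, ∃ K ≥ (0:ℝ),
      ∀ t ≥ (0:ℝ), ∀ y₁ ∈ Metric.closedBall x R, ∀ y₂ ∈ Metric.closedBall x R,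
        ‖b t y₁ - b t y₂‖ ≤ K * ‖y₁ - y₂‖)
    (τ : ℝ) (hτ : 0 ≤ τ) : Continuous (b τ) := by
  rw [continuous_iff_continuousAt]
  intro z
  obtain ⟨K, hK0, hK⟩ := hLipX 1 one_pos z
  have hlip : LipschitzOnWith (Real.toNNReal K) (b τ) (Metric.closedBall z 1) := by
    apply LipschitzOnWith.of_dist_le_mul
    intro y₁ h1 y₂ h2
    rw [dist_eq_norm, dist_eq_norm]
    calc ‖b τ y₁ - b τ y₂‖ ≤ K * ‖y₁ - y₂‖ := hK τ hτ y₁ h1 y₂ h2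
    _ ≤ (Real.toNNReal K) * ‖y₁ - y₂‖ := by
        apply mul_le_mul_of_nonneg_right (Real.le_coe_toNNReal K) (norm_nonneg _)
  exact hlip.continuousOn.continuousAt (Metric.closedBall_mem_nhds z one_pos)

theorem conf_cont (c : E → E) (hc : Continuous c) (η R₀ : ℝ) (hη : 0 < η) (hR₀ : 0 < R₀)
    (hgrow : ∀ z : E, R₀ ≤ ‖z‖ → ⟪z, c z⟫ < -η * ‖z‖)
    (x : E) (t : ℝ) (g : ℝ → E) (hg : Continuous g) :
    ∀ u ∈ Icc (0:ℝ) t, ‖x + ∫ v in (0:ℝ)..u, g v‖ ≤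
      max ‖x‖ R₀ + ∫ v in (0:ℝ)..t, ‖g v - c (x + ∫ w in (0:ℝ)..v, g w)‖ := by
  set φ : ℝ → E := fun u => x + ∫ v in (0:ℝ)..u, g v with hφ
  have hφd : ∀ u : ℝ, HasDerivAt φ (g u) u := fun u =>
    ((hg.integral_hasStrictDerivAt 0 u).hasDerivAt).const_add x
  have hφc : Continuous φ := by
    rw [continuous_iff_continuousAt]; exact fun u => (hφd u).continuousAt
  set h : ℝ → ℝ := fun v => ‖g v - c (φ v)‖ with hh_def
  have hhc : Continuous h := (hg.sub (hc.comp hφc)).norm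
  have hh0 : ∀ v, 0 ≤ h v := fun v => norm_nonneg _
  set H : ℝ → ℝ := fun v => ∫ w in (0:ℝ)..v, h w with hH
  have hHd : ∀ v : ℝ, HasDerivAt H (h v) v := fun v =>
    (hhc.integral_hasStrictDerivAt 0 v).hasDerivAt
  have hHc : Continuous H := by
    rw [continuous_iff_continuousAt]; exact fun u => (hHd u).continuousAt
  have hH0 : ∀ v, 0 ≤ v → 0 ≤ H v := fun v hv =>
    intervalIntegral.integral_nonneg hv (fun w _ => hh0 w)
  intro u₀ hu₀
  set B : ℝ := max ‖x‖ R₀ with hB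
  have hBR : R₀ ≤ B := le_max_right _ _
  have keymono : H u₀ ≤ H t := by
    have h1 : IntervalIntegrable h volume 0 u₀ := hhc.intervalIntegrable _ _
    have h2 : IntervalIntegrable h volume u₀ t := hhc.intervalIntegrable _ _
    have := intervalIntegral.integral_add_adjacent_intervals h1 h2
    have h3 : 0 ≤ ∫ w in u₀..t, h w :=
      intervalIntegral.integral_nonneg hu₀.2 (fun w _ => hh0 w)
    simp only [hH]; linarith [this]
  suffices hsuff : ‖φ u₀‖ ≤ B + H u₀ by
    calc ‖φ u₀‖ ≤ B + H u₀ := hsuff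
    _ ≤ B + H t := by linarith
  by_contra hcon
  push_neg at hcon
  set A : Set ℝ := {v | v ∈ Icc 0 u₀ ∧ ‖φ v‖ ≤ B + H v} with hA
  have h0A : (0:ℝ) ∈ A := by
    constructor
    · exact ⟨le_refl _, hu₀.1⟩
    · have : φ 0 = x := by simp [hφ]
      have hH0' : H 0 = 0 := by simp [hH]
      rw [this, hH0', add_zero]
      exact le_max_left ‖x‖ R₀
  have hAc : IsClosed A := by
    have : A = Icc 0 u₀ ∩ {v | ‖φ v‖ ≤ B + H v} := rfl
    rw [this]
    exact isClosed_Icc.inter (isClosed_le hφc.norm (continuous_const.add hHc))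
  have hbdd : BddAbove A := (bddAbove_Icc (a := (0:ℝ)) (b := u₀)).mono (fun v hv => hv.1)
  set a : ℝ := sSup A with ha_def
  have haA : a ∈ A := hAc.csSup_mem ⟨0, h0A⟩ hbdd
  have ha0 : 0 ≤ a := haA.1.1
  have hau : a ≤ u₀ := haA.1.2
  have hane : a ≠ u₀ := by
    intro he; rw [he] at haA; exact absurd haA.2 (not_le.mpr hcon)
  have halt : a < u₀ := lt_of_le_of_ne hau hane
  have key : ∀ v ∈ Ioc a u₀, B + H v < ‖φ v‖ := by
    intro v hv
    by_contra h'
    push_neg at h'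
    have hvA : v ∈ A := ⟨⟨le_trans ha0 hv.1.le, hv.2⟩, h'⟩
    exact absurd (le_csSup hbdd hvA) (not_le.mpr hv.1)
  set D : ℝ → ℝ := fun v => ‖φ v‖ - H v with hD
  have hDanti : StrictAntiOn D (Icc a u₀) := by
    apply strictAntiOn_of_deriv_neg (convex_Icc a u₀) ((hφc.norm.sub hHc).continuousOn)
    intro v hv
    rw [interior_Icc] at hv
    have hvIoc : v ∈ Ioc a u₀ := ⟨hv.1, hv.2.le⟩
    have hRlt : R₀ < ‖φ v‖ := by
      have := key v hvIoc
      have := hH0 v (le_trans ha0 hv.1.le)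
      linarith
    have hφv0 : (0:ℝ) < ‖φ v‖ := lt_trans hR₀ hRlt
    have h1 : HasDerivAt (fun w => ‖φ w‖^2) (2 * ⟪φ v, g v⟫) v := (hφd v).norm_sq
    have hsq0 : ‖φ v‖^2 ≠ 0 := by positivity
    have h2 := h1.sqrt hsq0
    have heq : (fun w => Real.sqrt (‖φ w‖^2)) = fun w => ‖φ w‖ :=
      funext fun w => Real.sqrt_sq (norm_nonneg _)
    rw [heq, Real.sqrt_sq (norm_nonneg _)] at h2
    have hval : 2 * ⟪φ v, g v⟫ / (2 * ‖φ v‖) = ⟪φ v, g v⟫ / ‖φ v‖ :=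
      mul_div_mul_left _ _ two_ne_zero
    rw [hval] at h2
    have hDd : HasDerivAt D (⟪φ v, g v⟫ / ‖φ v‖ - h v) v := h2.sub (hHd v)
    rw [show deriv ((fun x => ‖φ x‖) - H) v = deriv D v from rfl, hDd.deriv]
    have hsplit : ⟪φ v, g v⟫ = ⟪φ v, c (φ v)⟫ + ⟪φ v, g v - c (φ v)⟫ := by
      rw [inner_sub_right]; ring
    have hCS : ⟪φ v, g v - c (φ v)⟫ ≤ ‖φ v‖ * h v := by
      calc ⟪φ v, g v - c (φ v)⟫ ≤ ‖φ v‖ * ‖g v - c (φ v)‖ := real_inner_le_norm _ _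
      _ = ‖φ v‖ * h v := rfl
    have hgr := hgrow (φ v) hRlt.le
    have hnum : ⟪φ v, g v⟫ < ‖φ v‖ * (h v - η) := by
      rw [hsplit]; nlinarith
    have : ⟪φ v, g v⟫ / ‖φ v‖ < h v - η := by
      rw [div_lt_iff₀ hφv0]; linarith [hnum]
    linarith
  have hfin : D u₀ < D a :=
    hDanti ⟨le_refl a, hau⟩ ⟨hau, le_refl u₀⟩ halt
  have hDa : D a ≤ B := by have := haA.2; simp only [hD]; linarith
  have hDu : B < D u₀ := by simp only [hD]; linarith
  linarith

theorem conf_gen (c : E → E) (hc : Continuous c) (η R₀ : ℝ) (hη : 0 < η) (hR₀ : 0 < R₀)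
    (hgrow : ∀ z : E, R₀ ≤ ‖z‖ → ⟪z, c z⟫ < -η * ‖z‖)
    (hLip : ∀ R > (0:ℝ), ∃ K ≥ (0:ℝ), ∀ y₁ ∈ Metric.closedBall (0:E) R,
      ∀ y₂ ∈ Metric.closedBall (0:E) R, ‖c y₁ - c y₂‖ ≤ K * ‖y₁ - y₂‖)
    (x : E) (t : ℝ) (ht : 0 < t) (g : ℝ → E) (hg : IntegrableOn g (Ioc (0:ℝ) t) volume) :
    ∀ u ∈ Icc (0:ℝ) t, ‖x + ∫ v in (0:ℝ)..u, g v‖ ≤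
      max ‖x‖ R₀ + ∫ v in (0:ℝ)..t, ‖g v - c (x + ∫ w in (0:ℝ)..v, g w)‖ := by
  set G : ℝ → E := (Ioc (0:ℝ) t).indicator g with hG
  have hGint : Integrable G volume := (integrable_indicator_iff measurableSet_Ioc).mpr hg
  have hip : ∀ u ∈ Icc (0:ℝ) t, (∫ v in (0:ℝ)..u, g v) = ∫ v in (0:ℝ)..u, G v := by
    intro u hu
    rw [intervalIntegral.integral_of_le hu.1, intervalIntegral.integral_of_le hu.1]
    apply setIntegral_congr_fun measurableSet_Ioc
    intro v hv
    have hmem : v ∈ Ioc (0:ℝ) t := ⟨hv.1, hv.2.trans hu.2⟩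
    simp [hG, Set.indicator_of_mem hmem]
  set φ : ℝ → E := fun u => x + ∫ v in (0:ℝ)..u, G v with hφ
  have hφc : Continuous φ := continuous_const.add (hGint.continuous_primitive 0)
  -- rewrite the goal in terms of G and φ
  have hgoal2 : (∫ v in (0:ℝ)..t, ‖g v - c (x + ∫ w in (0:ℝ)..v, g w)‖) =
      ∫ v in (0:ℝ)..t, ‖G v - c (φ v)‖ := by
    rw [intervalIntegral.integral_of_le ht.le, intervalIntegral.integral_of_le ht.le]
    apply setIntegral_congr_fun measurableSet_Ioc
    intro v hv
    have h1 : g v = G v := (Set.indicator_of_mem hv g).symm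
    have h2 : (x + ∫ w in (0:ℝ)..v, g w) = φ v := by
      rw [hip v ⟨hv.1.le, hv.2⟩]
    show ‖g v - c (x + ∫ w in (0:ℝ)..v, g w)‖ = ‖G v - c (φ v)‖
    rw [h1, h2]
  intro u hu
  rw [hip u hu, hgoal2]
  -- it suffices to prove the bound up to ε for every ε > 0
  apply le_of_forall_pos_le_add
  intro ε hε
  -- bound for the range of φ on [0,t]
  obtain ⟨R₁, hR₁⟩ := isCompact_Icc.exists_bound_of_continuousOn
    (s := Icc (0:ℝ) t) hφc.continuousOn
  have hR₁0 : 0 ≤ R₁ := le_trans (norm_nonneg _) (hR₁ 0 ⟨le_refl _, ht.le⟩)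
  obtain ⟨K, hK0, hK⟩ := hLip (R₁ + 1) (by linarith)
  -- choose δ
  set δ : ℝ := min 1 (ε / (2 + t * K + 1)) with hδdef
  have hδpos : 0 < δ := by
    have hden : (0:ℝ) < 2 + t * K + 1 := by nlinarith [mul_nonneg ht.le hK0]
    exact lt_min one_pos (div_pos hε hden)
  have hδ1 : δ ≤ 1 := min_le_left _ _
  have hδε : δ * (2 + t * K) ≤ ε := by
    have h1 : δ ≤ ε / (2 + t * K + 1) := min_le_right _ _
    have h2 : 0 < 2 + t * K + 1 := by nlinarith [mul_nonneg ht.le hK0]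
    have h3 : δ * (2 + t * K + 1) ≤ ε := by
      rw [← le_div_iff₀ h2]; exact h1
    nlinarith [hδpos]
  -- continuous approximation of G in L¹
  obtain ⟨g', -, hg'close, hg'cont, hg'int⟩ :=
    hGint.exists_hasCompactSupport_integral_sub_le hδpos
  set ψ : ℝ → E := fun u => x + ∫ v in (0:ℝ)..u, g' v with hψ
  have hψc : Continuous ψ := continuous_const.add (hg'int.continuous_primitive 0)
  have hdiffint : Integrable (fun v => G v - g' v) volume := hGint.sub hg'int
  -- closeness of paths
  have hclose : ∀ u ∈ Icc (0:ℝ) t, ‖ψ u - φ u‖ ≤ δ := by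
    intro u hu
    have h1 : ψ u - φ u = ∫ v in (0:ℝ)..u, (g' v - G v) := by
      rw [intervalIntegral.integral_sub hg'int.intervalIntegrable
        hGint.intervalIntegrable]
      simp [hψ, hφ]
    rw [h1]
    calc ‖∫ v in (0:ℝ)..u, (g' v - G v)‖ ≤ ∫ v in (0:ℝ)..u, ‖g' v - G v‖ :=
          intervalIntegral.norm_integral_le_integral_norm hu.1
    _ = ∫ v in Ioc (0:ℝ) u, ‖g' v - G v‖ := intervalIntegral.integral_of_le hu.1
    _ ≤ ∫ v, ‖g' v - G v‖ := by
        apply setIntegral_le_integral (hg'int.sub hGint).norm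
        filter_upwards with v using norm_nonneg _
    _ = ∫ v, ‖G v - g' v‖ := by simp_rw [norm_sub_rev]
    _ ≤ δ := hg'close
  -- apply the continuous-case confinement to g'
  have hconf := conf_cont c hc η R₀ hη hR₀ hgrow x t g' hg'cont u hu
  -- bound the integral difference
  have hφball : ∀ v ∈ Icc (0:ℝ) t, φ v ∈ Metric.closedBall (0:E) (R₁ + 1) := by
    intro v hv
    rw [Metric.mem_closedBall, dist_zero_right]
    linarith [hR₁ v hv]
  have hψball : ∀ v ∈ Icc (0:ℝ) t, ψ v ∈ Metric.closedBall (0:E) (R₁ + 1) := by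
    intro v hv
    rw [Metric.mem_closedBall, dist_zero_right]
    have := hclose v hv
    have h2 := hR₁ v hv
    calc ‖ψ v‖ ≤ ‖φ v‖ + ‖ψ v - φ v‖ := by
          have := norm_add_le (φ v) (ψ v - φ v); simpa using this
    _ ≤ R₁ + 1 := by linarith
  have hptwise : ∀ v ∈ Icc (0:ℝ) t,
      ‖g' v - c (ψ v)‖ ≤ ‖G v - c (φ v)‖ + (‖g' v - G v‖ + K * δ) := by
    intro v hv
    have hlip := hK (ψ v) (hψball v hv) (φ v) (hφball v hv)
    have h2 : ‖c (ψ v) - c (φ v)‖ ≤ K * δ := by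
      calc ‖c (ψ v) - c (φ v)‖ ≤ K * ‖ψ v - φ v‖ := hlip
      _ ≤ K * δ := by
          apply mul_le_mul_of_nonneg_left (hclose v hv) hK0
    calc ‖g' v - c (ψ v)‖
        = ‖(G v - c (φ v)) + ((g' v - G v) + (c (φ v) - c (ψ v)))‖ := by
          rw [show (G v - c (φ v)) + ((g' v - G v) + (c (φ v) - c (ψ v)))
            = g' v - c (ψ v) from by abel]
    _ ≤ ‖G v - c (φ v)‖ + ‖(g' v - G v) + (c (φ v) - c (ψ v))‖ := norm_add_le _ _
    _ ≤ ‖G v - c (φ v)‖ + (‖g' v - G v‖ + ‖c (φ v) - c (ψ v)‖) := by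
        gcongr; exact norm_add_le _ _
    _ ≤ ‖G v - c (φ v)‖ + (‖g' v - G v‖ + K * δ) := by
        rw [norm_sub_rev] at h2; gcongr
  -- integrate the pointwise bound
  have hint1 : IntervalIntegrable (fun v => ‖g' v - c (ψ v)‖) volume 0 t :=
    ((hg'cont.sub (hc.comp hψc)).norm).intervalIntegrable _ _
  have hint2 : IntervalIntegrable (fun v => ‖G v - c (φ v)‖) volume 0 t :=
    (hGint.intervalIntegrable.sub ((hc.comp hφc).intervalIntegrable 0 t)).norm
  have hint3 : IntervalIntegrable (fun v => ‖g' v - G v‖) volume 0 t :=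
    (hg'int.intervalIntegrable.sub hGint.intervalIntegrable).norm
  have hintsum : IntervalIntegrable
      (fun v => ‖G v - c (φ v)‖ + (‖g' v - G v‖ + K * δ)) volume 0 t :=
    hint2.add (hint3.add (intervalIntegrable_const))
  have hIbound : (∫ v in (0:ℝ)..t, ‖g' v - c (ψ v)‖) ≤
      (∫ v in (0:ℝ)..t, ‖G v - c (φ v)‖) + (δ + t * (K * δ)) := by
    have step1 : (∫ v in (0:ℝ)..t, ‖g' v - c (ψ v)‖) ≤
        ∫ v in (0:ℝ)..t, (‖G v - c (φ v)‖ + (‖g' v - G v‖ + K * δ)) := by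
      apply intervalIntegral.integral_mono_on ht.le hint1 hintsum
      intro v hv
      exact hptwise v hv
    have step2 : (∫ v in (0:ℝ)..t, (‖G v - c (φ v)‖ + (‖g' v - G v‖ + K * δ))) =
        (∫ v in (0:ℝ)..t, ‖G v - c (φ v)‖) + ((∫ v in (0:ℝ)..t, ‖g' v - G v‖)
          + t * (K * δ)) := by
      rw [intervalIntegral.integral_add hint2 (hint3.add intervalIntegrable_const),
        intervalIntegral.integral_add hint3 intervalIntegrable_const]
      simp only [intervalIntegral.integral_const, smul_eq_mul, sub_zero]
    have step3 : (∫ v in (0:ℝ)..t, ‖g' v - G v‖) ≤ δ := by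
      calc (∫ v in (0:ℝ)..t, ‖g' v - G v‖)
          = ∫ v in Ioc (0:ℝ) t, ‖g' v - G v‖ := intervalIntegral.integral_of_le ht.le
      _ ≤ ∫ v, ‖g' v - G v‖ := by
          apply setIntegral_le_integral (hg'int.sub hGint).norm
          filter_upwards with v using norm_nonneg _
      _ = ∫ v, ‖G v - g' v‖ := by simp_rw [norm_sub_rev]
      _ ≤ δ := hg'close
    calc (∫ v in (0:ℝ)..t, ‖g' v - c (ψ v)‖)
        ≤ (∫ v in (0:ℝ)..t, ‖G v - c (φ v)‖) + ((∫ v in (0:ℝ)..t, ‖g' v - G v‖)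
            + t * (K * δ)) := by rw [← step2]; exact step1
    _ ≤ (∫ v in (0:ℝ)..t, ‖G v - c (φ v)‖) + (δ + t * (K * δ)) := by gcongr
  -- assemble
  have hmain : ‖φ u‖ ≤ ‖ψ u‖ + δ := by
    have h1 : ‖φ u‖ ≤ ‖ψ u‖ + ‖φ u - ψ u‖ := by
      have := norm_add_le (ψ u) (φ u - ψ u); simpa using this
    have h2 : ‖φ u - ψ u‖ ≤ δ := by rw [norm_sub_rev]; exact hclose u hu
    linarith
  have htK : 0 ≤ t * K := mul_nonneg ht.le hK0
  calc ‖φ u‖ ≤ ‖ψ u‖ + δ := hmain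
  _ ≤ (max ‖x‖ R₀ + ∫ v in (0:ℝ)..t, ‖g' v - c (ψ v)‖) + δ := by
      have hconf' : ‖ψ u‖ ≤ max ‖x‖ R₀ + ∫ v in (0:ℝ)..t, ‖g' v - c (ψ v)‖ := hconf
      linarith
  _ ≤ (max ‖x‖ R₀ + ((∫ v in (0:ℝ)..t, ‖G v - c (φ v)‖) + (δ + t * (K * δ)))) + δ := by
      linarith [hIbound]
  _ = max ‖x‖ R₀ + (∫ v in (0:ℝ)..t, ‖G v - c (φ v)‖) + δ * (2 + t * K) := by ring
  _ ≤ max ‖x‖ R₀ + (∫ v in (0:ℝ)..t, ‖G v - c (φ v)‖) + ε := by linarith [hδε]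

theorem lint_half_sq (f : ℝ → E) (μ : Measure ℝ) :
    ∫⁻ u, ENNReal.ofReal ((1/2) * ‖f u‖^2) ∂μ = 2⁻¹ * (eLpNorm f 2 μ)^2 := by
  have h1 : ∀ u : ℝ, ENNReal.ofReal ((1/2) * ‖f u‖^2)
      = 2⁻¹ * ((‖f u‖₊ : ℝ≥0∞))^2 := by
    intro u
    rw [ENNReal.ofReal_mul (by norm_num), ENNReal.ofReal_pow (norm_nonneg _)]
    congr 1
    · rw [ENNReal.ofReal_div_of_pos (by norm_num)]
      norm_num
    · rw [ofReal_norm, enorm_eq_nnnorm]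
  have h2 : ∫⁻ u, ENNReal.ofReal ((1/2) * ‖f u‖^2) ∂μ
      = 2⁻¹ * ∫⁻ u, ((‖f u‖₊ : ℝ≥0∞))^2 ∂μ := by
    simp_rw [h1]
    exact lintegral_const_mul' _ _ (by norm_num)
  rw [h2]
  congr 1
  rw [eLpNorm_eq_lintegral_rpow_enorm_toReal (by norm_num) (by norm_num)]; simp only [enorm_eq_nnnorm]
  rw [← ENNReal.rpow_natCast _ 2, ← ENNReal.rpow_mul]
  norm_num

theorem le_ofReal_of_sq {A : ℝ≥0∞} {a : ℝ} (ha : 0 ≤ a)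
    (h : A^2 ≤ ENNReal.ofReal (a^2)) : A ≤ ENNReal.ofReal a := by
  have h2 : ENNReal.ofReal (a^2) = (ENNReal.ofReal a)^2 := by
    rw [ENNReal.ofReal_pow ha]
  rw [h2] at h
  have := ENNReal.rpow_le_rpow (z := 2⁻¹) h (by norm_num)
  rw [← ENNReal.rpow_natCast A 2, ← ENNReal.rpow_natCast (ENNReal.ofReal a) 2,
    ← ENNReal.rpow_mul, ← ENNReal.rpow_mul] at this
  norm_num at this
  exact this

theorem finIoc (t : ℝ) : IsFiniteMeasure (volume.restrict (Ioc (0:ℝ) t)) := by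
  constructor
  rw [Measure.restrict_apply_univ]
  exact measure_Ioc_lt_top

theorem bound_b (b : ℝ → E → E)
    (hLipX : ∀ R > (0:ℝ), ∀ x : E, ∃ K ≥ (0:ℝ),
      ∀ t ≥ (0:ℝ), ∀ y₁ ∈ Metric.closedBall x R, ∀ y₂ ∈ Metric.closedBall x R,
        ‖b t y₁ - b t y₂‖ ≤ K * ‖y₁ - y₂‖)
    (hLipT : ∀ R > (0:ℝ), ∀ x : E, ∃ κ ≥ (0:ℝ),
      ∀ s ≥ (0:ℝ), ∀ t ≥ (0:ℝ), ∀ y ∈ Metric.closedBall x R,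
        ‖b t y - b s y‖ ≤ κ * |t - s|)
    (R S : ℝ) (hR : 0 < R) (hS : 0 ≤ S) :
    ∃ Cb ≥ (0:ℝ), ∀ s ∈ Icc (0:ℝ) S, ∀ z ∈ Metric.closedBall (0:E) R, ‖b s z‖ ≤ Cb := by
  obtain ⟨K, hK0, hK⟩ := hLipX R hR 0
  obtain ⟨κ, hκ0, hκ⟩ := hLipT R hR 0
  refine ⟨K*R + κ*S + ‖b 0 0‖, by positivity, ?_⟩
  intro s hs z hz
  have h0mem : (0:E) ∈ Metric.closedBall (0:E) R := Metric.mem_closedBall_self hR.le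
  have h1 : ‖b s z - b s 0‖ ≤ K * R := by
    have := hK s hs.1 z hz 0 h0mem
    have hzn : ‖z - 0‖ ≤ R := by
      rw [sub_zero, ← dist_zero_right z]
      exact hz
    calc ‖b s z - b s 0‖ ≤ K * ‖z - 0‖ := this
    _ ≤ K * R := by apply mul_le_mul_of_nonneg_left hzn hK0
  have h2 : ‖b s 0 - b 0 0‖ ≤ κ * S := by
    have := hκ 0 (le_refl _) s hs.1 0 h0mem
    have : ‖b s 0 - b 0 0‖ ≤ κ * |s - 0| := this
    have habs : |s - 0| ≤ S := by rw [sub_zero, abs_of_nonneg hs.1]; exact hs.2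
    calc ‖b s 0 - b 0 0‖ ≤ κ * |s - 0| := this
    _ ≤ κ * S := by apply mul_le_mul_of_nonneg_left habs hκ0
  calc ‖b s z‖ = ‖(b s z - b s 0) + (b s 0 - b 0 0) + b 0 0‖ := by
        rw [show (b s z - b s 0) + (b s 0 - b 0 0) + b 0 0 = b s z from by abel]
  _ ≤ ‖(b s z - b s 0) + (b s 0 - b 0 0)‖ + ‖b 0 0‖ := norm_add_le _ _
  _ ≤ ‖b s z - b s 0‖ + ‖b s 0 - b 0 0‖ + ‖b 0 0‖ := by gcongr; exact norm_add_le _ _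
  _ ≤ K*R + κ*S + ‖b 0 0‖ := by gcongr

theorem cost_le_line (b : ℝ → E → E) (x y : E) (s t : ℝ) (ht : 0 < t) (Cb : ℝ)
    (hCb : ∀ z ∈ Metric.closedBall (0:E) (‖x‖ + ‖y - x‖), ‖b s z‖ ≤ Cb) :
    costFn b s x y t ≤ ENNReal.ofReal ((t/2) * (‖y - x‖/t + Cb)^2) := by
  haveI := finIoc t
  set φ : ℝ → E := fun u => x + (u/t) • (y - x) with hφ
  set g : ℝ → E := fun _ => t⁻¹ • (y - x) with hg
  have hCb0 : 0 ≤ Cb := le_trans (norm_nonneg _)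
    (hCb 0 (Metric.mem_closedBall_self (by positivity)))
  have hmem1 : φ ∈ {φ : ℝ → E | ContinuousOn φ (Icc (0:ℝ) t) ∧ φ 0 = x ∧ φ t = y} := by
    refine ⟨?_, ?_, ?_⟩
    · exact (continuous_const.add ((continuous_id.div_const t).smul continuous_const)).continuousOn
    · simp [hφ]
    · simp [hφ, div_self ht.ne']
  have hmem2 : g ∈ {g : ℝ → E | MemLp g 2 (volume.restrict (Ioc (0:ℝ) t)) ∧
      ∀ u ∈ Icc (0:ℝ) t, φ u = φ 0 + ∫ v in (0:ℝ)..u, g v} := by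
    refine ⟨memLp_const _, ?_⟩
    intro u hu
    rw [intervalIntegral.integral_const]
    simp [hφ, hg, smul_smul, div_eq_mul_inv]
  have step1 : costFn b s x y t ≤ frozenRate b s t φ := by
    rw [costFn]
    exact iInf₂_le φ hmem1
  have step2 : frozenRate b s t φ ≤
      ∫⁻ u in Ioc (0:ℝ) t, ENNReal.ofReal ((1/2) * ‖g u - b s (φ u)‖^2) := by
    rw [frozenRate]
    exact iInf₂_le g hmem2
  have step3 : (∫⁻ u in Ioc (0:ℝ) t, ENNReal.ofReal ((1/2) * ‖g u - b s (φ u)‖^2))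
      ≤ ENNReal.ofReal ((1/2) * (‖y - x‖/t + Cb)^2) * ENNReal.ofReal t := by
    have hb : ∀ u ∈ Ioc (0:ℝ) t, ENNReal.ofReal ((1/2) * ‖g u - b s (φ u)‖^2)
        ≤ ENNReal.ofReal ((1/2) * (‖y - x‖/t + Cb)^2) := by
      intro u hu
      apply ENNReal.ofReal_le_ofReal
      have hnφ : ‖φ u‖ ≤ ‖x‖ + ‖y - x‖ := by
        have h1 : ‖(u/t) • (y - x)‖ ≤ ‖y - x‖ := by
          rw [norm_smul, Real.norm_eq_abs, abs_of_nonneg (div_nonneg hu.1.le ht.le)]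
          have : u / t ≤ 1 := (div_le_one ht).mpr hu.2
          nlinarith [norm_nonneg (y - x)]
        calc ‖φ u‖ ≤ ‖x‖ + ‖(u/t) • (y - x)‖ := norm_add_le _ _
        _ ≤ ‖x‖ + ‖y - x‖ := by linarith
      have hbφ : ‖b s (φ u)‖ ≤ Cb := by
        apply hCb
        rw [Metric.mem_closedBall, dist_zero_right]
        exact hnφ
      have hng : ‖g u‖ ≤ ‖y - x‖/t := by
        rw [hg]
        rw [norm_smul, Real.norm_eq_abs, abs_of_nonneg (by positivity)]
        rw [div_eq_inv_mul]
      have hnorm : ‖g u - b s (φ u)‖ ≤ ‖y - x‖/t + Cb := by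
        calc ‖g u - b s (φ u)‖ ≤ ‖g u‖ + ‖b s (φ u)‖ := norm_sub_le _ _
        _ ≤ ‖y - x‖/t + Cb := by gcongr
      have hsq : ‖g u - b s (φ u)‖^2 ≤ (‖y - x‖/t + Cb)^2 := by
        apply pow_le_pow_left₀ (norm_nonneg _) hnorm
      linarith
    calc (∫⁻ u in Ioc (0:ℝ) t, ENNReal.ofReal ((1/2) * ‖g u - b s (φ u)‖^2))
        ≤ ∫⁻ _ in Ioc (0:ℝ) t, ENNReal.ofReal ((1/2) * (‖y - x‖/t + Cb)^2) :=
          setLIntegral_mono' measurableSet_Ioc hb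
    _ = ENNReal.ofReal ((1/2) * (‖y - x‖/t + Cb)^2) * ENNReal.ofReal t := by
        rw [setLIntegral_const, Real.volume_Ioc, sub_zero]
  calc costFn b s x y t ≤ _ := le_trans step1 (le_trans step2 step3)
  _ = ENNReal.ofReal ((t/2) * (‖y - x‖/t + Cb)^2) := by
      rw [← ENNReal.ofReal_mul (by positivity)]
      congr 1
      ring

set_option maxHeartbeats 1000000 in
theorem cost_shift (b : ℝ → E → E) (x : E) (t : ℝ) (ht : 0 < t)
    (η R₀ : ℝ) (hη : 0 < η) (hR₀ : 0 < R₀)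
    (hgrowth : ∀ τ ≥ (0:ℝ), ∀ z : E, R₀ ≤ ‖z‖ → ⟪z, b τ z⟫ < -η * ‖z‖)
    (hLipX : ∀ R > (0:ℝ), ∀ x : E, ∃ K ≥ (0:ℝ),
      ∀ t ≥ (0:ℝ), ∀ y₁ ∈ Metric.closedBall x R, ∀ y₂ ∈ Metric.closedBall x R,
        ‖b t y₁ - b t y₂‖ ≤ K * ‖y₁ - y₂‖)
    (s s' : ℝ) (hs : 0 ≤ s) (hs' : 0 ≤ s') (y y' : E)
    (Mr : ℝ) (hMr0 : 0 ≤ Mr) (hWle : costFn b s x y t ≤ ENNReal.ofReal Mr)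
    (ρ₂ : ℝ)
    (hρ₂ : max ‖x‖ R₀ + Real.sqrt (2*(Mr+1)) * Real.sqrt t + ‖y' - y‖ ≤ ρ₂)
    (K : ℝ) (hK0 : 0 ≤ K)
    (hK : ∀ τ ≥ (0:ℝ), ∀ z₁ ∈ Metric.closedBall (0:E) ρ₂, ∀ z₂ ∈ Metric.closedBall (0:E) ρ₂,
      ‖b τ z₁ - b τ z₂‖ ≤ K * ‖z₁ - z₂‖)
    (κ : ℝ) (hκ0 : 0 ≤ κ)
    (hκ : ∀ σ ≥ (0:ℝ), ∀ τ ≥ (0:ℝ), ∀ z ∈ Metric.closedBall (0:E) ρ₂,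
      ‖b τ z - b σ z‖ ≤ κ * |τ - σ|)
    (ε' : ℝ) (hε' : 0 < ε') (hε'1 : ε' ≤ 1) :
    costFn b s' x y' t ≤ costFn b s x y t +
      ENNReal.ofReal (ε' +
        Real.sqrt (2*(Mr+1)) * (Real.sqrt t * ((t⁻¹ + K) * ‖y' - y‖ + κ * |s' - s|))
        + (Real.sqrt t * ((t⁻¹ + K) * ‖y' - y‖ + κ * |s' - s|))^2/2) := by
  haveI := finIoc t
  set μt := volume.restrict (Ioc (0:ℝ) t) with hμt
  set A₀ : ℝ := Real.sqrt (2*(Mr+1)) with hA₀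
  set cp : ℝ := (t⁻¹ + K) * ‖y' - y‖ + κ * |s' - s| with hcp
  set cR : ℝ := Real.sqrt t * cp with hcR
  have hcp0 : 0 ≤ cp := by positivity
  have hc0 : 0 ≤ cR := by positivity
  have hA₀0 : 0 ≤ A₀ := Real.sqrt_nonneg _
  have hWtop : costFn b s x y t ≠ ⊤ := (lt_of_le_of_lt hWle ENNReal.ofReal_lt_top).ne
  have hWlt : costFn b s x y t < costFn b s x y t + ENNReal.ofReal ε' :=
    ENNReal.lt_add_right hWtop (by simp only [ne_eq, ENNReal.ofReal_eq_zero, not_le]; linarith)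
  -- extract a near-optimal pair (φ, g)
  have h2 : (⨅ φ ∈ {φ : ℝ → E | ContinuousOn φ (Icc (0:ℝ) t) ∧ φ 0 = x ∧ φ t = y},
      frozenRate b s t φ) < costFn b s x y t + ENNReal.ofReal ε' := hWlt
  simp only [iInf_lt_iff] at h2
  obtain ⟨φ, hφmem, h3⟩ := h2
  have h4 : (⨅ g ∈ {g : ℝ → E | MemLp g 2 (volume.restrict (Ioc (0:ℝ) t)) ∧
      ∀ u ∈ Icc (0:ℝ) t, φ u = φ 0 + ∫ v in (0:ℝ)..u, g v},
      ∫⁻ u in Ioc (0:ℝ) t, ENNReal.ofReal ((1/2) * ‖g u - b s (φ u)‖^2))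
      < costFn b s x y t + ENNReal.ofReal ε' := h3
  simp only [iInf_lt_iff] at h4
  obtain ⟨g, hgmem, h5⟩ := h4
  have hφmem' : ContinuousOn φ (Icc (0:ℝ) t) ∧ φ 0 = x ∧ φ t = y := hφmem
  have hgmem' : MemLp g 2 μt ∧
      ∀ u ∈ Icc (0:ℝ) t, φ u = φ 0 + ∫ v in (0:ℝ)..u, g v := hgmem
  have h6 : 2⁻¹ * (eLpNorm (fun u => g u - b s (φ u)) 2 μt)^2
      < costFn b s x y t + ENNReal.ofReal ε' :=
    lt_of_eq_of_lt (lint_half_sq (fun u => g u - b s (φ u)) μt).symm h5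
  set a : ℝ≥0∞ := eLpNorm (fun u => g u - b s (φ u)) 2 μt with ha_def
  -- bound a
  have ha2 : 2⁻¹ * a^2 ≤ ENNReal.ofReal (Mr + 1) := by
    refine le_trans h6.le ?_
    calc costFn b s x y t + ENNReal.ofReal ε'
        ≤ ENNReal.ofReal Mr + ENNReal.ofReal 1 :=
          add_le_add hWle (ENNReal.ofReal_le_ofReal hε'1)
    _ = ENNReal.ofReal (Mr + 1) := (ENNReal.ofReal_add hMr0 zero_le_one).symm
  have ha : a ≤ ENNReal.ofReal A₀ := by
    apply le_ofReal_of_sq hA₀0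
    have e1 : a^2 = 2 * (2⁻¹ * a^2) := by
      rw [← mul_assoc, ENNReal.mul_inv_cancel two_ne_zero ENNReal.ofNat_ne_top, one_mul]
    rw [e1, hA₀, Real.sq_sqrt (by positivity)]
    calc 2 * (2⁻¹ * a^2) ≤ 2 * ENNReal.ofReal (Mr + 1) := mul_le_mul_right ha2 2
    _ = ENNReal.ofReal (2*(Mr+1)) := by
        rw [ENNReal.ofReal_mul (by norm_num)]
        norm_num
  -- measurability
  have hφcont := hφmem'.1
  have hbscont := cont_b b hLipX s hs
  have hbs'cont := cont_b b hLipX s' hs'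
  have hgaesm : AEStronglyMeasurable g μt := hgmem'.1.aestronglyMeasurable
  have hbφaesm : AEStronglyMeasurable (fun u => b s (φ u)) μt :=
    (((hbscont.comp_continuousOn hφcont).mono Ioc_subset_Icc_self).aestronglyMeasurable
      measurableSet_Ioc)
  have hfm : AEStronglyMeasurable (fun u => g u - b s (φ u)) μt := hgaesm.sub hbφaesm
  -- confinement
  have hgint : IntegrableOn g (Ioc (0:ℝ) t) volume :=
    memLp_one_iff_integrable.mp (hgmem'.1.mono_exponent (by norm_num))
  have hφeq : ∀ u ∈ Icc (0:ℝ) t, φ u = x + ∫ v in (0:ℝ)..u, g v := by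
    intro u hu
    rw [hgmem'.2 u hu, hφmem'.2.1]
  have hLip' : ∀ R > (0:ℝ), ∃ K' ≥ (0:ℝ), ∀ y₁ ∈ Metric.closedBall (0:E) R,
      ∀ y₂ ∈ Metric.closedBall (0:E) R, ‖b s y₁ - b s y₂‖ ≤ K' * ‖y₁ - y₂‖ := by
    intro R hR
    obtain ⟨K', h0, hh⟩ := hLipX R hR 0
    exact ⟨K', h0, fun y₁ h1 y₂ h2 => hh s hs y₁ h1 y₂ h2⟩
  have hconf := conf_gen (b s) hbscont η R₀ hη hR₀ (fun z hz => hgrowth s hs z hz)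
    hLip' x t ht g hgint
  have hI1eq : (∫ v in (0:ℝ)..t, ‖g v - b s (x + ∫ w in (0:ℝ)..v, g w)‖)
      = ∫ v in (0:ℝ)..t, ‖g v - b s (φ v)‖ := by
    rw [intervalIntegral.integral_of_le ht.le, intervalIntegral.integral_of_le ht.le]
    apply setIntegral_congr_fun measurableSet_Ioc
    intro v hv
    show ‖g v - b s (x + ∫ w in (0:ℝ)..v, g w)‖ = ‖g v - b s (φ v)‖
    rw [← hφeq v ⟨hv.1.le, hv.2⟩]
  have hρb : ∀ u ∈ Icc (0:ℝ) t, ‖φ u‖ ≤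
      max ‖x‖ R₀ + ∫ v in (0:ℝ)..t, ‖g v - b s (φ v)‖ := by
    intro u hu
    rw [hφeq u hu, ← hI1eq]
    exact hconf u hu
  -- bound the L¹ norm by the L² norm
  have hI1 : (∫ v in (0:ℝ)..t, ‖g v - b s (φ v)‖) ≤ A₀ * Real.sqrt t := by
    have e1 : (∫ v in (0:ℝ)..t, ‖g v - b s (φ v)‖)
        = (∫⁻ v, ENNReal.ofReal ‖g v - b s (φ v)‖ ∂μt).toReal := by
      rw [intervalIntegral.integral_of_le ht.le]
      exact integral_eq_lintegral_of_nonneg_ae (ae_of_all _ fun v => norm_nonneg _) hfm.norm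
    have e2 : (∫⁻ v, ENNReal.ofReal ‖g v - b s (φ v)‖ ∂μt)
        = eLpNorm (fun u => g u - b s (φ u)) 1 μt := by
      rw [eLpNorm_one_eq_lintegral_enorm]
      apply lintegral_congr
      intro v
      exact ofReal_norm _
    have e4 : μt univ = ENNReal.ofReal t := by
      rw [hμt, Measure.restrict_apply_univ, Real.volume_Ioc, sub_zero]
    have e3 : eLpNorm (fun u => g u - b s (φ u)) 1 μt ≤ ENNReal.ofReal (A₀ * Real.sqrt t) := by
      calc eLpNorm (fun u => g u - b s (φ u)) 1 μt
          ≤ eLpNorm (fun u => g u - b s (φ u)) 2 μt *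
            μt univ ^ ((1:ℝ)/(1:ℝ≥0∞).toReal - 1/(2:ℝ≥0∞).toReal) :=
            eLpNorm_le_eLpNorm_mul_rpow_measure_univ one_le_two hfm
      _ ≤ ENNReal.ofReal A₀ * ENNReal.ofReal (Real.sqrt t) := by
          apply mul_le_mul' ha
          rw [e4]
          have : ((1:ℝ)/(1:ℝ≥0∞).toReal - 1/(2:ℝ≥0∞).toReal) = (1/2 : ℝ) := by
            norm_num
          rw [this, ENNReal.ofReal_rpow_of_nonneg ht.le (by norm_num),
            ← Real.sqrt_eq_rpow]
      _ = ENNReal.ofReal (A₀ * Real.sqrt t) := (ENNReal.ofReal_mul hA₀0).symm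
    rw [e1, e2]
    calc (eLpNorm (fun u => g u - b s (φ u)) 1 μt).toReal
        ≤ (ENNReal.ofReal (A₀ * Real.sqrt t)).toReal :=
          ENNReal.toReal_mono ENNReal.ofReal_ne_top e3
    _ = A₀ * Real.sqrt t := ENNReal.toReal_ofReal (by positivity)
  have hρ : ∀ u ∈ Icc (0:ℝ) t, ‖φ u‖ ≤ max ‖x‖ R₀ + A₀ * Real.sqrt t := by
    intro u hu
    linarith [hρb u hu, hI1]
  -- shifted path
  set ψ : ℝ → E := fun u => φ u + (u/t) • (y' - y) with hψ
  set g2 : ℝ → E := fun u => g u + t⁻¹ • (y' - y) with hg2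
  have hψcont : ContinuousOn ψ (Icc (0:ℝ) t) :=
    hφcont.add ((continuous_id.div_const t).smul continuous_const).continuousOn
  have hψmem : ψ ∈ {ψ : ℝ → E | ContinuousOn ψ (Icc (0:ℝ) t) ∧ ψ 0 = x ∧ ψ t = y'} := by
    refine ⟨hψcont, ?_, ?_⟩
    · simp [hψ, hφmem'.2.1]
    · simp [hψ, div_self ht.ne', hφmem'.2.2]
  have hg2mem : g2 ∈ {g2 : ℝ → E | MemLp g2 2 (volume.restrict (Ioc (0:ℝ) t)) ∧
      ∀ u ∈ Icc (0:ℝ) t, ψ u = ψ 0 + ∫ v in (0:ℝ)..u, g2 v} := by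
    constructor
    · exact hgmem'.1.add (memLp_const _)
    · intro u hu
      have hgii : IntervalIntegrable g volume 0 u :=
        (intervalIntegrable_iff_integrableOn_Ioc_of_le hu.1).mpr
          (hgint.mono_set (Ioc_subset_Ioc_right hu.2))
      have : (∫ v in (0:ℝ)..u, g2 v) = (∫ v in (0:ℝ)..u, g v) + u • (t⁻¹ • (y' - y)) := by
        rw [hg2]
        rw [intervalIntegral.integral_add hgii intervalIntegrable_const,
          intervalIntegral.integral_const]
        simp
      rw [this]
      have hψ0 : ψ 0 = φ 0 := by simp [hψ]
      have hφu := hgmem'.2 u hu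
      show φ u + (u/t) • (y' - y) = ψ 0 + ((∫ v in (0:ℝ)..u, g v) + u • (t⁻¹ • (y' - y)))
      rw [hψ0, hφu, smul_smul, div_eq_mul_inv]
      abel
  -- measurability of new integrand
  have hfm2 : AEStronglyMeasurable (fun u => g2 u - b s' (ψ u)) μt := by
    apply AEStronglyMeasurable.sub
    · exact (hgaesm.add aestronglyMeasurable_const)
    · exact ((hbs'cont.comp_continuousOn hψcont).mono Ioc_subset_Icc_self).aestronglyMeasurable
        measurableSet_Ioc
  -- pointwise bound on the difference
  have hdiff : ∀ᵐ u ∂μt,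
      ‖((fun u => g2 u - b s' (ψ u)) - (fun u => g u - b s (φ u))) u‖ ≤ cp := by
    rw [hμt]
    rw [ae_restrict_iff' measurableSet_Ioc]
    apply ae_of_all
    intro u hu
    have huI : u ∈ Icc (0:ℝ) t := ⟨hu.1.le, hu.2⟩
    have hsm : ‖(u/t) • (y' - y)‖ ≤ ‖y' - y‖ := by
      rw [norm_smul, Real.norm_eq_abs, abs_of_nonneg (div_nonneg hu.1.le ht.le)]
      have : u / t ≤ 1 := (div_le_one ht).mpr hu.2
      nlinarith [norm_nonneg (y' - y)]
    have hφball : φ u ∈ Metric.closedBall (0:E) ρ₂ := by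
      rw [Metric.mem_closedBall, dist_zero_right]
      have := hρ u huI
      have := norm_nonneg (y' - y)
      linarith [hρ₂]
    have hψball : ψ u ∈ Metric.closedBall (0:E) ρ₂ := by
      rw [Metric.mem_closedBall, dist_zero_right]
      have h1 : ‖ψ u‖ ≤ ‖φ u‖ + ‖(u/t) • (y' - y)‖ := norm_add_le _ _
      have := hρ u huI
      linarith [hρ₂]
    have hdist : ‖φ u - ψ u‖ ≤ ‖y' - y‖ := by
      have : φ u - ψ u = -((u/t) • (y' - y)) := by simp only [hψ]; abel
      rw [this, norm_neg]
      exact hsm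
    have hsplit : ((fun u => g2 u - b s' (ψ u)) - (fun u => g u - b s (φ u))) u
        = t⁻¹ • (y' - y) + ((b s (φ u) - b s (ψ u)) + (b s (ψ u) - b s' (ψ u))) := by
      show (g2 u - b s' (ψ u)) - (g u - b s (φ u))
        = t⁻¹ • (y' - y) + ((b s (φ u) - b s (ψ u)) + (b s (ψ u) - b s' (ψ u)))
      rw [hg2]
      show (g u + t⁻¹ • (y' - y) - b s' (ψ u)) - (g u - b s (φ u))
        = t⁻¹ • (y' - y) + ((b s (φ u) - b s (ψ u)) + (b s (ψ u) - b s' (ψ u)))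
      abel
    rw [hsplit]
    have n1 : ‖t⁻¹ • (y' - y)‖ = t⁻¹ * ‖y' - y‖ := by
      rw [norm_smul, Real.norm_eq_abs, abs_of_nonneg (inv_nonneg.mpr ht.le)]
    have n2 : ‖b s (φ u) - b s (ψ u)‖ ≤ K * ‖y' - y‖ := by
      calc ‖b s (φ u) - b s (ψ u)‖ ≤ K * ‖φ u - ψ u‖ := hK s hs _ hφball _ hψball
      _ ≤ K * ‖y' - y‖ := mul_le_mul_of_nonneg_left hdist hK0
    have n3 : ‖b s (ψ u) - b s' (ψ u)‖ ≤ κ * |s' - s| := by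
      have := hκ s' hs' s hs (ψ u) hψball
      calc ‖b s (ψ u) - b s' (ψ u)‖ ≤ κ * |s - s'| := this
      _ = κ * |s' - s| := by rw [abs_sub_comm]
    calc ‖t⁻¹ • (y' - y) + ((b s (φ u) - b s (ψ u)) + (b s (ψ u) - b s' (ψ u)))‖
        ≤ ‖t⁻¹ • (y' - y)‖ + ‖(b s (φ u) - b s (ψ u)) + (b s (ψ u) - b s' (ψ u))‖ :=
          norm_add_le _ _
    _ ≤ ‖t⁻¹ • (y' - y)‖ + (‖b s (φ u) - b s (ψ u)‖ + ‖b s (ψ u) - b s' (ψ u)‖) := by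
        gcongr; exact norm_add_le _ _
    _ ≤ t⁻¹ * ‖y' - y‖ + (K * ‖y' - y‖ + κ * |s' - s|) := by
        rw [n1]; gcongr
    _ = cp := by rw [hcp]; ring
  -- triangle inequality inL²
  have htri : eLpNorm (fun u => g2 u - b s' (ψ u)) 2 μt ≤ a + ENNReal.ofReal cR := by
    have hsplit : (fun u => g2 u - b s' (ψ u)) = (fun u => g u - b s (φ u))
        + ((fun u => g2 u - b s' (ψ u)) - (fun u => g u - b s (φ u))) := by
      funext u; simp
    calc eLpNorm (fun u => g2 u - b s' (ψ u)) 2 μt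
        = eLpNorm ((fun u => g u - b s (φ u))
            + ((fun u => g2 u - b s' (ψ u)) - (fun u => g u - b s (φ u)))) 2 μt := by
          rw [← hsplit]
    _ ≤ a + eLpNorm ((fun u => g2 u - b s' (ψ u)) - (fun u => g u - b s (φ u))) 2 μt :=
        eLpNorm_add_le hfm (hfm2.sub hfm) one_le_two
    _ ≤ a + ENNReal.ofReal cR := by
        apply add_le_add_right
        calc eLpNorm ((fun u => g2 u - b s' (ψ u)) - (fun u => g u - b s (φ u))) 2 μt
            ≤ μt univ ^ (2:ℝ≥0∞).toReal⁻¹ * ENNReal.ofReal cp :=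
              eLpNorm_le_of_ae_bound hdiff
        _ = ENNReal.ofReal cR := by
            rw [hμt, Measure.restrict_apply_univ, Real.volume_Ioc, sub_zero]
            have he : ((2:ℝ≥0∞)).toReal⁻¹ = (1/2 : ℝ) := by norm_num
            rw [he, ENNReal.ofReal_rpow_of_nonneg ht.le (by norm_num), ← Real.sqrt_eq_rpow,
              ← ENNReal.ofReal_mul (Real.sqrt_nonneg t), hcR]
  -- conclusion
  have hcost1 : costFn b s' x y' t ≤ frozenRate b s' t ψ := by
    rw [costFn]
    exact iInf₂_le ψ hψmem
  have hcost2 : frozenRate b s' t ψ ≤ 2⁻¹ * (eLpNorm (fun u => g2 u - b s' (ψ u)) 2 μt)^2 := by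
    have st : frozenRate b s' t ψ ≤
        ∫⁻ u in Ioc (0:ℝ) t, ENNReal.ofReal ((1/2) * ‖g2 u - b s' (ψ u)‖^2) := by
      rw [frozenRate]
      exact iInf₂_le g2 hg2mem
    refine le_trans st (le_of_eq ?_)
    exact lint_half_sq (fun u => g2 u - b s' (ψ u)) μt
  set Δ : ℝ≥0∞ := ENNReal.ofReal cR with hΔ
  have hsq : (eLpNorm (fun u => g2 u - b s' (ψ u)) 2 μt)^2 ≤ (a + Δ)^2 := by
    rw [sq, sq]
    exact mul_le_mul' htri htri
  have hexp : 2⁻¹ * (a + Δ)^2 = 2⁻¹ * a^2 + a * Δ + 2⁻¹ * Δ^2 := by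
    rw [add_sq, mul_add, mul_add]
    congr 1
    congr 1
    rw [← mul_assoc, ← mul_assoc, ENNReal.inv_mul_cancel two_ne_zero ENNReal.ofNat_ne_top, one_mul]
  have hmid : a * Δ ≤ ENNReal.ofReal (A₀ * cR) := by
    calc a * Δ ≤ ENNReal.ofReal A₀ * Δ := mul_le_mul_left ha Δ
    _ = ENNReal.ofReal (A₀ * cR) := by rw [hΔ, ← ENNReal.ofReal_mul hA₀0]
  have hlast : 2⁻¹ * Δ^2 = ENNReal.ofReal (cR^2/2) := by
    rw [hΔ, ← ENNReal.ofReal_pow hc0]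
    rw [ENNReal.ofReal_div_of_pos (by norm_num)]
    rw [ENNReal.div_eq_inv_mul]
    norm_num
  calc costFn b s' x y' t ≤ 2⁻¹ * (eLpNorm (fun u => g2 u - b s' (ψ u)) 2 μt)^2 :=
        le_trans hcost1 hcost2
  _ ≤ 2⁻¹ * (a + Δ)^2 := mul_le_mul_right hsq _
  _ = 2⁻¹ * a^2 + a * Δ + 2⁻¹ * Δ^2 := hexp
  _ ≤ (costFn b s x y t + ENNReal.ofReal ε') + ENNReal.ofReal (A₀ * cR)
      + ENNReal.ofReal (cR^2/2) :=
      add_le_add (add_le_add h6.le hmid) hlast.le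
  _ = costFn b s x y t + ENNReal.ofReal (ε' + A₀ * cR + cR^2/2) := by
      have hsum : ENNReal.ofReal ε' + ENNReal.ofReal (A₀ * cR) + ENNReal.ofReal (cR^2/2)
          = ENNReal.ofReal (ε' + A₀ * cR + cR^2/2) := by
        rw [← ENNReal.ofReal_add hε'.le (by positivity : (0:ℝ) ≤ A₀ * cR),
          ← ENNReal.ofReal_add (by positivity : (0:ℝ) ≤ ε' + A₀ * cR)
            (by positivity : (0:ℝ) ≤ cR^2/2)]
      rw [← hsum]
      ring

end helpers

set_option maxHeartbeats 2000000 in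
/-- for fixed `x` and `t > 0`, the map `(s, y) ↦ V^s(x, y, t)` is
continuous on `[0,∞) × ℝ^d`. -/
theorem cost_continuousOn {d : ℕ} (hd : 1 ≤ d)
    (b : ℝ → EuclideanSpace ℝ (Fin d) → EuclideanSpace ℝ (Fin d))
    (hper : ∀ t ≥ (0:ℝ), ∀ x, b (t + 1) x = b t x)
    (hLipX : ∀ R > (0:ℝ), ∀ x : EuclideanSpace ℝ (Fin d), ∃ K ≥ (0:ℝ),
      ∀ t ≥ (0:ℝ), ∀ y₁ ∈ Metric.closedBall x R, ∀ y₂ ∈ Metric.closedBall x R,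
        ‖b t y₁ - b t y₂‖ ≤ K * ‖y₁ - y₂‖)
    (hLipT : ∀ R > (0:ℝ), ∀ x : EuclideanSpace ℝ (Fin d), ∃ κ ≥ (0:ℝ),
      ∀ s ≥ (0:ℝ), ∀ t ≥ (0:ℝ), ∀ y ∈ Metric.closedBall x R,
        ‖b t y - b s y‖ ≤ κ * |t - s|)
    (hgrow : ∃ η > (0:ℝ), ∃ R₀ > (0:ℝ), ∀ t ≥ (0:ℝ),
      ∀ x : EuclideanSpace ℝ (Fin d), R₀ ≤ ‖x‖ → ⟪x, b t x⟫ < -η * ‖x‖) :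
    ∀ x : EuclideanSpace ℝ (Fin d), ∀ t > (0:ℝ),
      ContinuousOn (fun p : ℝ × EuclideanSpace ℝ (Fin d) => costFn b p.1 x p.2 t)
        (Ici (0:ℝ) ×ˢ (univ : Set (EuclideanSpace ℝ (Fin d)))) := by
  obtain ⟨η, hη, R₀, hR₀, hgrowth⟩ := hgrow
  intro x t ht
  rintro ⟨s₀, y₀⟩ hp
  rw [mem_prod] at hp
  have hs₀ : (0:ℝ) ≤ s₀ := hp.1
  -- uniform upper bound on the cost near (s₀, y₀)
  set Rlin : ℝ := ‖x‖ + ‖y₀ - x‖ + 1 with hRlin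
  obtain ⟨Cb, hCb0, hCb⟩ := bound_b b hLipX hLipT Rlin (s₀ + 1) (by positivity) (by linarith)
  set Mr : ℝ := (t/2) * ((‖y₀ - x‖ + 1)/t + Cb)^2 with hMrdef
  have hMr0 : 0 ≤ Mr := by positivity
  have hWle : ∀ s ∈ Icc (0:ℝ) (s₀+1), ∀ y : EuclideanSpace ℝ (Fin d), ‖y - y₀‖ ≤ 1 →
      costFn b s x y t ≤ ENNReal.ofReal Mr := by
    intro s hs y hy
    have hyx : ‖y - x‖ ≤ ‖y₀ - x‖ + 1 := by
      calc ‖y - x‖ = ‖(y - y₀) + (y₀ - x)‖ := by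
            rw [show (y - y₀) + (y₀ - x) = y - x from by abel]
      _ ≤ ‖y - y₀‖ + ‖y₀ - x‖ := norm_add_le _ _
      _ ≤ ‖y₀ - x‖ + 1 := by linarith
    have hball : ∀ z ∈ Metric.closedBall (0:EuclideanSpace ℝ (Fin d)) (‖x‖ + ‖y - x‖),
        ‖b s z‖ ≤ Cb := by
      intro z hz
      apply hCb s hs z
      apply Metric.closedBall_subset_closedBall _ hz
      rw [hRlin]; linarith
    refine le_trans (cost_le_line b x y s t ht Cb hball) (ENNReal.ofReal_le_ofReal ?_)
    rw [hMrdef]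
    have h1 : ‖y - x‖/t + Cb ≤ (‖y₀ - x‖ + 1)/t + Cb := by
      have h2 : ‖y - x‖/t ≤ (‖y₀ - x‖ + 1)/t := by gcongr
      linarith
    apply mul_le_mul_of_nonneg_left _ (by positivity : (0:ℝ) ≤ t/2)
    apply pow_le_pow_left₀ (by positivity) h1
  set ρ₂ : ℝ := max ‖x‖ R₀ + Real.sqrt (2*(Mr+1)) * Real.sqrt t + 2 with hρ₂def
  have hρ₂pos : 0 < ρ₂ := by
    have h1 : R₀ ≤ max ‖x‖ R₀ := le_max_right _ _
    have h2 : 0 ≤ Real.sqrt (2*(Mr+1)) * Real.sqrt t := by positivity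
    rw [hρ₂def]; linarith
  obtain ⟨K, hK0, hKl⟩ := hLipX ρ₂ hρ₂pos 0
  obtain ⟨κ, hκ0, hκl⟩ := hLipT ρ₂ hρ₂pos 0
  set A₀ : ℝ := Real.sqrt (2*(Mr+1)) with hA₀def
  have hA₀0 : 0 ≤ A₀ := Real.sqrt_nonneg _
  have htinv : (0:ℝ) ≤ t⁻¹ := inv_nonneg.mpr ht.le
  set k : ℝ := Real.sqrt t * (t⁻¹ + K + κ) + 1 with hkdef
  have hk0 : 0 < k := by
    have h1 : 0 ≤ Real.sqrt t * (t⁻¹ + K + κ) :=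
      mul_nonneg (Real.sqrt_nonneg t) (by linarith)
    rw [hkdef]; linarith
  have hWtop : costFn b s₀ x y₀ t ≠ ⊤ :=
    (lt_of_le_of_lt (hWle s₀ ⟨hs₀, by linarith⟩ y₀ (by simp)) ENNReal.ofReal_lt_top).ne
  show Tendsto (fun p : ℝ × EuclideanSpace ℝ (Fin d) => costFn b p.1 x p.2 t)
    (𝓝[Ici (0:ℝ) ×ˢ (univ : Set (EuclideanSpace ℝ (Fin d)))] (s₀,y₀))
    (𝓝 (costFn b s₀ x y₀ t))
  rw [ENNReal.tendsto_nhds hWtop]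
  intro ε hε
  set εr : ℝ := (min 1 ε).toReal with hεrdef
  have hminne : min 1 ε ≠ ⊤ := ((min_le_left _ _).trans_lt ENNReal.one_lt_top).ne
  have hεrpos : 0 < εr := ENNReal.toReal_pos (lt_min one_pos hε).ne' hminne
  have hεr1 : εr ≤ 1 := by
    have := ENNReal.toReal_mono ENNReal.one_ne_top (min_le_left 1 ε)
    simpa using this
  have hεrle : ENNReal.ofReal εr ≤ ε := by
    rw [hεrdef, ENNReal.ofReal_toReal hminne]
    exact min_le_right _ _
  set δ : ℝ := min 1 ((εr/2) / (A₀ * k + k^2/2 + 1)) with hδdef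
  have hδden : 0 < A₀ * k + k^2/2 + 1 := by positivity
  have hδpos : 0 < δ := lt_min one_pos (by positivity)
  have hδ1 : δ ≤ 1 := min_le_left _ _
  have hδle : δ * (A₀ * k + k^2/2) ≤ εr/2 := by
    have h1 : δ ≤ (εr/2) / (A₀ * k + k^2/2 + 1) := min_le_right _ _
    have h2 : δ * (A₀*k + k^2/2 + 1) ≤ εr/2 := by rw [← le_div_iff₀ hδden]; exact h1
    nlinarith [hδpos]
  have hbound : ∀ s ∈ Icc (0:ℝ) (s₀+1), ∀ s' ∈ Icc (0:ℝ) (s₀+1),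
      ∀ y y' : EuclideanSpace ℝ (Fin d), ‖y - y₀‖ ≤ 1 → ‖y' - y₀‖ ≤ 1 →
      ‖y' - y‖ ≤ δ → |s' - s| ≤ δ →
      costFn b s' x y' t ≤ costFn b s x y t + ENNReal.ofReal εr := by
    intro s hs s' hs' y y' hy hy' hyy hss
    have hy'y2 : ‖y' - y‖ ≤ 2 := by
      calc ‖y' - y‖ = ‖(y' - y₀) + (y₀ - y)‖ := by
            rw [show (y' - y₀) + (y₀ - y) = y' - y from by abel]
      _ ≤ ‖y' - y₀‖ + ‖y₀ - y‖ := norm_add_le _ _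
      _ ≤ 2 := by rw [norm_sub_rev y₀ y]; linarith
    have hρ₂' : max ‖x‖ R₀ + Real.sqrt (2*(Mr+1)) * Real.sqrt t + ‖y' - y‖ ≤ ρ₂ := by
      rw [hρ₂def]; linarith
    have step := cost_shift b x t ht η R₀ hη hR₀ hgrowth hLipX s s' hs.1 hs'.1 y y'
      Mr hMr0 (hWle s hs y hy) ρ₂ hρ₂' K hK0 (fun τ hτ => hKl τ hτ) κ hκ0
      (fun σ hσ τ hτ z hz => hκl σ hσ τ hτ z hz) (εr/2) (by linarith) (by linarith)
    refine le_trans step (add_le_add_right (ENNReal.ofReal_le_ofReal ?_) _)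
    set cR : ℝ := Real.sqrt t * ((t⁻¹ + K) * ‖y' - y‖ + κ * |s' - s|) with hcRdef
    have hcR0 : 0 ≤ cR := by
      apply mul_nonneg (Real.sqrt_nonneg t)
      have := norm_nonneg (y' - y)
      have := abs_nonneg (s' - s)
      nlinarith
    have hcRk : cR ≤ k * δ := by
      have h1 : (t⁻¹ + K) * ‖y' - y‖ + κ * |s' - s| ≤ (t⁻¹ + K + κ) * δ := by
        nlinarith [norm_nonneg (y' - y), abs_nonneg (s' - s)]
      calc cR ≤ Real.sqrt t * ((t⁻¹ + K + κ) * δ) := by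
            apply mul_le_mul_of_nonneg_left h1 (Real.sqrt_nonneg t)
      _ = (Real.sqrt t * (t⁻¹ + K + κ)) * δ := by ring
      _ ≤ k * δ := by
          apply mul_le_mul_of_nonneg_right _ hδpos.le
          rw [hkdef]; linarith
    rw [← hA₀def]
    clear_value cR k A₀ δ εr
    have e1 : A₀ * cR ≤ A₀ * (k*δ) := mul_le_mul_of_nonneg_left hcRk hA₀0
    have e2 : cR*cR ≤ (k*δ)*(k*δ) := mul_self_le_mul_self hcR0 hcRk
    have e3 : δ*δ ≤ δ := by nlinarith
    have e5 : (k*k)*(δ*δ) ≤ (k*k)*δ := mul_le_mul_of_nonneg_left e3 (by positivity)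
    have e0 : cR^2 = cR*cR := pow_two cR
    have e6 : k * δ * (k * δ) = k * k * (δ * δ) := by ring
    have e7 : δ * (A₀ * k + k ^ 2 / 2) = A₀ * (k * δ) + (k * k * δ)/2 := by ring
    linarith [e0, e1, e2, e5, e6, e7, hδle]
  have hev1 : ∀ᶠ q in 𝓝[Ici (0:ℝ) ×ˢ (univ : Set (EuclideanSpace ℝ (Fin d)))] (s₀,y₀),
      dist q (s₀,y₀) < δ := by
    apply Filter.Eventually.filter_mono nhdsWithin_le_nhds
    exact Metric.eventually_nhds_iff.mpr ⟨δ, hδpos, fun q hq => hq⟩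
  have hev2 : ∀ᶠ q in 𝓝[Ici (0:ℝ) ×ˢ (univ : Set (EuclideanSpace ℝ (Fin d)))] (s₀,y₀),
      q ∈ (Ici (0:ℝ) ×ˢ (univ : Set (EuclideanSpace ℝ (Fin d)))) := eventually_mem_nhdsWithin
  filter_upwards [hev1, hev2] with q hq1 hq2
  rw [mem_prod] at hq2
  rw [Prod.dist_eq] at hq1
  have hq1s : |q.1 - s₀| < δ := by
    rw [← Real.dist_eq]
    exact lt_of_le_of_lt (le_max_left _ _) hq1
  have hq2y : ‖q.2 - y₀‖ < δ := by
    rw [← dist_eq_norm]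
    exact lt_of_le_of_lt (le_max_right _ _) hq1
  have habs := abs_lt.mp hq1s
  have hq1mem : q.1 ∈ Icc (0:ℝ) (s₀+1) := ⟨hq2.1, by linarith [habs.2, hδ1]⟩
  have hs₀mem : s₀ ∈ Icc (0:ℝ) (s₀+1) := ⟨hs₀, by linarith⟩
  simp only [Set.mem_Icc]
  constructor
  · have hlow := hbound q.1 hq1mem s₀ hs₀mem q.2 y₀ (le_trans hq2y.le hδ1) (by simp)
      (by rw [norm_sub_rev]; exact hq2y.le) (by rw [abs_sub_comm]; exact hq1s.le)
    exact tsub_le_iff_right.mpr (le_trans hlow (add_le_add_right hεrle _))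
  · have hup := hbound s₀ hs₀mem q.1 hq1mem y₀ q.2 (by simp) (le_trans hq2y.le hδ1)
      hq2y.le hq1s.le
    exact le_trans hup (add_le_add_right hεrle _)
end

section
/- For every fixed x ∈ ℝ^d and t > 0, the infimum of the cost over far-away endpoints diverges uniformly in the frozen time parameter: lim_{R → ∞} inf_{s ≥ 0} inf_{y : ‖y‖ ≥ R} V^s(x, y, t) = +∞. -/
open MeasureTheory Set Filter Topology
open scoped RealInnerProductSpace ENNReal

/- aux -/
variable {d : ℕ}

local notation "E" => EuclideanSpace ℝ (Fin d)

lemma diag_null (μ : Measure ℝ) [SFinite μ] (hμ : μ ≤ volume) :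
    (μ.prod μ) {q : ℝ × ℝ | q.1 = q.2} = 0 := by
  have hmeas : MeasurableSet {q : ℝ × ℝ | q.1 = q.2} :=
    measurableSet_eq_fun measurable_fst measurable_snd
  rw [Measure.prod_apply hmeas]
  have h0 : ∀ a : ℝ, μ {a} = 0 := fun a =>
    le_antisymm ((hμ _).trans_eq (Real.volume_singleton)) (zero_le)
  simp [h0]

lemma fubini_energy (f : ℝ → E) (u : ℝ) (hu : 0 ≤ u)
    (hf : IntegrableOn f (Ioc 0 u) volume) :
    2 * ∫ v in Ioc (0:ℝ) u, ⟪(∫ a in Ioc (0:ℝ) v, f a), f v⟫ =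
      ‖∫ v in Ioc (0:ℝ) u, f v‖^2 := by
  set μ := volume.restrict (Ioc (0:ℝ) u) with hμdef
  have hfμ : Integrable f μ := hf
  -- the kernel
  set k : ℝ × ℝ → ℝ := fun q => ⟪f q.1, f q.2⟫ with hk
  have hkm : AEStronglyMeasurable k (μ.prod μ) := by
    exact (hfμ.1.comp_fst (ν := μ)).inner (hfμ.1.comp_snd (μ := μ))
  have hkint : Integrable k (μ.prod μ) := by
    refine Integrable.mono' (hfμ.norm.mul_prod hfμ.norm) hkm ?_
    filter_upwards with q
    exact (abs_real_inner_le_norm _ _)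
  have hdiag : (μ.prod μ) {q : ℝ × ℝ | q.1 = q.2} = 0 :=
    diag_null μ Measure.restrict_le_self
  set k1 : ℝ × ℝ → ℝ := ({q : ℝ × ℝ | q.1 ≤ q.2}).indicator k with hk1
  set k2 : ℝ × ℝ → ℝ := ({q : ℝ × ℝ | q.2 < q.1}).indicator k with hk2
  set k3 : ℝ × ℝ → ℝ := ({q : ℝ × ℝ | q.1 < q.2}).indicator k with hk3
  have hm1 : MeasurableSet {q : ℝ × ℝ | q.1 ≤ q.2} :=
    measurableSet_le measurable_fst measurable_snd
  have hm2 : MeasurableSet {q : ℝ × ℝ | q.2 < q.1} :=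
    measurableSet_lt measurable_snd measurable_fst
  have hk1int : Integrable k1 (μ.prod μ) := hkint.indicator hm1
  have hk2int : Integrable k2 (μ.prod μ) := hkint.indicator hm2
  -- ∫ k = ∫ k1 + ∫ k2
  have hsplit : ∫ q, k q ∂(μ.prod μ) = (∫ q, k1 q ∂(μ.prod μ)) + ∫ q, k2 q ∂(μ.prod μ) := by
    rw [← integral_add hk1int hk2int]
    refine integral_congr_ae (Filter.Eventually.of_forall fun q => ?_)
    by_cases h : q.1 ≤ q.2
    · simp [hk1, hk2, Set.indicator_apply, h, not_lt.2 h]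
    · simp [hk1, hk2, Set.indicator_apply, h, lt_of_not_ge h]
  -- swap : ∫ k2 = ∫ k3
  have hswap : ∫ q, k2 q ∂(μ.prod μ) = ∫ q, k3 q ∂(μ.prod μ) := by
    rw [← MeasureTheory.integral_prod_swap k2]
    refine integral_congr_ae (Filter.Eventually.of_forall fun q => ?_)
    by_cases h : q.1 < q.2
    · have hmem : q.swap ∈ {p : ℝ × ℝ | p.2 < p.1} := h
      have hmem' : q ∈ {p : ℝ × ℝ | p.1 < p.2} := h
      show ({p : ℝ × ℝ | p.2 < p.1}).indicator k q.swap
          = ({p : ℝ × ℝ | p.1 < p.2}).indicator k q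
      rw [Set.indicator_of_mem hmem, Set.indicator_of_mem hmem']
      exact real_inner_comm _ _
    · have hmem : q.swap ∉ {p : ℝ × ℝ | p.2 < p.1} := h
      have hmem' : q ∉ {p : ℝ × ℝ | p.1 < p.2} := h
      show ({p : ℝ × ℝ | p.2 < p.1}).indicator k q.swap
          = ({p : ℝ × ℝ | p.1 < p.2}).indicator k q
      rw [Set.indicator_of_notMem hmem, Set.indicator_of_notMem hmem']
  -- k3 = k1 a.e.
  have hk31 : ∫ q, k3 q ∂(μ.prod μ) = ∫ q, k1 q ∂(μ.prod μ) := by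
    refine integral_congr_ae (ae_iff.2 ?_)
    refine measure_mono_null (fun q hq => ?_) hdiag
    simp only [mem_setOf_eq] at hq ⊢
    by_contra hne
    have : (q.1 ≤ q.2) ↔ (q.1 < q.2) := by
      constructor
      · exact fun h => lt_of_le_of_ne h hne
      · exact le_of_lt
    by_cases h : q.1 < q.2
    · exact hq (by simp [hk3, hk1, Set.indicator_apply, h, this.2 h])
    · have h1 : ¬ q.1 ≤ q.2 := fun hle => h (this.1 hle)
      exact hq (by simp [hk3, hk1, Set.indicator_apply, h, h1])
  -- total integral is the norm squared
  have htot : ∫ q, k q ∂(μ.prod μ) = ‖∫ v in Ioc (0:ℝ) u, f v‖^2 := by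
    rw [MeasureTheory.integral_prod _ hkint]
    have : ∀ x : ℝ, (∫ y, k (x, y) ∂μ) = ⟪f x, ∫ v, f v ∂μ⟫ := fun x =>
      integral_inner hfμ (f x)
    simp_rw [this]
    have h1 : ∫ x, ⟪f x, ∫ v, f v ∂μ⟫ ∂μ = ∫ x, ⟪∫ v, f v ∂μ, f x⟫ ∂μ :=
      integral_congr_ae (Filter.Eventually.of_forall fun x => real_inner_comm _ _)
    rw [h1, integral_inner hfμ, real_inner_self_eq_norm_sq]
  -- compute ∫ k2 as the target integral
  have hGk : ∫ q, k2 q ∂(μ.prod μ) = ∫ v in Ioc (0:ℝ) u, ⟪(∫ a in Ioc (0:ℝ) v, f a), f v⟫ := by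
    rw [MeasureTheory.integral_prod _ hk2int]
    refine setIntegral_congr_fun measurableSet_Ioc (fun x hx => ?_)
    have hxy : (fun y => k2 (x, y)) = fun y => ⟪f x, ((Iio x).indicator f) y⟫ := by
      funext y
      by_cases h : y < x
      · have hmem : ((x, y) : ℝ × ℝ) ∈ {p : ℝ × ℝ | p.2 < p.1} := h
        have hmem' : y ∈ Iio x := h
        rw [hk2, Set.indicator_of_mem hmem, Set.indicator_of_mem hmem']
      · have hmem : ((x, y) : ℝ × ℝ) ∉ {p : ℝ × ℝ | p.2 < p.1} := h
        have hmem' : y ∉ Iio x := h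
        rw [hk2, Set.indicator_of_notMem hmem, Set.indicator_of_notMem hmem',
          inner_zero_right]
    rw [hxy, integral_inner (hfμ.indicator measurableSet_Iio) (f x),
      integral_indicator measurableSet_Iio]
    have hres : μ.restrict (Iio x) = volume.restrict (Ioo (0:ℝ) x) := by
      rw [hμdef, Measure.restrict_restrict measurableSet_Iio]
      congr 1
      ext z
      constructor
      · rintro ⟨hz1, hz2, _⟩; exact ⟨hz2, hz1⟩
      · rintro ⟨hz1, hz2⟩; exact ⟨hz2, hz1, le_trans (le_of_lt hz2) hx.2⟩
    rw [show ∫ y in Iio x, f y ∂μ = ∫ y, f y ∂(μ.restrict (Iio x)) from rfl, hres,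
      ← MeasureTheory.integral_Ioc_eq_integral_Ioo]
    exact real_inner_comm _ _
  have : ‖∫ v in Ioc (0:ℝ) u, f v‖^2 = 2 * ∫ q, k2 q ∂(μ.prod μ) := by
    rw [← htot, hsplit, hswap, hk31]; ring
  rw [this, hGk]

set_option maxHeartbeats 2000000 in
lemma key_estimate (bs : EuclideanSpace ℝ (Fin d) → EuclideanSpace ℝ (Fin d))
    (hcont : Continuous bs)
    (R₀ C : ℝ) (hR₀ : 0 ≤ R₀) (hC : 0 ≤ C)
    (hdrift : ∀ z : E, R₀ ≤ ‖z‖ → ⟪z, bs z⟫ ≤ 0)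
    (hbound : ∀ z : E, ‖z‖ ≤ R₀ → ‖bs z‖ ≤ C)
    (t : ℝ) (ht : 0 < t) (φ g : ℝ → E)
    (hφc : ContinuousOn φ (Icc 0 t))
    (hg2 : MemLp g 2 (volume.restrict (Ioc (0:ℝ) t)))
    (hrep : ∀ u ∈ Icc (0:ℝ) t, φ u = φ 0 + ∫ v in (0:ℝ)..u, g v)
    (R : ℝ) (hR : 0 ≤ R) (hRy : R ≤ ‖φ t‖) :
    ENNReal.ofReal ((R^2 / Real.exp 1 - ‖φ 0‖^2 - 2*R₀*C*t) / (2*t)) ≤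
      ∫⁻ u in Ioc (0:ℝ) t, ENNReal.ofReal ((1/2) * ‖g u - bs (φ u)‖^2) := by
  set μ := volume.restrict (Ioc (0:ℝ) t) with hμdef
  haveI : IsFiniteMeasure μ := by
    constructor
    rw [hμdef, Measure.restrict_apply_univ, Real.volume_Ioc]
    exact ENNReal.ofReal_lt_top
  -- measurability
  have hgm : AEStronglyMeasurable g μ := hg2.1
  have hφm : AEStronglyMeasurable φ μ :=
    (hφc.mono Ioc_subset_Icc_self).aestronglyMeasurable measurableSet_Ioc
  have hbφm : AEStronglyMeasurable (fun u => bs (φ u)) μ :=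
    hcont.comp_aestronglyMeasurable hφm
  -- bound on the path
  obtain ⟨Mφ, hMφ⟩ := IsCompact.exists_bound_of_continuousOn isCompact_Icc hφc
  have hMφ0 : 0 ≤ Mφ := le_trans (norm_nonneg _) (hMφ 0 ⟨le_refl _, ht.le⟩)
  -- bound on bs along the path
  obtain ⟨Cb, hCb⟩ := IsCompact.exists_bound_of_continuousOn
    (isCompact_closedBall (0 : E) Mφ) hcont.continuousOn
  have hCbφ : ∀ u ∈ Icc (0:ℝ) t, ‖bs (φ u)‖ ≤ Cb := fun u hu =>
    hCb _ (mem_closedBall_zero_iff.2 (hMφ u hu))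
  have hbφ2 : MemLp (fun u => bs (φ u)) 2 μ := by
    refine MemLp.of_bound hbφm Cb ?_
    rw [hμdef]
    exact (ae_restrict_iff' measurableSet_Ioc).2
      (Filter.Eventually.of_forall fun u hu => hCbφ u (Ioc_subset_Icc_self hu))
  have hdiff2 : MemLp (fun u => g u - bs (φ u)) 2 μ := hg2.sub hbφ2
  have hFint : Integrable (fun u => ‖g u - bs (φ u)‖^2) μ := by
    have h2 := hdiff2.integrable_norm_rpow two_ne_zero ENNReal.ofNat_ne_top
    simpa [ENNReal.toReal_ofNat, Real.rpow_natCast] using h2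
  set J := ∫ u in Ioc (0:ℝ) t, ‖g u - bs (φ u)‖^2 with hJdef
  have hJ0 : 0 ≤ J := setIntegral_nonneg measurableSet_Ioc fun u _ => sq_nonneg _
  -- reduce to a real inequality
  have heq : ∫⁻ u in Ioc (0:ℝ) t, ENNReal.ofReal ((1/2) * ‖g u - bs (φ u)‖^2)
      = ENNReal.ofReal ((1/2) * J) := by
    rw [← ofReal_integral_eq_lintegral_ofReal (hFint.const_mul (1/2))
      (Filter.Eventually.of_forall fun u => by positivity)]
    congr 1
    rw [hJdef, ← integral_const_mul]
  rw [heq]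
  refine ENNReal.ofReal_le_ofReal ?_
  -- it suffices to show R^2 ≤ exp 1 * (‖φ 0‖^2 + t*J + 2*R₀*C*t)
  suffices hclaim : R^2 ≤ Real.exp 1 * (‖φ 0‖^2 + t*J + 2*R₀*C*t) by
    have he : (0:ℝ) < Real.exp 1 := Real.exp_pos 1
    have h2 : R^2 / Real.exp 1 ≤ ‖φ 0‖^2 + t*J + 2*R₀*C*t := by
      rw [div_le_iff₀ he]; nlinarith [hclaim]
    rw [div_le_iff₀ (by positivity : (0:ℝ) < 2*t)]
    nlinarith [h2]
  -- main analytic chain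
  set x := φ 0 with hxdef
  have hgI : IntegrableOn g (Ioc (0:ℝ) t) volume := hg2.integrable one_le_two
  have hrep' : ∀ u ∈ Icc (0:ℝ) t, φ u = x + ∫ v in Ioc (0:ℝ) u, g v := by
    intro u hu
    rw [hrep u hu, intervalIntegral.integral_of_le hu.1]
  -- integrability of p
  set p : ℝ → ℝ := fun v => 2 * ⟪φ v, g v⟫ with hpdef
  have hpm : AEStronglyMeasurable p μ := (hφm.inner hgm).const_mul 2
  have hpInt : IntegrableOn p (Ioc (0:ℝ) t) volume := by
    refine Integrable.mono' ((hgI.norm).const_mul (2*Mφ)) hpm ?_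
    refine (ae_restrict_iff' measurableSet_Ioc).2 (Filter.Eventually.of_forall fun v hv => ?_)
    have h1 : |⟪φ v, g v⟫| ≤ ‖φ v‖ * ‖g v‖ := abs_real_inner_le_norm _ _
    have h2 : ‖φ v‖ ≤ Mφ := hMφ v (Ioc_subset_Icc_self hv)
    have h3 : (0:ℝ) ≤ ‖g v‖ := norm_nonneg _
    rw [hpdef, Real.norm_eq_abs, abs_mul, abs_two]
    calc 2 * |⟪φ v, g v⟫| ≤ 2 * (Mφ * ‖g v‖) := by nlinarith
      _ = 2 * Mφ * ‖g v‖ := by ring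
  -- energy identity
  have hkey : ∀ u ∈ Icc (0:ℝ) t, ‖φ u‖^2 = ‖x‖^2 + ∫ v in Ioc (0:ℝ) u, p v := by
    intro u hu
    have hGu : φ u = x + ∫ v in Ioc (0:ℝ) u, g v := hrep' u hu
    have hsub : Ioc (0:ℝ) u ⊆ Ioc (0:ℝ) t := Ioc_subset_Ioc_right hu.2
    have hgIu : IntegrableOn g (Ioc (0:ℝ) u) volume := hgI.mono_set hsub
    have h1int : IntegrableOn (fun v => 2 * ⟪x, g v⟫) (Ioc (0:ℝ) u) volume :=
      (hgIu.const_inner x).const_mul 2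
    have h2int : IntegrableOn
        (fun v => 2 * ⟪(∫ a in Ioc (0:ℝ) v, g a), g v⟫) (Ioc (0:ℝ) u) volume := by
      have hsubInt : IntegrableOn (fun v => p v - 2 * ⟪x, g v⟫) (Ioc (0:ℝ) u) volume :=
        (hpInt.mono_set hsub).sub h1int
      refine hsubInt.congr_fun (fun v hv => ?_) measurableSet_Ioc
      have hv' : φ v = x + ∫ a in Ioc (0:ℝ) v, g a :=
        hrep' v ⟨hv.1.le, hv.2.trans hu.2⟩
      rw [hpdef]
      simp only [hv', inner_add_left]
      ring
    have hsplit : ∫ v in Ioc (0:ℝ) u, p v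
        = (∫ v in Ioc (0:ℝ) u, 2 * ⟪x, g v⟫)
          + ∫ v in Ioc (0:ℝ) u, 2 * ⟪(∫ a in Ioc (0:ℝ) v, g a), g v⟫ := by
      rw [← integral_add h1int h2int]
      refine setIntegral_congr_fun measurableSet_Ioc fun v hv => ?_
      have hv' : φ v = x + ∫ a in Ioc (0:ℝ) v, g a :=
        hrep' v ⟨hv.1.le, hv.2.trans hu.2⟩
      rw [hpdef]
      simp only [hv', inner_add_left]
      ring
    have hfirst : ∫ v in Ioc (0:ℝ) u, 2 * ⟪x, g v⟫
        = 2 * ⟪x, ∫ v in Ioc (0:ℝ) u, g v⟫ := by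
      rw [integral_const_mul, integral_inner hgIu x]
    have hsecond : ∫ v in Ioc (0:ℝ) u, 2 * ⟪(∫ a in Ioc (0:ℝ) v, g a), g v⟫
        = ‖∫ v in Ioc (0:ℝ) u, g v‖^2 := by
      rw [integral_const_mul]
      exact fubini_energy g u hu.1 hgIu
    rw [hGu, norm_add_sq_real, hsplit, hfirst, hsecond]
    ring
  -- the primitive H of the indicator extension of p
  set pt : ℝ → ℝ := (Ioc (0:ℝ) t).indicator p with hptdef
  have hptint : Integrable pt volume :=
    (integrable_indicator_iff measurableSet_Ioc).2 hpInt
  set H : ℝ → ℝ := fun u => ‖x‖^2 + ∫ v in (0:ℝ)..u, pt v with hHdef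
  have hHcont : Continuous H :=
    continuous_const.add (intervalIntegral.continuous_primitive
      (fun a b => hptint.intervalIntegrable) 0)
  have hHioc : ∀ u ∈ Icc (0:ℝ) t, H u = ‖x‖^2 + ∫ v in Ioc (0:ℝ) u, p v := by
    intro u hu
    rw [hHdef]
    simp only
    rw [intervalIntegral.integral_of_le hu.1, hptdef, setIntegral_indicator measurableSet_Ioc,
      inter_eq_self_of_subset_left (Ioc_subset_Ioc_right hu.2)]
  have hHeq : ∀ u ∈ Icc (0:ℝ) t, H u = ‖φ u‖^2 := by
    intro u hu
    rw [hHioc u hu, hkey u hu]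
  -- pointwise differential inequality
  have hptw : ∀ v ∈ Ioc (0:ℝ) t,
      p v ≤ (1/t) * ‖φ v‖^2 + t * ‖g v - bs (φ v)‖^2 + 2*R₀*C := by
    intro v hv
    have hdecomp : p v = 2 * ⟪φ v, g v - bs (φ v)⟫ + 2 * ⟪φ v, bs (φ v)⟫ := by
      rw [hpdef]; simp only [inner_sub_right]; ring
    have hb1 : 2 * ⟪φ v, g v - bs (φ v)⟫ ≤ (1/t) * ‖φ v‖^2 + t * ‖g v - bs (φ v)‖^2 := by
      have h1 : ⟪φ v, g v - bs (φ v)⟫ ≤ ‖φ v‖ * ‖g v - bs (φ v)‖ := real_inner_le_norm _ _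
      have h2 := sq_nonneg (‖φ v‖ - t * ‖g v - bs (φ v)‖)
      have h3 : (1/t) * ‖φ v‖^2 + t * ‖g v - bs (φ v)‖^2
          - 2 * (‖φ v‖ * ‖g v - bs (φ v)‖)
          = (‖φ v‖ - t * ‖g v - bs (φ v)‖)^2 / t := by
        field_simp; ring
      nlinarith [div_nonneg h2 ht.le]
    have hb2 : 2 * ⟪φ v, bs (φ v)⟫ ≤ 2*R₀*C := by
      by_cases hr : R₀ ≤ ‖φ v‖
      · have := hdrift (φ v) hr
        nlinarith
      · push_neg at hr
        have h1 : ⟪φ v, bs (φ v)⟫ ≤ ‖φ v‖ * ‖bs (φ v)‖ := real_inner_le_norm _ _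
        have h2 : ‖bs (φ v)‖ ≤ C := hbound _ hr.le
        nlinarith [norm_nonneg (φ v), norm_nonneg (bs (φ v))]
    linarith [hdecomp.le, hdecomp.ge, hb1, hb2]
  -- integral inequality for H
  set A := ‖x‖^2 + t*J + 2*R₀*C*t with hAdef
  set w : ℝ → ℝ := fun u => ∫ v in (0:ℝ)..u, H v with hwdef
  have hφsqI : IntegrableOn (fun v => ‖φ v‖^2) (Icc (0:ℝ) t) volume :=
    ((hφc.norm).pow 2).integrableOn_Icc
  have hFIO : IntegrableOn (fun u => ‖g u - bs (φ u)‖^2) (Ioc (0:ℝ) t) volume := hFint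
  have hHb : ∀ u ∈ Icc (0:ℝ) t, H u ≤ A + (1/t) * w u := by
    intro u hu
    have hsub : Ioc (0:ℝ) u ⊆ Ioc (0:ℝ) t := Ioc_subset_Ioc_right hu.2
    have hsub' : Ioc (0:ℝ) u ⊆ Icc (0:ℝ) t := hsub.trans Ioc_subset_Icc_self
    have hi1 : IntegrableOn (fun v => (1/t) * ‖φ v‖^2) (Ioc (0:ℝ) u) volume :=
      (hφsqI.mono_set hsub').const_mul (1/t)
    have hi2 : IntegrableOn (fun v => t * ‖g v - bs (φ v)‖^2) (Ioc (0:ℝ) u) volume :=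
      (hFIO.mono_set hsub).const_mul t
    have hi12 : IntegrableOn (fun v => (1/t) * ‖φ v‖^2 + t * ‖g v - bs (φ v)‖^2)
        (Ioc (0:ℝ) u) volume := hi1.add hi2
    have hic : IntegrableOn (fun _ : ℝ => 2*R₀*C) (Ioc (0:ℝ) u) volume :=
      integrableOn_const ((Real.volume_Ioc).trans_lt ENNReal.ofReal_lt_top).ne
    have hrhsInt : IntegrableOn
        (fun v => (1/t) * ‖φ v‖^2 + t * ‖g v - bs (φ v)‖^2 + 2*R₀*C)
        (Ioc (0:ℝ) u) volume := hi12.add hic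
    have hmono : ∫ v in Ioc (0:ℝ) u, p v
        ≤ ∫ v in Ioc (0:ℝ) u,
            ((1/t) * ‖φ v‖^2 + t * ‖g v - bs (φ v)‖^2 + 2*R₀*C) :=
      setIntegral_mono_on (hpInt.mono_set hsub) hrhsInt measurableSet_Ioc
        (fun v hv => hptw v (hsub hv))
    have hsplit2 : ∫ v in Ioc (0:ℝ) u,
          ((1/t) * ‖φ v‖^2 + t * ‖g v - bs (φ v)‖^2 + 2*R₀*C)
        = (1/t) * (∫ v in Ioc (0:ℝ) u, ‖φ v‖^2)
          + t * (∫ v in Ioc (0:ℝ) u, ‖g v - bs (φ v)‖^2) + (2*R₀*C) * u := by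
      rw [integral_add hi12 hic, integral_add hi1 hi2,
        integral_const_mul, integral_const_mul, setIntegral_const]
      rw [Real.volume_real_Ioc_of_le hu.1]
      rw [smul_eq_mul]
      ring
    have hwu : ∫ v in Ioc (0:ℝ) u, ‖φ v‖^2 = w u := by
      rw [hwdef]
      simp only
      rw [intervalIntegral.integral_of_le hu.1]
      exact setIntegral_congr_fun measurableSet_Ioc fun v hv =>
        (hHeq v (hsub' hv)).symm
    have hJu : ∫ v in Ioc (0:ℝ) u, ‖g v - bs (φ v)‖^2 ≤ J := by
      rw [hJdef]
      refine setIntegral_mono_set hFint ?_ (HasSubset.Subset.eventuallyLE hsub)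
      exact (ae_restrict_iff' measurableSet_Ioc).2
        (Filter.Eventually.of_forall fun v _ => sq_nonneg _)
    have hconst : (2*R₀*C) * u ≤ 2*R₀*C*t := by
      have : (0:ℝ) ≤ 2*R₀*C := by positivity
      nlinarith [hu.2]
    have := hHioc u hu
    rw [this, hAdef]
    rw [hsplit2, hwu] at hmono
    have htJ : t * (∫ v in Ioc (0:ℝ) u, ‖g v - bs (φ v)‖^2) ≤ t * J :=
      mul_le_mul_of_nonneg_left hJu ht.le
    linarith
  -- Gronwall via a decreasing auxiliary function
  have hw' : ∀ u : ℝ, HasDerivAt w (H u) u := fun u =>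
    (hHcont.integral_hasStrictDerivAt 0 u).hasDerivAt
  set Z : ℝ → ℝ := fun u => (w u + t*A) * Real.exp (-(u/t)) with hZdef
  have hZ' : ∀ u : ℝ, HasDerivAt Z
      (H u * Real.exp (-(u/t)) + (w u + t*A) * (Real.exp (-(u/t)) * (-(1/t)))) u := by
    intro u
    have h1 : HasDerivAt (fun u : ℝ => -(u/t)) (-(1/t)) u :=
      ((hasDerivAt_id u).div_const t).neg
    have h2 : HasDerivAt (fun u : ℝ => Real.exp (-(u/t)))
        (Real.exp (-(u/t)) * (-(1/t))) u := (Real.hasDerivAt_exp _).comp u h1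
    exact ((hw' u).add_const (t*A)).mul h2
  have hZanti : AntitoneOn Z (Icc (0:ℝ) t) := by
    refine antitoneOn_of_deriv_nonpos (convex_Icc 0 t)
      (fun u _ => ((hZ' u).differentiableAt).continuousAt.continuousWithinAt)
      (fun u _ => ((hZ' u).differentiableAt).differentiableWithinAt) ?_
    intro u hu
    rw [interior_Icc] at hu
    rw [(hZ' u).deriv]
    have hHu : H u ≤ A + (1/t) * w u := hHb u ⟨hu.1.le, hu.2.le⟩
    have hfact : H u * Real.exp (-(u/t)) + (w u + t*A) * (Real.exp (-(u/t)) * (-(1/t)))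
        = Real.exp (-(u/t)) * (H u - (A + (1/t) * w u)) := by
      field_simp
      ring
    rw [hfact]
    exact mul_nonpos_of_nonneg_of_nonpos (Real.exp_pos _).le (by linarith)
  have hZ0 : Z 0 = t * A := by
    rw [hZdef]
    simp [hwdef, intervalIntegral.integral_same]
  have hZt : Z t = (w t + t*A) * Real.exp (-1) := by
    rw [hZdef]
    simp only
    rw [div_self ht.ne']
  have hZle : Z t ≤ Z 0 := hZanti ⟨le_refl _, ht.le⟩ ⟨ht.le, le_refl _⟩ ht.le
  have hwt : w t + t*A ≤ t * A * Real.exp 1 := by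
    rw [hZt, hZ0] at hZle
    have h1 : Real.exp (-1 : ℝ) * Real.exp 1 = 1 := by
      rw [← Real.exp_add]; norm_num
    have h2 := mul_le_mul_of_nonneg_right hZle (Real.exp_pos 1).le
    have h3 : (w t + t*A) * Real.exp (-1 : ℝ) * Real.exp 1 = w t + t*A := by
      rw [mul_assoc, h1, mul_one]
    linarith
  -- conclude
  clear_value Z w H A pt p J x μ
  have hHt : H t ≤ A * Real.exp 1 := by
    have h1 : H t ≤ A + (1/t) * w t := hHb t ⟨ht.le, le_refl _⟩
    have h2 : w t ≤ t * A * Real.exp 1 - t * A := by linarith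
    have h3 : (1/t) * w t ≤ A * Real.exp 1 - A := by
      have h4 : (1/t) * w t ≤ (1/t) * (t * A * Real.exp 1 - t * A) :=
        mul_le_mul_of_nonneg_left h2 (by positivity)
      have h5 : (1/t) * (t * A * Real.exp 1 - t * A) = A * Real.exp 1 - A := by
        field_simp
      linarith
    linarith
  have hR2 : R^2 ≤ ‖φ t‖^2 := pow_le_pow_left₀ hR hRy 2
  have hHteq : H t = ‖φ t‖^2 := hHeq t ⟨ht.le, le_refl _⟩
  calc R^2 ≤ ‖φ t‖^2 := hR2
    _ = H t := hHteq.symm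
    _ ≤ A * Real.exp 1 := hHt
    _ = Real.exp 1 * A := mul_comm _ _
/-- for fixed `x` and `t > 0`,
`lim_{R → ∞} inf_{s ≥ 0} inf_{y : ‖y‖ ≥ R} V^s(x, y, t) = +∞`. -/
theorem cost_tendsto_top {d : ℕ} (hd : 1 ≤ d)
    (b : ℝ → EuclideanSpace ℝ (Fin d) → EuclideanSpace ℝ (Fin d))
    (hper : ∀ t ≥ (0:ℝ), ∀ x, b (t + 1) x = b t x)
    (hLipX : ∀ R > (0:ℝ), ∀ x : EuclideanSpace ℝ (Fin d), ∃ K ≥ (0:ℝ),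
      ∀ t ≥ (0:ℝ), ∀ y₁ ∈ Metric.closedBall x R, ∀ y₂ ∈ Metric.closedBall x R,
        ‖b t y₁ - b t y₂‖ ≤ K * ‖y₁ - y₂‖)
    (hLipT : ∀ R > (0:ℝ), ∀ x : EuclideanSpace ℝ (Fin d), ∃ κ ≥ (0:ℝ),
      ∀ s ≥ (0:ℝ), ∀ t ≥ (0:ℝ), ∀ y ∈ Metric.closedBall x R,
        ‖b t y - b s y‖ ≤ κ * |t - s|)
    (hgrow : ∃ η > (0:ℝ), ∃ R₀ > (0:ℝ), ∀ t ≥ (0:ℝ),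
      ∀ x : EuclideanSpace ℝ (Fin d), R₀ ≤ ‖x‖ → ⟪x, b t x⟫ < -η * ‖x‖) :
    ∀ x : EuclideanSpace ℝ (Fin d), ∀ t > (0:ℝ),
      Tendsto (fun R : ℝ => ⨅ s ∈ Ici (0:ℝ),
          ⨅ y ∈ {y : EuclideanSpace ℝ (Fin d) | R ≤ ‖y‖}, costFn b s x y t)
        atTop (𝓝 (⊤ : ℝ≥0∞)) := by
  obtain ⟨η, hη, R₀', hR₀', hgr⟩ := hgrow
  intro x t ht
  set R₀ : ℝ := max R₀' 1 with hR₀def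
  have hR₀pos : (0:ℝ) < R₀ := lt_of_lt_of_le one_pos (le_max_right _ _)
  -- continuity of b s
  have hbcont : ∀ s : ℝ, 0 ≤ s → Continuous (b s) := by
    intro s hs
    rw [continuous_iff_continuousAt]
    intro z
    obtain ⟨K, hK0, hK⟩ := hLipX 1 one_pos z
    have hlip : LipschitzOnWith (Real.toNNReal K) (b s) (Metric.closedBall z 1) := by
      refine LipschitzOnWith.of_dist_le_mul fun y₁ h₁ y₂ h₂ => ?_
      rw [dist_eq_norm, dist_eq_norm, Real.coe_toNNReal K hK0]
      exact hK s hs y₁ h₁ y₂ h₂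
    exact hlip.continuousOn.continuousAt (Metric.closedBall_mem_nhds z one_pos)
  -- periodicity
  have hper' : ∀ (n : ℕ) (s : ℝ), 0 ≤ s → ∀ z, b (s + n) z = b s z := by
    intro n
    induction n with
    | zero => intro s _ z; norm_num
    | succ m ih =>
      intro s hs z
      have h1 : (s + ((m:ℝ) + 1)) = (s + m) + 1 := by ring
      push_cast
      rw [h1, hper (s + m) (by positivity) z]
      exact ih s hs z
  have hfract : ∀ s : ℝ, 0 ≤ s → ∀ z, b s z = b (Int.fract s) z := by
    intro s hs z
    have hfl : (0:ℤ) ≤ ⌊s⌋ := Int.floor_nonneg.2 hs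
    have h1 : s = Int.fract s + (⌊s⌋.toNat : ℝ) := by
      have hcast : ((⌊s⌋.toNat : ℕ) : ℝ) = ((⌊s⌋ : ℤ) : ℝ) := by
        exact_mod_cast congrArg (Int.cast : ℤ → ℝ) (Int.toNat_of_nonneg hfl)
      rw [Int.fract, hcast]
      ring
    have h2 := hper' ⌊s⌋.toNat (Int.fract s) (Int.fract_nonneg s) z
    rw [← h1] at h2
    exact h2
  -- uniform bound on b s over the ball of radius R₀
  obtain ⟨C₀, hC₀⟩ := IsCompact.exists_bound_of_continuousOn
    (isCompact_closedBall (0 : EuclideanSpace ℝ (Fin d)) R₀)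
    ((hbcont 0 le_rfl).continuousOn)
  obtain ⟨κ, hκ0, hκ⟩ := hLipT R₀ hR₀pos 0
  set C : ℝ := max C₀ 0 + κ with hCdef
  have hC0 : (0:ℝ) ≤ C := by positivity
  have hCb : ∀ s : ℝ, 0 ≤ s → ∀ z : EuclideanSpace ℝ (Fin d), ‖z‖ ≤ R₀ → ‖b s z‖ ≤ C := by
    intro s hs z hz
    have hzball : z ∈ Metric.closedBall (0 : EuclideanSpace ℝ (Fin d)) R₀ :=
      mem_closedBall_zero_iff.2 hz
    have h1 : ‖b (Int.fract s) z - b 0 z‖ ≤ κ * |Int.fract s - 0| :=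
      hκ 0 le_rfl (Int.fract s) (Int.fract_nonneg s) z hzball
    have h2 : |Int.fract s - 0| ≤ 1 := by
      rw [sub_zero, abs_of_nonneg (Int.fract_nonneg s)]
      exact (Int.fract_lt_one s).le
    have h3 : ‖b 0 z‖ ≤ max C₀ 0 := le_trans (hC₀ z hzball) (le_max_left _ _)
    rw [hfract s hs z]
    calc ‖b (Int.fract s) z‖ ≤ ‖b (Int.fract s) z - b 0 z‖ + ‖b 0 z‖ := by
          simpa using norm_add_le (b (Int.fract s) z - b 0 z) (b 0 z)
      _ ≤ κ * |Int.fract s - 0| + max C₀ 0 := add_le_add h1 h3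
      _ ≤ κ * 1 + max C₀ 0 := by nlinarith
      _ ≤ C := by rw [hCdef]; nlinarith
  -- drift sign condition
  have hdrift : ∀ s : ℝ, 0 ≤ s → ∀ z : EuclideanSpace ℝ (Fin d),
      R₀ ≤ ‖z‖ → ⟪z, b s z⟫ ≤ 0 := by
    intro s hs z hz
    have h1 := hgr s hs z (le_trans (le_max_left _ _) hz)
    nlinarith [norm_nonneg z]
  -- the lower bound function
  set L : ℝ → ℝ := fun R => (R^2 / Real.exp 1 - ‖x‖^2 - 2*R₀*C*t) / (2*t) with hLdef
  have hlb : ∀ R : ℝ, 0 ≤ R →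
      ENNReal.ofReal (L R) ≤ ⨅ s ∈ Ici (0:ℝ),
        ⨅ y ∈ {y : EuclideanSpace ℝ (Fin d) | R ≤ ‖y‖}, costFn b s x y t := by
    intro R hR
    refine le_iInf₂ fun s hs => le_iInf₂ fun y hy => ?_
    rw [costFn]
    refine le_iInf₂ fun φ hφ => ?_
    rw [frozenRate]
    refine le_iInf₂ fun g hg => ?_
    obtain ⟨hφc, hφ0, hφt⟩ := hφ
    obtain ⟨hg2, hgrep⟩ := hg
    have hRy : R ≤ ‖φ t‖ := by rw [hφt]; exact hy
    have := key_estimate (b s) (hbcont s hs) R₀ C hR₀pos.le hC0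
      (hdrift s hs) (hCb s hs) t ht φ g hφc hg2 hgrep R hR hRy
    rwa [hφ0] at this
  -- the lower bound tends to ⊤
  have hLtop : Tendsto L atTop atTop := by
    rw [hLdef]
    refine Tendsto.atTop_div_const (by positivity) ?_
    refine tendsto_atTop_add_const_right _ _ ?_
    refine tendsto_atTop_add_const_right _ _ ?_
    exact (tendsto_pow_atTop two_ne_zero).atTop_div_const (Real.exp_pos 1)
  have hofReal : Tendsto (fun R => ENNReal.ofReal (L R)) atTop (𝓝 ⊤) :=
    ENNReal.tendsto_ofReal_atTop.comp hLtop
  refine tendsto_nhds_top_mono hofReal ?_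
  filter_upwards [eventually_ge_atTop (0:ℝ)] with R hR
  exact hlb R hR
end

section
/- For any compact subset K of ℝ^d there exists a constant Γ_K ≥ 0 such that sup_{s ≥ 0} V^s(x, y) ≤ Γ_K ‖x − y‖ for all x, y ∈ K; i.e. the quasi-potential is locally Lipschitz in the state variables, uniformly with respect to the frozen time parameter s. -/
open MeasureTheory Set Filter Topology
open scoped RealInnerProductSpace ENNReal

/-- The quasi-potential `V^s(x,y) = inf_{t>0} V^s(x,y,t)`. -/
noncomputable def quasipotential {d : ℕ}
    (b : ℝ → EuclideanSpace ℝ (Fin d) → EuclideanSpace ℝ (Fin d))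
    (s : ℝ) (x y : EuclideanSpace ℝ (Fin d)) : ℝ≥0∞ :=
  ⨅ t ∈ Ioi (0:ℝ), costFn b s x y t
/-- Lemma 1.7: for any compact `K ⊆ ℝ^d` there is `Γ_K ≥ 0` with
`sup_{s ≥ 0} V^s(x, y) ≤ Γ_K ‖x − y‖` for all `x, y ∈ K`. -/
theorem quasipotential_locally_lipschitz {d : ℕ} (hd : 1 ≤ d)
    (b : ℝ → EuclideanSpace ℝ (Fin d) → EuclideanSpace ℝ (Fin d))
    (hper : ∀ t ≥ (0:ℝ), ∀ x, b (t + 1) x = b t x)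
    (hLipX : ∀ R > (0:ℝ), ∀ x : EuclideanSpace ℝ (Fin d), ∃ K ≥ (0:ℝ),
      ∀ t ≥ (0:ℝ), ∀ y₁ ∈ Metric.closedBall x R, ∀ y₂ ∈ Metric.closedBall x R,
        ‖b t y₁ - b t y₂‖ ≤ K * ‖y₁ - y₂‖)
    (hLipT : ∀ R > (0:ℝ), ∀ x : EuclideanSpace ℝ (Fin d), ∃ κ ≥ (0:ℝ),
      ∀ s ≥ (0:ℝ), ∀ t ≥ (0:ℝ), ∀ y ∈ Metric.closedBall x R,
        ‖b t y - b s y‖ ≤ κ * |t - s|)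
    (hgrow : ∃ η > (0:ℝ), ∃ R₀ > (0:ℝ), ∀ t ≥ (0:ℝ),
      ∀ x : EuclideanSpace ℝ (Fin d), R₀ ≤ ‖x‖ → ⟪x, b t x⟫ < -η * ‖x‖) :
    ∀ K : Set (EuclideanSpace ℝ (Fin d)), IsCompact K →
      ∃ Γ ≥ (0:ℝ), ∀ x ∈ K, ∀ y ∈ K, ∀ s ≥ (0:ℝ),
        quasipotential b s x y ≤ ENNReal.ofReal (Γ * ‖x - y‖) := by
  clear hgrow hd
  intro K hK
  -- a ball containing the convex hull of K
  obtain ⟨r, hKr⟩ := hK.isBounded.subset_closedBall 0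
  set R : ℝ := max r 1 with hRdef
  have hRpos : (0:ℝ) < R := lt_of_lt_of_le one_pos (le_max_right _ _)
  have hCR : convexHull ℝ K ⊆ Metric.closedBall 0 R :=
    convexHull_min (hKr.trans (Metric.closedBall_subset_closedBall (le_max_left _ _)))
      (convex_closedBall 0 R)
  obtain ⟨K₀, hK₀, hbLip⟩ := hLipX R hRpos 0
  obtain ⟨κ, hκ, hbT⟩ := hLipT R hRpos 0
  set M : ℝ := ‖b 0 0‖ + κ + K₀ * R with hMdef
  have hM0 : 0 ≤ M :=
    add_nonneg (add_nonneg (norm_nonneg _) hκ) (mul_nonneg hK₀ hRpos.le)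
  -- periodicity: shift by natural numbers
  have hper' : ∀ (n : ℕ) (t : ℝ), 0 ≤ t → ∀ z, b (t + n) z = b t z := by
    intro n
    induction n with
    | zero => intro t ht z; simp
    | succ n ih =>
      intro t ht z
      have h1 : (t + (n + 1 : ℕ) : ℝ) = (t + n) + 1 := by push_cast; ring
      rw [h1, hper (t + n) (by positivity) z, ih t ht z]
  -- uniform bound on b over the hull
  have hbound : ∀ s : ℝ, 0 ≤ s → ∀ z ∈ convexHull ℝ K, ‖b s z‖ ≤ M := by
    intro s hs z hz
    set t : ℝ := s - ⌊s⌋₊ with htdef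
    have ht0 : 0 ≤ t := sub_nonneg.2 (Nat.floor_le hs)
    have ht1 : t ≤ 1 := by
      have := Nat.lt_floor_add_one s
      simp only [htdef]; linarith
    have hbs : b s z = b t z := by
      have h := hper' ⌊s⌋₊ t ht0 z
      rw [show t + (⌊s⌋₊ : ℝ) = s by simp [htdef]] at h
      exact h
    have hz' : z ∈ Metric.closedBall (0 : EuclideanSpace ℝ (Fin d)) R := hCR hz
    have hzn : ‖z‖ ≤ R := by simpa [Metric.mem_closedBall, dist_eq_norm] using hz'
    have h0' : (0 : EuclideanSpace ℝ (Fin d)) ∈ Metric.closedBall (0 : EuclideanSpace ℝ (Fin d)) R := by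
      simp [hRpos.le]
    have h1 : ‖b t z - b t 0‖ ≤ K₀ * R := by
      have h := hbLip t ht0 z hz' 0 h0'
      have : ‖z - 0‖ ≤ R := by simpa using hzn
      calc ‖b t z - b t 0‖ ≤ K₀ * ‖z - 0‖ := h
        _ ≤ K₀ * R := mul_le_mul_of_nonneg_left this hK₀
    have h2 : ‖b t 0 - b 0 0‖ ≤ κ := by
      have h := hbT 0 le_rfl t ht0 0 h0'
      have : κ * |t - 0| ≤ κ := by
        rw [sub_zero, abs_of_nonneg ht0]
        nlinarith
      simpa using h.trans this
    have hsplit : b s z = (b t z - b t 0) + ((b t 0 - b 0 0) + b 0 0) := by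
      rw [hbs]; abel
    calc ‖b s z‖ = ‖(b t z - b t 0) + ((b t 0 - b 0 0) + b 0 0)‖ := by rw [← hsplit]
      _ ≤ ‖b t z - b t 0‖ + (‖b t 0 - b 0 0‖ + ‖b 0 0‖) :=
          (norm_add_le _ _).trans (by gcongr; exact norm_add_le _ _)
      _ ≤ K₀ * R + (κ + ‖b 0 0‖) := by gcongr
      _ = M := by rw [hMdef]; ring
  -- key upper bound via straight-line path in time T
  have key : ∀ x ∈ K, ∀ y ∈ K, ∀ s : ℝ, 0 ≤ s → ∀ T : ℝ, 0 < T →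
      quasipotential b s x y ≤ ENNReal.ofReal ((1/2) * (‖y - x‖ / T + M)^2 * T) := by
    intro x hx y hy s hs T hT
    set φ : ℝ → EuclideanSpace ℝ (Fin d) := fun t => x + (t / T) • (y - x) with hφdef
    set g : ℝ → EuclideanSpace ℝ (Fin d) := fun _ => T⁻¹ • (y - x) with hgdef
    have hφ0 : φ 0 = x := by simp [hφdef]
    have hφT : φ T = y := by simp [hφdef, div_self hT.ne']
    have hφcont : ContinuousOn φ (Icc (0:ℝ) T) := by
      apply Continuous.continuousOn
      exact continuous_const.add ((continuous_id.div_const T).smul continuous_const)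
    haveI : IsFiniteMeasure (volume.restrict (Ioc (0:ℝ) T)) := by
      constructor
      rw [Measure.restrict_apply_univ, Real.volume_Ioc]
      exact ENNReal.ofReal_lt_top
    have hgmem : MemLp g 2 (volume.restrict (Ioc (0:ℝ) T)) := memLp_const _
    have hgint : ∀ t ∈ Icc (0:ℝ) T, φ t = φ 0 + ∫ u in (0:ℝ)..t, g u := by
      intro t ht
      rw [hφ0, hgdef]
      simp only [intervalIntegral.integral_const, sub_zero, smul_smul, hφdef]
      rw [div_eq_mul_inv]
    -- pointwise bound on the integrand
    have hpt : ∀ t ∈ Ioc (0:ℝ) T,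
        ENNReal.ofReal ((1/2) * ‖g t - b s (φ t)‖^2) ≤
        ENNReal.ofReal ((1/2) * (‖y - x‖ / T + M)^2) := by
      intro t ht
      apply ENNReal.ofReal_le_ofReal
      have hφmem : φ t ∈ convexHull ℝ K := by
        apply segment_subset_convexHull hx hy
        rw [segment_eq_image']
        exact ⟨t / T, ⟨div_nonneg ht.1.le hT.le, (div_le_one hT).2 ht.2⟩, rfl⟩
      have hb : ‖b s (φ t)‖ ≤ M := hbound s hs _ hφmem
      have hg : ‖g t‖ = ‖y - x‖ / T := by
        show ‖T⁻¹ • (y - x)‖ = _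
        rw [norm_smul, norm_inv, Real.norm_eq_abs, abs_of_pos hT, inv_mul_eq_div]
      have hn : ‖g t - b s (φ t)‖ ≤ ‖y - x‖ / T + M := by
        calc ‖g t - b s (φ t)‖ ≤ ‖g t‖ + ‖b s (φ t)‖ := norm_sub_le _ _
          _ ≤ ‖y - x‖ / T + M := by rw [hg]; gcongr
      have hsq : ‖g t - b s (φ t)‖^2 ≤ (‖y - x‖ / T + M)^2 :=
        pow_le_pow_left₀ (norm_nonneg _) hn 2
      linarith
    calc quasipotential b s x y ≤ costFn b s x y T := by
          apply iInf₂_le T (mem_Ioi.2 hT)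
      _ ≤ frozenRate b s T φ := by
          apply iInf₂_le φ ⟨hφcont, hφ0, hφT⟩
      _ ≤ ∫⁻ t in Ioc (0:ℝ) T, ENNReal.ofReal ((1/2) * ‖g t - b s (φ t)‖^2) := by
          apply iInf₂_le g ⟨hgmem, hgint⟩
      _ ≤ ∫⁻ _ in Ioc (0:ℝ) T, ENNReal.ofReal ((1/2) * (‖y - x‖ / T + M)^2) :=
          setLIntegral_mono measurable_const hpt
      _ = ENNReal.ofReal ((1/2) * (‖y - x‖ / T + M)^2) * volume (Ioc (0:ℝ) T) :=
          setLIntegral_const _ _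
      _ = ENNReal.ofReal ((1/2) * (‖y - x‖ / T + M)^2 * T) := by
          rw [Real.volume_Ioc, sub_zero, ← ENNReal.ofReal_mul (by positivity)]
  -- conclude with Γ = (1/2)(1+M)²
  refine ⟨(1/2) * (1 + M)^2, by positivity, ?_⟩
  intro x hx y hy s hs
  rcases eq_or_ne x y with hxy | hxy
  · -- x = y : show the quasipotential is 0
    subst hxy
    have h0 : quasipotential b s x x = 0 := by
      refine le_antisymm ?_ zero_le
      refine ENNReal.le_of_forall_pos_le_add fun ε hε _ => ?_
      rw [zero_add]
      set T : ℝ := min 1 ((ε:ℝ) / ((1/2) * M^2 + 1)) with hTdef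
      have hTpos : 0 < T := lt_min one_pos (by positivity)
      have := key x hx x hx s hs T hTpos
      simp only [sub_self, norm_zero, zero_div, zero_add] at this
      refine this.trans ?_
      rw [show ((ε:ℝ≥0∞) : ℝ≥0∞) = ENNReal.ofReal (ε:ℝ) by
        rw [ENNReal.ofReal_coe_nnreal]]
      apply ENNReal.ofReal_le_ofReal
      have hT2 : T ≤ (ε:ℝ) / ((1/2) * M^2 + 1) := min_le_right _ _
      have hc : (0:ℝ) < (1/2) * M^2 + 1 := by positivity
      calc (1/2) * M^2 * T ≤ (1/2) * M^2 * ((ε:ℝ) / ((1/2) * M^2 + 1)) := by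
            apply mul_le_mul_of_nonneg_left hT2 (by positivity)
        _ ≤ (ε:ℝ) := by
            have hε' : (0:ℝ) ≤ ε := ε.2
            rw [mul_comm, div_mul_eq_mul_div, div_le_iff₀ hc]
            nlinarith
    rw [h0]
    exact zero_le
  · -- x ≠ y : take T = ‖x - y‖
    have hT : (0:ℝ) < ‖x - y‖ := norm_sub_pos_iff.2 hxy
    have hxy' : ‖y - x‖ = ‖x - y‖ := norm_sub_rev _ _
    have := key x hx y hy s hs ‖x - y‖ hT
    rw [hxy', div_self hT.ne'] at this
    exact this
end

section
/- Let R > 0 and let x, y lie in the closed ball B_R(0) with x ≠ y. Set T = ‖y − x‖ and let φ be the unit-speed straight-line path φ_t = x + t·(y − x)/‖y − x‖ for t ∈ [0, T]. Then for every s ≥ 0 one has the energy estimate I^s_{0T}(φ) ≤ (T/2)·(1 + κ_R(0) + R·K_R(0) + ‖b(0,0)‖)². Consequently sup_{s ≥ 0} V^s(x, y) ≤ Γ·‖x − y‖ with Γ = (1/2)(1 + κ_R(0) + R·K_R(0) + ‖b(0,0)‖)². -/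
open MeasureTheory Set Filter Topology
open scoped RealInnerProductSpace ENNReal

/-- energy estimate along the unit-speed straight-line path joining
`x` to `y` in the ball `B_R(0)`, and the resulting bound on the quasi-potential. -/
theorem straight_line_energy_bound {d : ℕ} (hd : 1 ≤ d)
    (b : ℝ → EuclideanSpace ℝ (Fin d) → EuclideanSpace ℝ (Fin d))
    (hper : ∀ t ≥ (0:ℝ), ∀ x, b (t + 1) x = b t x)
    (R : ℝ) (hR : 0 < R) (K κ : ℝ) (hK : 0 ≤ K) (hκ : 0 ≤ κ)
    (hLipX : ∀ t ≥ (0:ℝ), ∀ y₁ ∈ Metric.closedBall (0 : EuclideanSpace ℝ (Fin d)) R,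
      ∀ y₂ ∈ Metric.closedBall (0 : EuclideanSpace ℝ (Fin d)) R,
        ‖b t y₁ - b t y₂‖ ≤ K * ‖y₁ - y₂‖)
    (hLipT : ∀ s ≥ (0:ℝ), ∀ t ≥ (0:ℝ), ∀ y ∈ Metric.closedBall (0 : EuclideanSpace ℝ (Fin d)) R,
        ‖b t y - b s y‖ ≤ κ * |t - s|)
    (x y : EuclideanSpace ℝ (Fin d))
    (hx : x ∈ Metric.closedBall (0 : EuclideanSpace ℝ (Fin d)) R)
    (hy : y ∈ Metric.closedBall (0 : EuclideanSpace ℝ (Fin d)) R)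
    (hxy : x ≠ y) :
    (∀ s ≥ (0:ℝ),
      frozenRate b s (‖y - x‖) (fun t => x + (t / ‖y - x‖) • (y - x)) ≤
        ENNReal.ofReal ((‖y - x‖ / 2) * (1 + κ + R * K + ‖b 0 0‖)^2)) ∧
    (∀ s ≥ (0:ℝ),
      quasipotential b s x y ≤
        ENNReal.ofReal ((1/2) * (1 + κ + R * K + ‖b 0 0‖)^2 * ‖x - y‖)) := by

  -- abbreviations
  set T : ℝ := ‖y - x‖ with hTdef
  have hT : 0 < T := norm_pos_iff.mpr (sub_ne_zero.mpr (Ne.symm hxy))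
  set C : ℝ := 1 + κ + R * K + ‖b 0 0‖ with hCdef
  have hC0 : 0 ≤ C := by positivity
  set φ : ℝ → EuclideanSpace ℝ (Fin d) := fun t => x + (t / T) • (y - x) with hφdef
  -- periodicity: reduce time to [0,1)
  have key : ∀ n : ℕ, ∀ t ≥ (0:ℝ), ∀ z, b (t + n) z = b t z := by
    intro n
    induction n with
    | zero => intro t ht z; simp
    | succ n ih =>
        intro t ht z
        have h1 : (t + ((n : ℕ) + 1 : ℕ) : ℝ) = (t + n) + 1 := by push_cast; ring
        rw [h1, hper (t + n) (by positivity) z, ih t ht z]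
  have hper' : ∀ s ≥ (0:ℝ), ∀ z, b s z = b (Int.fract s) z := by
    intro s hs z
    have h0 : (0:ℤ) ≤ ⌊s⌋ := Int.floor_nonneg.mpr hs
    have hc : ((⌊s⌋.toNat : ℕ) : ℝ) = (⌊s⌋ : ℝ) := by
      exact_mod_cast congrArg (Int.cast : ℤ → ℝ) (Int.toNat_of_nonneg h0)
    have h1 : s = Int.fract s + ((⌊s⌋.toNat : ℕ) : ℝ) := by
      rw [hc, Int.fract]; ring
    conv_lhs => rw [h1]
    rw [key _ (Int.fract s) (Int.fract_nonneg s) z]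
  -- bound on the drift on the ball
  have hbb : ∀ s ≥ (0:ℝ), ∀ z ∈ Metric.closedBall (0 : EuclideanSpace ℝ (Fin d)) R,
      ‖b s z‖ ≤ κ + R * K + ‖b 0 0‖ := by
    intro s hs z hz
    have h0ball : (0 : EuclideanSpace ℝ (Fin d)) ∈
        Metric.closedBall (0 : EuclideanSpace ℝ (Fin d)) R := by
      simp [hR.le]
    have hfr0 : 0 ≤ Int.fract s := Int.fract_nonneg s
    have hfr1 : Int.fract s < 1 := Int.fract_lt_one s
    have e1 : ‖b (Int.fract s) z - b (Int.fract s) 0‖ ≤ K * ‖z - 0‖ :=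
      hLipX _ hfr0 z hz 0 h0ball
    have e2 : ‖b (Int.fract s) 0 - b 0 0‖ ≤ κ * |Int.fract s - 0| :=
      hLipT 0 le_rfl _ hfr0 0 h0ball
    have hz' : ‖z‖ ≤ R := by simpa [Metric.mem_closedBall, dist_eq_norm] using hz
    calc ‖b s z‖ = ‖b (Int.fract s) z‖ := by rw [hper' s hs z]
      _ ≤ ‖b (Int.fract s) z - b (Int.fract s) 0‖ + ‖b (Int.fract s) 0 - b 0 0‖ + ‖b 0 0‖ := by
          have hdec : b (Int.fract s) z = (b (Int.fract s) z - b (Int.fract s) 0) +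
              (b (Int.fract s) 0 - b 0 0) + b 0 0 := by abel
          conv_lhs => rw [hdec]
          exact norm_add₃_le
      _ ≤ K * ‖z - 0‖ + κ * |Int.fract s - 0| + ‖b 0 0‖ := by
          gcongr
      _ ≤ K * R + κ * 1 + ‖b 0 0‖ := by
          gcongr
          · simpa using hz'
          · rw [sub_zero, abs_of_nonneg hfr0]; exact hfr1.le
      _ = κ + R * K + ‖b 0 0‖ := by ring
  -- the path stays in the ball
  have hφball : ∀ t ∈ Icc (0:ℝ) T, φ t ∈ Metric.closedBall (0 : EuclideanSpace ℝ (Fin d)) R := by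
    intro t ht
    have hl0 : 0 ≤ t / T := div_nonneg ht.1 hT.le
    have hl1 : t / T ≤ 1 := (div_le_one hT).mpr ht.2
    have heq : φ t = (1 - t / T) • x + (t / T) • y := by
      simp only [hφdef, smul_sub, sub_smul, one_smul]
      abel
    have hx' : ‖x‖ ≤ R := by simpa [Metric.mem_closedBall, dist_eq_norm] using hx
    have hy' : ‖y‖ ≤ R := by simpa [Metric.mem_closedBall, dist_eq_norm] using hy
    simp only [Metric.mem_closedBall, dist_zero_right]
    calc ‖φ t‖ ≤ ‖(1 - t / T) • x‖ + ‖(t / T) • y‖ := by rw [heq]; exact norm_add_le _ _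
      _ = (1 - t / T) * ‖x‖ + (t / T) * ‖y‖ := by
          rw [norm_smul, norm_smul, Real.norm_of_nonneg (by linarith), Real.norm_of_nonneg hl0]
      _ ≤ (1 - t / T) * R + (t / T) * R := by gcongr <;> linarith
      _ = R := by ring
  -- the constant derivative
  set g : ℝ → EuclideanSpace ℝ (Fin d) := fun _ => T⁻¹ • (y - x) with hgdef
  have hgnorm : ∀ t : ℝ, ‖g t‖ = 1 := by
    intro t
    simp only [hgdef, norm_smul, norm_inv, Real.norm_of_nonneg (norm_nonneg (y - x))]
    rw [← hTdef, Real.norm_of_nonneg hT.le, inv_mul_cancel₀ hT.ne']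
  -- membership of g in the admissible set
  haveI : Fact (volume (Ioc (0:ℝ) T) < ⊤) := ⟨measure_Ioc_lt_top⟩
  have hgmem : g ∈ {g : ℝ → EuclideanSpace ℝ (Fin d) |
      MemLp g 2 (volume.restrict (Ioc (0:ℝ) T)) ∧
      ∀ t ∈ Icc (0:ℝ) T, φ t = φ 0 + ∫ u in (0:ℝ)..t, g u} := by
    constructor
    · exact memLp_const _
    · intro t ht
      simp only [hφdef, hgdef, intervalIntegral.integral_const, sub_zero, zero_div, zero_smul,
        add_zero, smul_smul, div_eq_mul_inv, zero_mul]
  -- part 1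
  have part1 : ∀ s ≥ (0:ℝ),
      frozenRate b s T φ ≤ ENNReal.ofReal ((T / 2) * C ^ 2) := by
    intro s hs
    refine le_trans (iInf₂_le g hgmem) ?_
    have hpt : ∀ t ∈ Ioc (0:ℝ) T,
        ENNReal.ofReal ((1/2) * ‖g t - b s (φ t)‖^2) ≤ ENNReal.ofReal ((1/2) * C ^ 2) := by
      intro t ht
      apply ENNReal.ofReal_le_ofReal
      have hball := hφball t ⟨ht.1.le, ht.2⟩
      have hnb := hbb s hs (φ t) hball
      have hnorm : ‖g t - b s (φ t)‖ ≤ C := by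
        calc ‖g t - b s (φ t)‖ ≤ ‖g t‖ + ‖b s (φ t)‖ := norm_sub_le _ _
          _ ≤ 1 + (κ + R * K + ‖b 0 0‖) := by rw [hgnorm t]; gcongr
          _ = C := by rw [hCdef]; ring
      have := pow_le_pow_left₀ (norm_nonneg _) hnorm 2
      nlinarith [norm_nonneg (g t - b s (φ t))]
    calc (∫⁻ t in Ioc (0:ℝ) T, ENNReal.ofReal ((1/2) * ‖g t - b s (φ t)‖^2))
        ≤ ∫⁻ _ in Ioc (0:ℝ) T, ENNReal.ofReal ((1/2) * C ^ 2) :=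
          setLIntegral_mono measurable_const hpt
      _ = ENNReal.ofReal ((1/2) * C ^ 2) * volume (Ioc (0:ℝ) T) := setLIntegral_const _ _
      _ = ENNReal.ofReal ((1/2) * C ^ 2) * ENNReal.ofReal T := by
          rw [Real.volume_Ioc, sub_zero]
      _ = ENNReal.ofReal ((T / 2) * C ^ 2) := by
          rw [← ENNReal.ofReal_mul (by positivity)]
          congr 1
          ring
  constructor
  · exact part1
  · intro s hs
    have hcont : ContinuousOn φ (Icc (0:ℝ) T) := by
      apply Continuous.continuousOn
      fun_prop
    have hφ0 : φ 0 = x := by simp [hφdef]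
    have hφT : φ T = y := by
      simp only [hφdef, div_self hT.ne', one_smul]
      abel
    have hφmem : φ ∈ {ψ : ℝ → EuclideanSpace ℝ (Fin d) |
        ContinuousOn ψ (Icc (0:ℝ) T) ∧ ψ 0 = x ∧ ψ T = y} := ⟨hcont, hφ0, hφT⟩
    calc quasipotential b s x y ≤ costFn b s x y T := iInf₂_le T (mem_Ioi.mpr hT)
      _ ≤ frozenRate b s T φ := iInf₂_le φ hφmem
      _ ≤ ENNReal.ofReal ((T / 2) * C ^ 2) := part1 s hs
      _ = ENNReal.ofReal ((1/2) * C ^ 2 * ‖x - y‖) := by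
          rw [norm_sub_rev x y, ← hTdef]
          congr 1
          ring
end

section
/- (Lemma 2.7) Let K be a compact subset of A_− \ {x_−}. There exist T₀ > 0 and c > 0 such that for all T ≥ T₀, all s ∈ [0,1], and every continuous path φ ∈ C([0,T],ℝ^d) taking all of its values in K, one has I^s_{0T}(φ) ≥ c(T − T₀). -/
open MeasureTheory Set Filter Topology
open scoped RealInnerProductSpace ENNReal

section AuxProof
open intervalIntegral

lemma windowCS {a c : ℝ} (hac : a ≤ c) {Q : ℝ → ℝ≥0∞}
    (hQ : AEMeasurable Q (volume.restrict (Ioc a c))) {e : ℝ} (he : 0 ≤ e)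
    (hen : ∫⁻ u in Ioc a c, Q u ^ 2 ≤ ENNReal.ofReal (e^2)) :
    ∫⁻ u in Ioc a c, Q u ≤ ENNReal.ofReal (e * Real.sqrt (c - a)) := by
  have h22 : Real.HolderConjugate 2 2 := Real.HolderConjugate.two_two
  have key := ENNReal.lintegral_mul_le_Lp_mul_Lq (volume.restrict (Ioc a c)) h22 hQ
      (aemeasurable_const (b := (1:ℝ≥0∞)))
  simp only [Pi.mul_apply, mul_one, ENNReal.one_rpow, lintegral_const, one_mul,
    Measure.restrict_apply, MeasurableSet.univ, univ_inter] at key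
  have h2 : ∀ x : ℝ≥0∞, x ^ (2:ℝ) = x ^ (2:ℕ) := fun x => by
    rw [← ENNReal.rpow_natCast]; norm_num
  simp only [h2] at key
  refine key.trans ?_
  have h1 : (∫⁻ (a_1 : ℝ) in Ioc a c, Q a_1 ^ (2:ℕ)) ^ (1/(2:ℝ)) ≤ ENNReal.ofReal e := by
    calc (∫⁻ (a_1 : ℝ) in Ioc a c, Q a_1 ^ (2:ℕ)) ^ (1/(2:ℝ))
        ≤ (ENNReal.ofReal (e^2)) ^ (1/(2:ℝ)) := ENNReal.rpow_le_rpow hen (by norm_num)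
      _ = ENNReal.ofReal e := by
          rw [ENNReal.ofReal_rpow_of_nonneg (by positivity) (by norm_num)]
          congr 1
          rw [← Real.sqrt_eq_rpow, Real.sqrt_sq he]
  have h3 : (volume (Ioc a c)) ^ (1/(2:ℝ)) = ENNReal.ofReal (Real.sqrt (c - a)) := by
    rw [Real.volume_Ioc, ENNReal.ofReal_rpow_of_nonneg (by linarith) (by norm_num),
      ← Real.sqrt_eq_rpow]
  rw [h3]
  calc (∫⁻ (a_1 : ℝ) in Ioc a c, Q a_1 ^ (2:ℕ)) ^ (1/(2:ℝ)) * ENNReal.ofReal (Real.sqrt (c - a))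
      ≤ ENNReal.ofReal e * ENNReal.ofReal (Real.sqrt (c - a)) := mul_le_mul_left h1 _
    _ = ENNReal.ofReal (e * Real.sqrt (c - a)) := (ENNReal.ofReal_mul he).symm


variable {d : ℕ}
local notation "E" => EuclideanSpace ℝ (Fin d)

lemma lemA (τ : ℝ) (g f : ℝ → E) (M L e : ℝ)
    (hM : 0 ≤ M) (hL : 0 ≤ L) (he : 0 ≤ e)
    (hgi : IntegrableOn g (Ioc 0 τ))
    (hfc : ContinuousOn f (Icc 0 τ))
    (hfM : ∀ u ∈ Icc 0 τ, ‖f u‖ ≤ M)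
    (hfLip : ∀ u ∈ Icc 0 τ, ∀ v ∈ Icc 0 τ,
      ‖f u - f v‖ ≤ L * ‖(∫ w in (0:ℝ)..u, g w) - (∫ w in (0:ℝ)..v, g w)‖)
    (hen : ∫⁻ u in Ioc 0 τ, (ENNReal.ofReal ‖g u - f u‖)^2 ≤ ENNReal.ofReal (e^2)) :
    ∀ t t', 0 ≤ t → t ≤ t' → t' ≤ τ →
      ‖∫ w in t..t', g w‖ ≤ M*(t'-t) + e*Real.sqrt (t'-t) ∧
      ‖(∫ w in t..t', g w) - (t'-t) • f t‖
        ≤ e*Real.sqrt (t'-t) + L*(M*(t'-t)+e*Real.sqrt (t'-t))*(t'-t) := by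
  -- basic integrabilities
  have hIccsub : ∀ {t t' : ℝ}, 0 ≤ t → t' ≤ τ → Icc t t' ⊆ Icc 0 τ :=
    fun ht ht' => Icc_subset_Icc ht ht'
  have hdiff : ∀ t t', 0 ≤ t → t ≤ t' → t' ≤ τ →
      ‖∫ w in t..t', (g w - f w)‖ ≤ e * Real.sqrt (t'-t) := by
    intro t t' ht htt' ht'
    have hIoc : Ioc t t' ⊆ Ioc 0 τ := Ioc_subset_Ioc ht ht'
    have hgi' : IntegrableOn g (Ioc t t') := hgi.mono_set hIoc
    have hfi : IntegrableOn f (Ioc t t') :=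
      ((hfc.mono (hIccsub ht ht')).integrableOn_Icc).mono_set Ioc_subset_Icc_self
    have hQm : AEMeasurable (fun u => ENNReal.ofReal ‖g u - f u‖)
        (volume.restrict (Ioc t t')) :=
      ENNReal.measurable_ofReal.comp_aemeasurable
        ((hgi'.sub hfi).aestronglyMeasurable.norm.aemeasurable)
    have hQ2 : ∫⁻ u in Ioc t t', (ENNReal.ofReal ‖g u - f u‖)^2 ≤ ENNReal.ofReal (e^2) :=
      le_trans (lintegral_mono_set hIoc) hen
    have key := windowCS htt' hQm he hQ2
    rw [intervalIntegral.integral_of_le htt']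
    refine le_trans (norm_integral_le_lintegral_norm _) ?_
    calc (∫⁻ u in Ioc t t', ENNReal.ofReal ‖g u - f u‖).toReal
        ≤ (ENNReal.ofReal (e * Real.sqrt (t'-t))).toReal :=
          ENNReal.toReal_mono ENNReal.ofReal_ne_top key
      _ = e * Real.sqrt (t'-t) := ENNReal.toReal_ofReal (by positivity)
  have A1 : ∀ t t', 0 ≤ t → t ≤ t' → t' ≤ τ →
      ‖∫ w in t..t', g w‖ ≤ M*(t'-t) + e*Real.sqrt (t'-t) := by
    intro t t' ht htt' ht'
    have hIoc : Ioc t t' ⊆ Ioc 0 τ := Ioc_subset_Ioc ht ht'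
    have hgI : IntervalIntegrable g volume t t' :=
      (intervalIntegrable_iff_integrableOn_Ioc_of_le htt').2 (hgi.mono_set hIoc)
    have hfI : IntervalIntegrable f volume t t' :=
      (hfc.mono (hIccsub ht ht')).intervalIntegrable_of_Icc htt'
    have hsplit : (∫ w in t..t', g w) = (∫ w in t..t', (g w - f w)) + ∫ w in t..t', f w := by
      rw [intervalIntegral.integral_sub hgI hfI]; abel
    rw [hsplit]
    have hfb : ‖∫ w in t..t', f w‖ ≤ M * |t' - t| := by
      apply intervalIntegral.norm_integral_le_of_norm_le_const
      intro x hx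
      rw [uIoc_of_le htt'] at hx
      exact hfM x ⟨le_trans ht hx.1.le, le_trans hx.2 ht'⟩
    calc ‖(∫ w in t..t', (g w - f w)) + ∫ w in t..t', f w‖
        ≤ ‖∫ w in t..t', (g w - f w)‖ + ‖∫ w in t..t', f w‖ := norm_add_le _ _
      _ ≤ e * Real.sqrt (t'-t) + M * |t' - t| := by
          exact add_le_add (hdiff t t' ht htt' ht') hfb
      _ = M*(t'-t) + e*Real.sqrt (t'-t) := by rw [abs_of_nonneg (by linarith)]; ring
  intro t t' ht htt' ht'
  refine ⟨A1 t t' ht htt' ht', ?_⟩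
  have hIoc : Ioc t t' ⊆ Ioc 0 τ := Ioc_subset_Ioc ht ht'
  have hgI : IntervalIntegrable g volume t t' :=
    (intervalIntegrable_iff_integrableOn_Ioc_of_le htt').2 (hgi.mono_set hIoc)
  have hfI : IntervalIntegrable f volume t t' :=
    (hfc.mono (hIccsub ht ht')).intervalIntegrable_of_Icc htt'
  have hsplit : (∫ w in t..t', g w) - (t'-t) • f t
      = (∫ w in t..t', (g w - f w)) + ∫ w in t..t', (f w - f t) := by
    rw [intervalIntegral.integral_sub hgI hfI,
      intervalIntegral.integral_sub hfI (intervalIntegrable_const),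
      intervalIntegral.integral_const]
    abel
  rw [hsplit]
  have hfb : ‖∫ w in t..t', (f w - f t)‖ ≤ (L*(M*(t'-t)+e*Real.sqrt (t'-t))) * |t' - t| := by
    apply intervalIntegral.norm_integral_le_of_norm_le_const
    intro u hu
    rw [uIoc_of_le htt'] at hu
    have hu1 : 0 ≤ u := le_trans ht hu.1.le
    have hu2 : u ≤ τ := le_trans hu.2 ht'
    have huI : u ∈ Icc 0 τ := ⟨hu1, hu2⟩
    have htI : t ∈ Icc 0 τ := ⟨ht, le_trans htt' ht'⟩
    have hlip := hfLip u huI t htI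
    have hkey : (∫ w in (0:ℝ)..u, g w) - ∫ w in (0:ℝ)..t, g w = ∫ w in t..u, g w := by
      apply intervalIntegral.integral_interval_sub_left
      · exact (intervalIntegrable_iff_integrableOn_Ioc_of_le hu1).2
          (hgi.mono_set (Ioc_subset_Ioc le_rfl hu2))
      · exact (intervalIntegrable_iff_integrableOn_Ioc_of_le ht).2
          (hgi.mono_set (Ioc_subset_Ioc le_rfl (le_trans hu.1.le hu2)))
    rw [hkey] at hlip
    have hA1u := A1 t u ht hu.1.le hu2
    have hmono : M*(u-t) + e*Real.sqrt (u-t) ≤ M*(t'-t) + e*Real.sqrt (t'-t) := by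
      have h1 : Real.sqrt (u-t) ≤ Real.sqrt (t'-t) := Real.sqrt_le_sqrt (by linarith [hu.2])
      have h2 : u - t ≤ t' - t := by linarith [hu.2]
      nlinarith
    calc ‖f u - f t‖ ≤ L * ‖∫ w in t..u, g w‖ := hlip
      _ ≤ L * (M*(t'-t)+e*Real.sqrt (t'-t)) := by
          apply mul_le_mul_of_nonneg_left (le_trans hA1u hmono) hL
  calc ‖(∫ w in t..t', (g w - f w)) + ∫ w in t..t', (f w - f t)‖
      ≤ ‖∫ w in t..t', (g w - f w)‖ + ‖∫ w in t..t', (f w - f t)‖ := norm_add_le _ _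
    _ ≤ e * Real.sqrt (t'-t) + (L*(M*(t'-t)+e*Real.sqrt (t'-t))) * |t' - t| :=
        add_le_add (hdiff t t' ht htt' ht') hfb
    _ = e*Real.sqrt (t'-t) + L*(M*(t'-t)+e*Real.sqrt (t'-t))*(t'-t) := by
        rw [abs_of_nonneg (by linarith)]


set_option maxHeartbeats 1000000 in
lemma keyLemma
    (b : ℝ → E → E)
    (hLipX : ∀ R > (0:ℝ), ∀ x : E, ∃ K ≥ (0:ℝ),
      ∀ t ≥ (0:ℝ), ∀ y₁ ∈ Metric.closedBall x R, ∀ y₂ ∈ Metric.closedBall x R,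
        ‖b t y₁ - b t y₂‖ ≤ K * ‖y₁ - y₂‖)
    (hLipT : ∀ R > (0:ℝ), ∀ x : E, ∃ κ ≥ (0:ℝ),
      ∀ s ≥ (0:ℝ), ∀ t ≥ (0:ℝ), ∀ y ∈ Metric.closedBall x R,
        ‖b t y - b s y‖ ≤ κ * |t - s|)
    (xm : E) (Am : Set E)
    (hAm : ∀ s ≥ (0:ℝ), Am = {y | ∀ φ : ℝ → E,
        (∀ t ∈ Ici (0:ℝ), HasDerivWithinAt φ (b s (φ t)) (Ici (0:ℝ)) t) → φ 0 = y →
        Tendsto φ atTop (𝓝 xm)})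
    (K : Set E) (hKc : IsCompact K) (hK : K ⊆ Am \ {xm}) :
    ∃ τ : ℝ, 0 < τ ∧ ∃ ε : ℝ, 0 < ε ∧ ∀ s ∈ Icc (0:ℝ) 1, ∀ (x₀ : E) (g : ℝ → E),
      MemLp g 2 (volume.restrict (Ioc (0:ℝ) τ)) →
      (∀ t ∈ Icc (0:ℝ) τ, x₀ + ∫ u in (0:ℝ)..t, g u ∈ K) →
      ENNReal.ofReal ε ≤ ∫⁻ t in Ioc (0:ℝ) τ,
        ENNReal.ofReal ((1/2) * ‖g t - b s (x₀ + ∫ u in (0:ℝ)..t, g u)‖^2) := by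
  by_contra hcon
  push_neg at hcon
  -- counterexample sequences
  have H : ∀ n : ℕ, ∃ s ∈ Icc (0:ℝ) 1, ∃ (x₀ : E) (g : ℝ → E),
      MemLp g 2 (volume.restrict (Ioc (0:ℝ) ((n:ℝ)+1))) ∧
      (∀ t ∈ Icc (0:ℝ) ((n:ℝ)+1), x₀ + ∫ u in (0:ℝ)..t, g u ∈ K) ∧
      (∫⁻ t in Ioc (0:ℝ) ((n:ℝ)+1),
        ENNReal.ofReal ((1/2) * ‖g t - b s (x₀ + ∫ u in (0:ℝ)..t, g u)‖^2))
        < ENNReal.ofReal (1/((n:ℝ)+1)) := by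
    intro n
    have h1 : (0:ℝ) < (n:ℝ)+1 := by positivity
    have h2 : (0:ℝ) < 1/((n:ℝ)+1) := by positivity
    exact hcon ((n:ℝ)+1) h1 (1/((n:ℝ)+1)) h2
  choose s hsI x g hg hKmem hlt using H
  -- constants
  obtain ⟨R, hR1, hKR⟩ : ∃ R : ℝ, 0 < R ∧ K ⊆ Metric.closedBall (0:E) R := by
    obtain ⟨r, hKr⟩ := hKc.isBounded.subset_closedBall 0
    exact ⟨max r 1, lt_of_lt_of_le one_pos (le_max_right _ _),
      hKr.trans (Metric.closedBall_subset_closedBall (le_max_left _ _))⟩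
  obtain ⟨L, hL0, hLx⟩ := hLipX R hR1 0
  obtain ⟨κ, hκ0, hκ⟩ := hLipT R hR1 0
  obtain ⟨M, hM0, hMdef⟩ : ∃ M : ℝ, 0 ≤ M ∧ M = L*R + κ + ‖b 0 0‖ :=
    ⟨L*R + κ + ‖b 0 0‖, by positivity, rfl⟩
  have h0ball : (0:E) ∈ Metric.closedBall (0:E) R := by
    simp [Metric.mem_closedBall, hR1.le]
  have hbM : ∀ σ ∈ Icc (0:ℝ) 1, ∀ y ∈ Metric.closedBall (0:E) R, ‖b σ y‖ ≤ M := by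
    intro σ hσ y hy
    have h1 : ‖b σ y - b σ 0‖ ≤ L * ‖y - 0‖ := hLx σ hσ.1 y hy 0 h0ball
    have h2 : ‖b σ 0 - b 0 0‖ ≤ κ * |σ - 0| := hκ 0 le_rfl σ hσ.1 0 h0ball
    have hyR : ‖y‖ ≤ R := by simpa [Metric.mem_closedBall, dist_eq_norm] using hy
    have h3 : ‖b σ y‖ ≤ ‖b σ y - b σ 0‖ + ‖b σ 0 - b 0 0‖ + ‖b 0 0‖ := by
      calc ‖b σ y‖ = ‖(b σ y - b σ 0) + (b σ 0 - b 0 0) + b 0 0‖ := by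
            rw [sub_add_sub_cancel, sub_add_cancel]
        _ ≤ _ := by
            refine (norm_add_le _ _).trans ?_
            exact add_le_add (norm_add_le _ _) le_rfl
    have habs : |σ - 0| ≤ 1 := by rw [sub_zero, abs_of_nonneg hσ.1]; exact hσ.2
    have h5 : ‖y - 0‖ ≤ R := by simpa using hyR
    rw [hMdef]
    nlinarith [mul_le_mul_of_nonneg_left habs hκ0, mul_le_mul_of_nonneg_left h5 hL0]
  have hbcont : ∀ σ ∈ Icc (0:ℝ) 1, ContinuousOn (b σ) (Metric.closedBall (0:E) R) := by
    intro σ hσ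
    refine LipschitzOnWith.continuousOn (K := Real.toNNReal L) ?_
    refine LipschitzOnWith.of_dist_le_mul ?_
    intro y1 hy1 y2 hy2
    rw [dist_eq_norm, dist_eq_norm]
    have := hLx σ hσ.1 y1 hy1 y2 hy2
    refine this.trans ?_
    gcongr
    exact Real.le_coe_toNNReal L
  -- per-n path and estimates
  set ψ : ℕ → ℝ → E := fun n t => x n + ∫ u in (0:ℝ)..t, g n u with hψ
  have hfin : ∀ n : ℕ, IsFiniteMeasure (volume.restrict (Ioc (0:ℝ) ((n:ℝ)+1))) := by
    intro n
    constructor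
    rw [Measure.restrict_apply_univ]
    exact measure_Ioc_lt_top
  have hgint : ∀ n : ℕ, IntegrableOn (g n) (Ioc (0:ℝ) ((n:ℝ)+1)) := by
    intro n
    haveI := hfin n
    exact (hg n).integrable (by norm_num)
  have hψcont : ∀ n : ℕ, ContinuousOn (ψ n) (Icc (0:ℝ) ((n:ℝ)+1)) := by
    intro n
    have hInt : IntegrableOn (g n) (Icc (0:ℝ) ((n:ℝ)+1)) :=
      (integrableOn_Icc_iff_integrableOn_Ioc).2 (hgint n)
    have hcp := intervalIntegral.continuousOn_primitive (f := g n) (μ := volume) hInt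
    refine continuousOn_const.add (hcp.congr ?_)
    intro t ht
    exact intervalIntegral.integral_of_le ht.1
  have hψK : ∀ n : ℕ, ∀ t ∈ Icc (0:ℝ) ((n:ℝ)+1), ψ n t ∈ K := hKmem
  have hψdiff : ∀ (n : ℕ) (t t' : ℝ), 0 ≤ t → t' ≤ (n:ℝ)+1 → t ≤ t' →
      ψ n t' - ψ n t = ∫ w in t..t', g n w := by
    intro n t t' ht ht' htt'
    have h1 : IntervalIntegrable (g n) volume 0 t :=
      (intervalIntegrable_iff_integrableOn_Ioc_of_le ht).2
        ((hgint n).mono_set (Ioc_subset_Ioc le_rfl (le_trans htt' ht')))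
    have h2 : IntervalIntegrable (g n) volume 0 t' :=
      (intervalIntegrable_iff_integrableOn_Ioc_of_le (le_trans ht htt')).2
        ((hgint n).mono_set (Ioc_subset_Ioc le_rfl ht'))
    simp only [hψ, add_sub_add_left_eq_sub]
    exact intervalIntegral.integral_interval_sub_left h2 h1
  set e : ℕ → ℝ := fun n => Real.sqrt (2/((n:ℝ)+1)) with heq
  have he0 : ∀ n, 0 ≤ e n := fun n => Real.sqrt_nonneg _
  have hen : ∀ n : ℕ, ∫⁻ u in Ioc (0:ℝ) ((n:ℝ)+1),
      (ENNReal.ofReal ‖g n u - b (s n) (ψ n u)‖)^2 ≤ ENNReal.ofReal ((e n)^2) := by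
    intro n
    have h2 : ENNReal.ofReal (1/2) * ∫⁻ u in Ioc (0:ℝ) ((n:ℝ)+1),
        (ENNReal.ofReal ‖g n u - b (s n) (ψ n u)‖)^2 ≤ ENNReal.ofReal (1/((n:ℝ)+1)) := by
      rw [← lintegral_const_mul' _ _ ENNReal.ofReal_ne_top]
      refine le_trans (le_of_eq ?_) (hlt n).le
      apply lintegral_congr
      intro u
      rw [ENNReal.ofReal_mul (by norm_num), ENNReal.ofReal_pow (norm_nonneg _)]
    have h3 : (2:ℝ≥0∞) * (ENNReal.ofReal (1/2) * ∫⁻ u in Ioc (0:ℝ) ((n:ℝ)+1),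
        (ENNReal.ofReal ‖g n u - b (s n) (ψ n u)‖)^2)
        = ∫⁻ u in Ioc (0:ℝ) ((n:ℝ)+1), (ENNReal.ofReal ‖g n u - b (s n) (ψ n u)‖)^2 := by
      rw [← mul_assoc]
      have : (2:ℝ≥0∞) * ENNReal.ofReal (1/2) = 1 := by
        rw [show (2:ℝ≥0∞) = ENNReal.ofReal 2 by simp, ← ENNReal.ofReal_mul (by norm_num)]
        norm_num
      rw [this, one_mul]
    calc ∫⁻ u in Ioc (0:ℝ) ((n:ℝ)+1), (ENNReal.ofReal ‖g n u - b (s n) (ψ n u)‖)^2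
        = (2:ℝ≥0∞) * (ENNReal.ofReal (1/2) * ∫⁻ u in Ioc (0:ℝ) ((n:ℝ)+1),
            (ENNReal.ofReal ‖g n u - b (s n) (ψ n u)‖)^2) := h3.symm
      _ ≤ (2:ℝ≥0∞) * ENNReal.ofReal (1/((n:ℝ)+1)) := by
          exact mul_le_mul_right h2 _
      _ = ENNReal.ofReal ((e n)^2) := by
          rw [show (2:ℝ≥0∞) = ENNReal.ofReal 2 by simp, ← ENNReal.ofReal_mul (by norm_num),
            heq]
          congr 1
          rw [Real.sq_sqrt (by positivity)]
          ring
  have hAB : ∀ (n : ℕ) (t t' : ℝ), 0 ≤ t → t ≤ t' → t' ≤ (n:ℝ)+1 →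
      ‖ψ n t' - ψ n t‖ ≤ M*(t'-t) + e n * Real.sqrt (t'-t) ∧
      ‖ψ n t' - ψ n t - (t'-t) • b (s n) (ψ n t)‖
        ≤ e n * Real.sqrt (t'-t) + L*(M*(t'-t)+ e n * Real.sqrt (t'-t))*(t'-t) := by
    intro n t t' ht htt' ht'
    have hfc : ContinuousOn (fun u => b (s n) (ψ n u)) (Icc (0:ℝ) ((n:ℝ)+1)) :=
      (hbcont (s n) (hsI n)).comp (hψcont n) (fun u hu => hKR (hψK n u hu))
    have hfM : ∀ u ∈ Icc (0:ℝ) ((n:ℝ)+1), ‖b (s n) (ψ n u)‖ ≤ M :=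
      fun u hu => hbM (s n) (hsI n) _ (hKR (hψK n u hu))
    have hfLip : ∀ u ∈ Icc (0:ℝ) ((n:ℝ)+1), ∀ v ∈ Icc (0:ℝ) ((n:ℝ)+1),
        ‖b (s n) (ψ n u) - b (s n) (ψ n v)‖
          ≤ L * ‖(∫ w in (0:ℝ)..u, g n w) - (∫ w in (0:ℝ)..v, g n w)‖ := by
      intro u hu v hv
      have := hLx (s n) (hsI n).1 (ψ n u) (hKR (hψK n u hu)) (ψ n v) (hKR (hψK n v hv))
      simpa only [hψ, add_sub_add_left_eq_sub] using this
    have := lemA ((n:ℝ)+1) (g n) (fun u => b (s n) (ψ n u)) M L (e n) hM0 hL0 (he0 n)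
      (hgint n) hfc hfM hfLip (hen n) t t' ht htt' ht'
    rw [hψdiff n t t' ht ht' htt']
    exact this
  -- ultrafilter limits
  set F : Ultrafilter ℕ := Ultrafilter.of atTop with hF
  have hFle : (F : Filter ℕ) ≤ atTop := Ultrafilter.of_le _
  obtain ⟨s', hs'I, hs'conv⟩ :=
    isCompact_Icc.ultrafilter_le_nhds (F.map s) (by
      rw [Ultrafilter.coe_map, le_principal_iff, mem_map]
      exact univ_mem' hsI)
  rw [Ultrafilter.coe_map] at hs'conv
  have hs'c : Tendsto s (F : Filter ℕ) (𝓝 s') := hs'conv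
  have Hpt : ∀ t : ℝ, ∃ y ∈ K, Tendsto (fun n => ψ n (max t 0)) (F : Filter ℕ) (𝓝 y) := by
    intro t
    have hmemF : ∀ᶠ n in (F : Filter ℕ), ψ n (max t 0) ∈ K := by
      refine hFle (eventually_atTop.2 ⟨⌈max t 0⌉₊, fun n hn => ?_⟩)
      refine hψK n (max t 0) ⟨le_max_right _ _, ?_⟩
      calc max t 0 ≤ (⌈max t 0⌉₊ : ℝ) := Nat.le_ceil _
        _ ≤ (n:ℝ) := by exact_mod_cast hn
        _ ≤ (n:ℝ)+1 := by linarith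
    obtain ⟨y, hyK, hy⟩ := hKc.ultrafilter_le_nhds (F.map (fun n => ψ n (max t 0))) (by
      rw [Ultrafilter.coe_map, le_principal_iff, mem_map]
      exact hmemF)
    rw [Ultrafilter.coe_map] at hy
    exact ⟨y, hyK, hy⟩
  choose ψ' hψ'K hψ'conv using Hpt
  have hψc : ∀ t : ℝ, 0 ≤ t → Tendsto (fun n => ψ n t) (F : Filter ℕ) (𝓝 (ψ' t)) := by
    intro t ht
    have := hψ'conv t
    rwa [max_eq_left ht] at this
  have hψ'ball : ∀ t : ℝ, ψ' t ∈ Metric.closedBall (0:E) R := fun t => hKR (hψ'K t)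
  -- limit of the drift terms
  have heF : Tendsto e (F : Filter ℕ) (𝓝 0) := by
    have h1 : Tendsto (fun n : ℕ => 2/((n:ℝ)+1)) atTop (𝓝 0) :=
      Tendsto.div_atTop tendsto_const_nhds
        (tendsto_atTop_add_const_right _ 1 tendsto_natCast_atTop_atTop)
    have h2 : Tendsto e atTop (𝓝 0) := by
      rw [heq]
      have h3 := (Real.continuous_sqrt.tendsto 0).comp h1
      rw [Real.sqrt_zero] at h3
      exact h3
    exact h2.mono_left hFle
  have hbtend : ∀ t : ℝ, 0 ≤ t →
      Tendsto (fun n => b (s n) (ψ n t)) (F : Filter ℕ) (𝓝 (b s' (ψ' t))) := by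
    intro t ht
    rw [tendsto_iff_norm_sub_tendsto_zero]
    have hev : ∀ᶠ n in (F : Filter ℕ), ψ n t ∈ K := by
      refine hFle (eventually_atTop.2 ⟨⌈t⌉₊, fun n hn => ?_⟩)
      refine hψK n t ⟨ht, ?_⟩
      calc t ≤ (⌈t⌉₊ : ℝ) := Nat.le_ceil _
        _ ≤ (n:ℝ) := by exact_mod_cast hn
        _ ≤ (n:ℝ)+1 := by linarith
    have hub : ∀ᶠ n in (F : Filter ℕ), ‖b (s n) (ψ n t) - b s' (ψ' t)‖
        ≤ L * ‖ψ n t - ψ' t‖ + κ * |s n - s'| := by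
      filter_upwards [hev] with n hnK
      have h1 : ‖b (s n) (ψ n t) - b (s n) (ψ' t)‖ ≤ L * ‖ψ n t - ψ' t‖ :=
        hLx (s n) (hsI n).1 _ (hKR hnK) _ (hψ'ball t)
      have h2 : ‖b (s n) (ψ' t) - b s' (ψ' t)‖ ≤ κ * |s n - s'| :=
        hκ s' hs'I.1 (s n) (hsI n).1 (ψ' t) (hψ'ball t)
      calc ‖b (s n) (ψ n t) - b s' (ψ' t)‖
          = ‖(b (s n) (ψ n t) - b (s n) (ψ' t)) + (b (s n) (ψ' t) - b s' (ψ' t))‖ := by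
            rw [sub_add_sub_cancel]
        _ ≤ ‖b (s n) (ψ n t) - b (s n) (ψ' t)‖ + ‖b (s n) (ψ' t) - b s' (ψ' t)‖ :=
            norm_add_le _ _
        _ ≤ L * ‖ψ n t - ψ' t‖ + κ * |s n - s'| := add_le_add h1 h2
    have hrhs : Tendsto (fun n => L * ‖ψ n t - ψ' t‖ + κ * |s n - s'|)
        (F : Filter ℕ) (𝓝 0) := by
      have ha : Tendsto (fun n => ‖ψ n t - ψ' t‖) (F : Filter ℕ) (𝓝 0) := by
        have := tendsto_iff_norm_sub_tendsto_zero.1 (hψc t ht)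
        exact this
      have hb2 : Tendsto (fun n => |s n - s'|) (F : Filter ℕ) (𝓝 0) := by
        have := tendsto_iff_norm_sub_tendsto_zero.1 hs'c
        simpa [Real.norm_eq_abs] using this
      have := (ha.const_mul L).add (hb2.const_mul κ)
      simpa using this
    exact squeeze_zero' (Eventually.of_forall (fun n => norm_nonneg _)) hub hrhs
  -- limit estimates
  have hP3 : ∀ t t' : ℝ, 0 ≤ t → t ≤ t' →
      ‖ψ' t' - ψ' t‖ ≤ M*(t'-t) + Real.sqrt 2 * Real.sqrt (t'-t) := by
    intro t t' ht htt'
    have hA : Tendsto (fun n => ‖ψ n t' - ψ n t‖) (F : Filter ℕ) (𝓝 ‖ψ' t' - ψ' t‖) :=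
      ((hψc t' (le_trans ht htt')).sub (hψc t ht)).norm
    refine le_of_tendsto hA ?_
    refine hFle (eventually_atTop.2 ⟨⌈t'⌉₊, fun n hn => ?_⟩)
    have ht'n : t' ≤ (n:ℝ)+1 := by
      calc t' ≤ (⌈t'⌉₊ : ℝ) := Nat.le_ceil _
        _ ≤ (n:ℝ) := by exact_mod_cast hn
        _ ≤ (n:ℝ)+1 := by linarith
    have h1 := (hAB n t t' ht htt' ht'n).1
    have h2 : e n ≤ Real.sqrt 2 := by
      rw [heq]
      refine Real.sqrt_le_sqrt ?_
      rw [div_le_iff₀ (by positivity)]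
      nlinarith [Nat.cast_nonneg (α := ℝ) n]
    have h3 : e n * Real.sqrt (t'-t) ≤ Real.sqrt 2 * Real.sqrt (t'-t) :=
      mul_le_mul_of_nonneg_right h2 (Real.sqrt_nonneg _)
    linarith
  have hP2 : ∀ t t' : ℝ, 0 ≤ t → t ≤ t' →
      ‖ψ' t' - ψ' t - (t'-t) • b s' (ψ' t)‖ ≤ L*M*(t'-t)^2 := by
    intro t t' ht htt'
    have hA : Tendsto (fun n => ‖ψ n t' - ψ n t - (t'-t) • b (s n) (ψ n t)‖)
        (F : Filter ℕ) (𝓝 ‖ψ' t' - ψ' t - (t'-t) • b s' (ψ' t)‖) :=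
      (((hψc t' (le_trans ht htt')).sub (hψc t ht)).sub
        ((hbtend t ht).const_smul (t'-t))).norm
    have hB : Tendsto (fun n => e n * Real.sqrt (t'-t)
        + L*(M*(t'-t) + e n * Real.sqrt (t'-t))*(t'-t)) (F : Filter ℕ)
        (𝓝 (0 * Real.sqrt (t'-t) + L*(M*(t'-t) + 0 * Real.sqrt (t'-t))*(t'-t))) := by
      exact ((heF.mul_const _).add
        ((((heF.mul_const (Real.sqrt (t'-t))).const_add (M*(t'-t))).const_mul L).mul_const
          (t'-t)))
    have hle : ∀ᶠ n in (F : Filter ℕ),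
        ‖ψ n t' - ψ n t - (t'-t) • b (s n) (ψ n t)‖
          ≤ e n * Real.sqrt (t'-t) + L*(M*(t'-t) + e n * Real.sqrt (t'-t))*(t'-t) := by
      refine hFle (eventually_atTop.2 ⟨⌈t'⌉₊, fun n hn => ?_⟩)
      have ht'n : t' ≤ (n:ℝ)+1 := by
        calc t' ≤ (⌈t'⌉₊ : ℝ) := Nat.le_ceil _
          _ ≤ (n:ℝ) := by exact_mod_cast hn
          _ ≤ (n:ℝ)+1 := by linarith
      exact (hAB n t t' ht htt' ht'n).2
    have := le_of_tendsto_of_tendsto hA hB hle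
    calc ‖ψ' t' - ψ' t - (t'-t) • b s' (ψ' t)‖
        ≤ 0 * Real.sqrt (t'-t) + L*(M*(t'-t) + 0 * Real.sqrt (t'-t))*(t'-t) := this
      _ = L*M*(t'-t)^2 := by ring
  -- derivative of the limit path
  obtain ⟨C2, hC2p, hC2a, hC2b⟩ : ∃ C2 : ℝ, 0 < C2 ∧ L*M ≤ C2 ∧ 2*(L*M) + Real.sqrt 2 * L ≤ C2 := by
    refine ⟨2*(L*M) + Real.sqrt 2 * L + 1, by positivity, ?_, by linarith⟩
    nlinarith [Real.sqrt_nonneg 2, mul_nonneg hL0 hM0]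
  have hloc : ∀ t ≥ (0:ℝ), ∀ y ∈ Ici (0:ℝ), |y - t| ≤ 1 →
      ‖ψ' y - ψ' t - (y - t) • b s' (ψ' t)‖ ≤ C2 * (|y - t| * Real.sqrt |y - t|) := by
    intro t ht y hy hyt
    rcases le_total t y with hc | hc
    · have h1 := hP2 t y ht hc
      have habs : |y - t| = y - t := abs_of_nonneg (by linarith)
      have hsq : (y-t)^2 ≤ (y-t) * Real.sqrt (y-t) := by
        have h2 : y - t ≤ Real.sqrt (y-t) := by
          rw [habs] at hyt
          exact (Real.le_sqrt (by linarith) (by linarith)).2 (by nlinarith)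
        nlinarith [Real.sqrt_nonneg (y-t)]
      rw [habs]
      calc ‖ψ' y - ψ' t - (y - t) • b s' (ψ' t)‖ ≤ L*M*(y-t)^2 := h1
        _ ≤ L*M*((y-t) * Real.sqrt (y-t)) := by
            exact mul_le_mul_of_nonneg_left hsq (by positivity)
        _ ≤ C2 * ((y-t) * Real.sqrt (y-t)) := by
            refine mul_le_mul_of_nonneg_right hC2a ?_
            exact mul_nonneg (by linarith) (Real.sqrt_nonneg _)
    · -- backward case
      have h1 := hP2 y t hy hc
      have h3 := hP3 y t hy hc
      have habs : |y - t| = t - y := by rw [abs_sub_comm]; exact abs_of_nonneg (by linarith)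
      have hbd : ‖b s' (ψ' y) - b s' (ψ' t)‖ ≤ L * ‖ψ' y - ψ' t‖ :=
        hLx s' hs'I.1 _ (hψ'ball y) _ (hψ'ball t)
      have hdecomp : ψ' y - ψ' t - (y - t) • b s' (ψ' t)
          = -(ψ' t - ψ' y - (t-y) • b s' (ψ' y)) - (t-y) • (b s' (ψ' y) - b s' (ψ' t)) := by
        module
      have hsq : t - y ≤ Real.sqrt (t-y) := by
        rw [habs] at hyt
        exact (Real.le_sqrt (by linarith) (by linarith)).2 (by nlinarith)
      have hnrm : ‖ψ' y - ψ' t‖ ≤ M*(t-y) + Real.sqrt 2 * Real.sqrt (t-y) := by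
        rw [norm_sub_rev]; exact h3
      rw [hdecomp, habs]
      calc ‖-(ψ' t - ψ' y - (t-y) • b s' (ψ' y)) - (t-y) • (b s' (ψ' y) - b s' (ψ' t))‖
          ≤ ‖-(ψ' t - ψ' y - (t-y) • b s' (ψ' y))‖ + ‖(t-y) • (b s' (ψ' y) - b s' (ψ' t))‖ :=
            norm_sub_le _ _
        _ = ‖ψ' t - ψ' y - (t-y) • b s' (ψ' y)‖ + |t-y| * ‖b s' (ψ' y) - b s' (ψ' t)‖ := by
            rw [norm_neg, norm_smul, Real.norm_eq_abs]
        _ ≤ L*M*(t-y)^2 + (t-y) * (L * (M*(t-y) + Real.sqrt 2 * Real.sqrt (t-y))) := by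
            refine add_le_add h1 ?_
            rw [abs_of_nonneg (by linarith : (0:ℝ) ≤ t - y)]
            refine mul_le_mul_of_nonneg_left ?_ (by linarith)
            exact hbd.trans (mul_le_mul_of_nonneg_left hnrm hL0)
        _ ≤ C2 * ((t-y) * Real.sqrt (t-y)) := by
            have hs0 : 0 ≤ Real.sqrt (t-y) := Real.sqrt_nonneg _
            have hty : 0 ≤ t - y := by linarith
            have key : L*M*(t-y)^2 + (t-y) * (L * (M*(t-y) + Real.sqrt 2 * Real.sqrt (t-y)))
                ≤ (2*(L*M) + Real.sqrt 2 * L) * ((t-y) * Real.sqrt (t-y)) := by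
              nlinarith [mul_le_mul_of_nonneg_left hsq (mul_nonneg (mul_nonneg hL0 hM0) hty),
                Real.sqrt_nonneg 2, mul_nonneg hty hs0,
                mul_le_mul_of_nonneg_left hsq (mul_nonneg hL0 hM0)]
            refine key.trans ?_
            exact mul_le_mul_of_nonneg_right hC2b (mul_nonneg hty hs0)
  have hderiv : ∀ t ∈ Ici (0:ℝ), HasDerivWithinAt ψ' (b s' (ψ' t)) (Ici (0:ℝ)) t := by
    intro t ht
    rw [hasDerivWithinAt_iff_isLittleO, Asymptotics.isLittleO_iff]
    intro c hc
    have hδp : (0:ℝ) < min 1 ((c/C2)^2) := lt_min one_pos (by positivity)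
    have hev1 : ∀ᶠ y in 𝓝[Ici (0:ℝ)] t, |y - t| < min 1 ((c/C2)^2) := by
      apply eventually_nhdsWithin_of_eventually_nhds
      refine Metric.eventually_nhds_iff.2 ⟨min 1 ((c/C2)^2), hδp, ?_⟩
      intro y hy
      rwa [Real.dist_eq] at hy
    filter_upwards [hev1, eventually_mem_nhdsWithin] with y hy1 hy2
    have hb1 := hloc t ht y hy2 (le_of_lt (lt_of_lt_of_le hy1 (min_le_left _ _)))
    have hsd : Real.sqrt |y - t| ≤ c / C2 := by
      have h4 : |y-t| ≤ (c/C2)^2 := le_of_lt (lt_of_lt_of_le hy1 (min_le_right _ _))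
      calc Real.sqrt |y-t| ≤ Real.sqrt ((c/C2)^2) := Real.sqrt_le_sqrt h4
        _ = c/C2 := Real.sqrt_sq (by positivity)
    calc ‖ψ' y - ψ' t - (y - t) • b s' (ψ' t)‖
        ≤ C2 * (|y - t| * Real.sqrt |y - t|) := hb1
      _ ≤ C2 * (|y - t| * (c/C2)) := by
          refine mul_le_mul_of_nonneg_left ?_ hC2p.le
          exact mul_le_mul_of_nonneg_left hsd (abs_nonneg _)
      _ = c * |y-t| := by field_simp
      _ = c * ‖y - t‖ := by rw [Real.norm_eq_abs]
  -- contradiction with domain of attraction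
  have hψ'0 : ψ' 0 ∈ Am := (hK (hψ'K 0)).1
  rw [hAm s' hs'I.1] at hψ'0
  have htend := hψ'0 ψ' hderiv rfl
  have hxmK : xm ∈ K :=
    hKc.isClosed.mem_of_tendsto htend (Eventually.of_forall (fun t => hψ'K t))
  exact (hK hxmK).2 rfl


theorem confined_paths_energy_lower_bound' (hd : 1 ≤ d)
    (b : ℝ → E → E)
    (hLipX : ∀ R > (0:ℝ), ∀ x : E, ∃ K ≥ (0:ℝ),
      ∀ t ≥ (0:ℝ), ∀ y₁ ∈ Metric.closedBall x R, ∀ y₂ ∈ Metric.closedBall x R,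
        ‖b t y₁ - b t y₂‖ ≤ K * ‖y₁ - y₂‖)
    (hLipT : ∀ R > (0:ℝ), ∀ x : E, ∃ κ ≥ (0:ℝ),
      ∀ s ≥ (0:ℝ), ∀ t ≥ (0:ℝ), ∀ y ∈ Metric.closedBall x R,
        ‖b t y - b s y‖ ≤ κ * |t - s|)
    (xm : E) (Am : Set E)
    (hAm : ∀ s ≥ (0:ℝ), Am = {y | ∀ φ : ℝ → E,
        (∀ t ∈ Ici (0:ℝ), HasDerivWithinAt φ (b s (φ t)) (Ici (0:ℝ)) t) → φ 0 = y →
        Tendsto φ atTop (𝓝 xm)})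
    (K : Set E) (hKc : IsCompact K) (hK : K ⊆ Am \ {xm}) :
    ∃ T₀ > (0:ℝ), ∃ c > (0:ℝ), ∀ T ≥ T₀, ∀ s ∈ Icc (0:ℝ) 1,
      ∀ φ : ℝ → E, ContinuousOn φ (Icc (0:ℝ) T) →
        (∀ t ∈ Icc (0:ℝ) T, φ t ∈ K) →
        ENNReal.ofReal (c * (T - T₀)) ≤ frozenRate b s T φ := by
  obtain ⟨τ, hτ, ε, hε, hKL⟩ := keyLemma b hLipX hLipT xm Am hAm K hKc hK
  refine ⟨τ, hτ, ε/τ, by positivity, ?_⟩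
  intro T hT σ hσ φ hφc hφK
  rw [frozenRate]
  refine le_iInf₂ ?_
  rintro g ⟨hgmem, hgrep⟩
  set N : ℕ := ⌊T/τ⌋₊ with hN
  have hTpos : 0 < T := lt_of_lt_of_le hτ hT
  have hN1 : 1 ≤ N := by
    rw [hN]
    refine Nat.le_floor ?_
    rw [Nat.cast_one, le_div_iff₀ hτ]
    linarith
  have hNτ : (N:ℝ)*τ ≤ T := by
    have h1 : (N:ℝ) ≤ T/τ := Nat.floor_le (by positivity)
    calc (N:ℝ)*τ ≤ (T/τ)*τ := mul_le_mul_of_nonneg_right h1 hτ.le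
      _ = T := div_mul_cancel₀ _ hτ.ne'
  haveI hfinT : IsFiniteMeasure (volume.restrict (Ioc (0:ℝ) T)) := by
    constructor
    rw [Measure.restrict_apply_univ]
    exact measure_Ioc_lt_top
  have hgi : IntegrableOn g (Ioc (0:ℝ) T) := hgmem.integrable (by norm_num)
  have hgIvl : ∀ c : ℝ, 0 ≤ c → c ≤ T → IntervalIntegrable g volume 0 c := by
    intro c h0 hc
    exact (intervalIntegrable_iff_integrableOn_Ioc_of_le h0).2
      (hgi.mono_set (Ioc_subset_Ioc le_rfl hc))
  -- path translation identity
  have hpath : ∀ a : ℝ, 0 ≤ a → ∀ t ∈ Icc (0:ℝ) τ, a + τ ≤ T →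
      φ a + ∫ u in (0:ℝ)..t, g (u + a) = φ (t + a) := by
    intro a ha t ht haT
    have e1 : (∫ u in (0:ℝ)..t, g (u + a)) = ∫ u in a..(t+a), g u := by
      have := intervalIntegral.integral_comp_add_right (a := (0:ℝ)) (b := t) (f := g) a
      simpa using this
    have e2 : φ (t+a) = φ 0 + ∫ u in (0:ℝ)..(t+a), g u :=
      hgrep (t+a) ⟨by linarith [ht.1], by linarith [ht.2]⟩
    have e3 : φ a = φ 0 + ∫ u in (0:ℝ)..a, g u := hgrep a ⟨ha, by linarith⟩
    have e4 : (∫ u in (0:ℝ)..(t+a), g u) - ∫ u in (0:ℝ)..a, g u = ∫ u in a..(t+a), g u :=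
      intervalIntegral.integral_interval_sub_left
        (hgIvl (t+a) (by linarith [ht.1]) (by linarith [ht.2]))
        (hgIvl a ha (by linarith))
    rw [e1, e3, e2, ← e4]
    abel
  -- window estimate
  have hwindow : ∀ k : ℕ, k < N →
      ENNReal.ofReal ε ≤ ∫⁻ t in Ioc ((k:ℝ)*τ) ((k:ℝ)*τ + τ),
        ENNReal.ofReal ((1/2) * ‖g t - b σ (φ t)‖^2) := by
    intro k hk
    set a : ℝ := (k:ℝ)*τ with ha
    have ha0 : 0 ≤ a := by positivity
    have haT : a + τ ≤ T := by
      have h1 : ((k:ℝ)+1) ≤ (N:ℝ) := by exact_mod_cast Nat.succ_le_of_lt hk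
      calc a + τ = ((k:ℝ)+1)*τ := by ring
        _ ≤ (N:ℝ)*τ := mul_le_mul_of_nonneg_right h1 hτ.le
        _ ≤ T := hNτ
    -- translation setup
    have hemb : MeasurableEmbedding (fun u : ℝ => u + a) :=
      (MeasurableEquiv.addRight a).measurableEmbedding
    have hmp : MeasurePreserving (fun u : ℝ => u + a)
        (volume.restrict (Ioc (0:ℝ) τ)) (volume.restrict (Ioc a (a + τ))) := by
      have h1 := (measurePreserving_add_right volume a).restrict_preimage
        (s := Ioc a (a+τ)) measurableSet_Ioc
      have h2 : (fun x : ℝ => x + a) ⁻¹' (Ioc a (a+τ)) = Ioc 0 τ := by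
        rw [preimage_add_const_Ioc]
        simp
      rwa [h2] at h1
    have hmap : Measure.map (fun u : ℝ => u + a) (volume.restrict (Ioc (0:ℝ) τ))
        = volume.restrict (Ioc a (a + τ)) := hmp.map_eq
    -- Memℒp of shifted function
    have hmem' : MemLp (fun u => g (u + a)) 2 (volume.restrict (Ioc (0:ℝ) τ)) := by
      have h1 : MemLp g 2 (volume.restrict (Ioc a (a+τ))) :=
        hgmem.mono_measure (Measure.restrict_mono (Ioc_subset_Ioc ha0 haT) le_rfl)
      rw [← hmap] at h1
      exact hemb.memLp_map_measure_iff.1 h1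
    -- membership in K
    have hinK : ∀ t ∈ Icc (0:ℝ) τ, φ a + ∫ u in (0:ℝ)..t, g (u + a) ∈ K := by
      intro t ht
      rw [hpath a ha0 t ht haT]
      exact hφK (t + a) ⟨by linarith [ht.1], by linarith [ht.2]⟩
    have hKLk := hKL σ hσ (φ a) (fun u => g (u + a)) hmem' hinK
    -- transform the lintegral
    have hcongr : ∫⁻ t in Ioc (0:ℝ) τ,
        ENNReal.ofReal ((1/2) * ‖g (t + a) - b σ (φ a + ∫ u in (0:ℝ)..t, g (u + a))‖^2)
        = ∫⁻ t in Ioc (0:ℝ) τ,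
        ENNReal.ofReal ((1/2) * ‖g (t + a) - b σ (φ (t + a))‖^2) := by
      refine setLIntegral_congr_fun measurableSet_Ioc ?_
      intro t ht
      dsimp only
      rw [hpath a ha0 t (Ioc_subset_Icc_self ht) haT]
    have htrans : (∫⁻ t in Ioc (0:ℝ) τ,
        ENNReal.ofReal ((1/2) * ‖g (t + a) - b σ (φ (t + a))‖^2))
        = ∫⁻ t in Ioc a (a + τ), ENNReal.ofReal ((1/2) * ‖g t - b σ (φ t)‖^2) := by
      rw [← hmap, hemb.lintegral_map]
    calc ENNReal.ofReal ε ≤ _ := hKLk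
      _ = ∫⁻ t in Ioc a (a + τ), ENNReal.ofReal ((1/2) * ‖g t - b σ (φ t)‖^2) := by
          rw [hcongr, htrans]
  -- sum the windows
  have hsum : ∀ k : ℕ, k ≤ N → ENNReal.ofReal ((k:ℝ)*ε)
      ≤ ∫⁻ t in Ioc (0:ℝ) ((k:ℝ)*τ), ENNReal.ofReal ((1/2) * ‖g t - b σ (φ t)‖^2) := by
    intro k
    induction k with
    | zero => intro _; simp
    | succ k ih =>
        intro hk1
        have hkN : k < N := lt_of_lt_of_le (Nat.lt_succ_self k) hk1
        have hu : Ioc (0:ℝ) (((k:ℕ)+1:ℝ)*τ)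
            = Ioc (0:ℝ) ((k:ℝ)*τ) ∪ Ioc ((k:ℝ)*τ) ((k:ℝ)*τ + τ) := by
          rw [Ioc_union_Ioc_eq_Ioc (by positivity) (by linarith)]
          ring_nf
        have hcast : ((k+1 : ℕ):ℝ) = (k:ℝ) + 1 := by push_cast; ring
        rw [hcast]
        have hgoal : Ioc (0:ℝ) (((k:ℝ)+1)*τ)
            = Ioc (0:ℝ) ((k:ℝ)*τ) ∪ Ioc ((k:ℝ)*τ) ((k:ℝ)*τ + τ) := by
          rw [Ioc_union_Ioc_eq_Ioc (by positivity) (by linarith)]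
          ring_nf
        rw [hgoal, lintegral_union measurableSet_Ioc (Ioc_disjoint_Ioc_of_le le_rfl)]
        have h1 := ih (le_of_lt hkN)
        have h2 := hwindow k hkN
        calc ENNReal.ofReal (((k:ℝ)+1)*ε)
            = ENNReal.ofReal ((k:ℝ)*ε) + ENNReal.ofReal ε := by
              rw [← ENNReal.ofReal_add (by positivity) hε.le]
              ring_nf
          _ ≤ _ := add_le_add h1 h2
  -- conclude
  have hfinal := hsum N le_rfl
  have hTN : T - τ ≤ (N:ℝ)*τ := by
    have := Nat.lt_floor_add_one (T/τ)
    rw [← hN] at this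
    have h2 : T < ((N:ℝ)+1)*τ := by
      rw [show ((N:ℝ)+1)*τ = ((N:ℝ)+1)*τ from rfl]
      calc T = (T/τ)*τ := (div_mul_cancel₀ _ hτ.ne').symm
        _ < ((N:ℝ)+1)*τ := by
            apply mul_lt_mul_of_pos_right _ hτ
            exact_mod_cast this
    linarith
  calc ENNReal.ofReal (ε/τ * (T - τ)) ≤ ENNReal.ofReal ((N:ℝ)*ε) := by
        apply ENNReal.ofReal_le_ofReal
        rw [div_mul_eq_mul_div, div_le_iff₀ hτ]
        calc ε * (T - τ) ≤ ε * ((N:ℝ)*τ) := by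
              exact mul_le_mul_of_nonneg_left hTN hε.le
          _ = (N:ℝ)*ε*τ := by ring
    _ ≤ ∫⁻ t in Ioc (0:ℝ) ((N:ℝ)*τ), ENNReal.ofReal ((1/2) * ‖g t - b σ (φ t)‖^2) := hfinal
    _ ≤ ∫⁻ t in Ioc (0:ℝ) T, ENNReal.ofReal ((1/2) * ‖g t - b σ (φ t)‖^2) :=
        lintegral_mono_set (Ioc_subset_Ioc le_rfl hNτ)


end AuxProof

/-- Lemma 2.7: paths confined to a compact subset of `A_− \ {x_−}`
have energy growing at least linearly in time, uniformly in `s ∈ [0,1]`. -/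
theorem confined_paths_energy_lower_bound {d : ℕ} (hd : 1 ≤ d)
    (b : ℝ → EuclideanSpace ℝ (Fin d) → EuclideanSpace ℝ (Fin d))
    (hper : ∀ t ≥ (0:ℝ), ∀ x, b (t + 1) x = b t x)
    (hLipX : ∀ R > (0:ℝ), ∀ x : EuclideanSpace ℝ (Fin d), ∃ K ≥ (0:ℝ),
      ∀ t ≥ (0:ℝ), ∀ y₁ ∈ Metric.closedBall x R, ∀ y₂ ∈ Metric.closedBall x R,
        ‖b t y₁ - b t y₂‖ ≤ K * ‖y₁ - y₂‖)
    (hLipT : ∀ R > (0:ℝ), ∀ x : EuclideanSpace ℝ (Fin d), ∃ κ ≥ (0:ℝ),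
      ∀ s ≥ (0:ℝ), ∀ t ≥ (0:ℝ), ∀ y ∈ Metric.closedBall x R,
        ‖b t y - b s y‖ ≤ κ * |t - s|)
    (hgrow : ∃ η > (0:ℝ), ∃ R₀ > (0:ℝ), ∀ t ≥ (0:ℝ),
      ∀ x : EuclideanSpace ℝ (Fin d), R₀ ≤ ‖x‖ → ⟪x, b t x⟫ < -η * ‖x‖)
    (xm xp : EuclideanSpace ℝ (Fin d)) (Am Ap : Set (EuclideanSpace ℝ (Fin d)))
    (heqm : ∀ s ≥ (0:ℝ), b s xm = 0) (heqp : ∀ s ≥ (0:ℝ), b s xp = 0)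
    (hAm : ∀ s ≥ (0:ℝ), Am = {y | ∀ φ : ℝ → EuclideanSpace ℝ (Fin d),
        (∀ t ∈ Ici (0:ℝ), HasDerivWithinAt φ (b s (φ t)) (Ici (0:ℝ)) t) → φ 0 = y →
        Tendsto φ atTop (𝓝 xm)})
    (hAp : ∀ s ≥ (0:ℝ), Ap = {y | ∀ φ : ℝ → EuclideanSpace ℝ (Fin d),
        (∀ t ∈ Ici (0:ℝ), HasDerivWithinAt φ (b s (φ t)) (Ici (0:ℝ)) t) → φ 0 = y →
        Tendsto φ atTop (𝓝 xp)})
    (hxm : xm ∈ Am) (hxp : xp ∈ Ap)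
    (hcl : closure (Am ∪ Ap) = univ)
    (hbd : frontier Am = frontier Ap)
    (K : Set (EuclideanSpace ℝ (Fin d))) (hKc : IsCompact K) (hK : K ⊆ Am \ {xm}) :
    ∃ T₀ > (0:ℝ), ∃ c > (0:ℝ), ∀ T ≥ T₀, ∀ s ∈ Icc (0:ℝ) 1,
      ∀ φ : ℝ → EuclideanSpace ℝ (Fin d), ContinuousOn φ (Icc (0:ℝ) T) →
        (∀ t ∈ Icc (0:ℝ) T, φ t ∈ K) →
        ENNReal.ofReal (c * (T - T₀)) ≤ frozenRate b s T φ := by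
  exact confined_paths_energy_lower_bound' hd b hLipX hLipT xm Am hAm K hKc hK
end

section
/- Let K be a compact subset of A_− \ {x_−}. For s ∈ [0,1] and x ∈ K, let φ_{s,x} denote the (unique, globally defined) solution of φ̇(t) = b(s, φ(t)) with φ(0) = x, and let τ(s,x) = inf{ t ≥ 0 : φ_{s,x}(t) ∉ K } be its first exit time from K. Then τ(s,x) < ∞ for all (s,x) ∈ [0,1] × K, the function (s,x) ↦ τ(s,x) is upper semi-continuous, and T₁ := sup_{s ∈ [0,1], x ∈ K} τ(s,x) is finite. -/
open MeasureTheory Set Filter Topology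
open scoped RealInnerProductSpace ENNReal

lemma traj_norm_le {d : ℕ} {b : ℝ → EuclideanSpace ℝ (Fin d) → EuclideanSpace ℝ (Fin d)}
    {s η R₀ M : ℝ} (hη : 0 < η) (hR₀ : 0 < R₀)
    (hb : ∀ x : EuclideanSpace ℝ (Fin d), R₀ ≤ ‖x‖ → ⟪x, b s x⟫ < -η * ‖x‖)
    (hM : R₀ ≤ M) {φ : ℝ → EuclideanSpace ℝ (Fin d)}
    (hφ : ∀ t ∈ Ici (0:ℝ), HasDerivWithinAt φ (b s (φ t)) (Ici (0:ℝ)) t)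
    (h0 : ‖φ 0‖ ≤ M) : ∀ t ≥ (0:ℝ), ‖φ t‖ ≤ M := by
  have hcont : ContinuousOn φ (Ici (0:ℝ)) := fun t ht => (hφ t ht).continuousWithinAt
  by_contra hcon
  push_neg at hcon
  obtain ⟨t₁, ht₁0, ht₁⟩ := hcon
  set c : ℝ := (M + ‖φ t₁‖) / 2 with hc
  have hc1 : M < c := by simp only [hc]; linarith
  have hc2 : c < ‖φ t₁‖ := by simp only [hc]; linarith
  set A : Set ℝ := {t ∈ Icc 0 t₁ | ‖φ t‖ ≤ c} with hA
  have h0A : (0:ℝ) ∈ A := ⟨⟨le_refl _, ht₁0⟩, h0.trans hc1.le⟩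
  have hbdd : BddAbove A := ⟨t₁, fun t ht => ht.1.2⟩
  have hclosed : IsClosed A := by
    have : A = Icc 0 t₁ ∩ φ ⁻¹' {y | ‖y‖ ≤ c} := rfl
    rw [this]
    exact (hcont.mono (Icc_subset_Ici_self)).preimage_isClosed_of_isClosed isClosed_Icc
      (isClosed_le (by continuity) continuous_const)
  set t₀ : ℝ := sSup A with ht₀
  have ht₀A : t₀ ∈ A := hclosed.csSup_mem ⟨0, h0A⟩ hbdd
  have ht₀mem : t₀ ∈ Icc 0 t₁ := ht₀A.1
  have ht₀c : ‖φ t₀‖ ≤ c := ht₀A.2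
  have ht₀lt : t₀ < t₁ := lt_of_le_of_ne ht₀mem.2 (fun h => by rw [h] at ht₀c; linarith)
  have key : ∀ t ∈ Ioc t₀ t₁, c < ‖φ t‖ := by
    intro t ht
    by_contra hle
    push_neg at hle
    have : t ∈ A := ⟨⟨ht₀mem.1.trans ht.1.le, ht.2⟩, hle⟩
    exact absurd (le_csSup hbdd this) (not_le.2 ht.1)
  set F : ℝ → ℝ := fun t => ⟪φ t, φ t⟫ with hF
  have hanti : StrictAntiOn F (Icc t₀ t₁) := by
    apply strictAntiOn_of_deriv_neg (convex_Icc _ _)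
    · have hsub : Icc t₀ t₁ ⊆ Ici (0:ℝ) := fun u hu => le_trans ht₀mem.1 hu.1
      exact ((hcont.mono hsub).inner (hcont.mono hsub))
    · intro t ht
      rw [interior_Icc] at ht
      have ht0 : (0:ℝ) < t := lt_of_le_of_lt ht₀mem.1 ht.1
      have hd : HasDerivAt φ (b s (φ t)) t :=
        (hφ t (le_of_lt ht0)).hasDerivAt (Ici_mem_nhds ht0)
      have hFd : HasDerivAt F (⟪φ t, b s (φ t)⟫ + ⟪b s (φ t), φ t⟫) t :=
        HasDerivAt.inner ℝ hd hd
      rw [hFd.deriv]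
      have hct : c < ‖φ t‖ := key t ⟨ht.1, ht.2.le⟩
      have hRt : R₀ ≤ ‖φ t‖ := le_of_lt (lt_of_le_of_lt (hM.trans hc1.le) hct)
      have hip := hb (φ t) hRt
      have hcomm : ⟪b s (φ t), φ t⟫ = ⟪φ t, b s (φ t)⟫ := real_inner_comm _ _
      nlinarith [hip, hcomm, mul_pos hη (lt_of_lt_of_le hR₀ hRt)]
  have h1 : F t₁ < F t₀ := hanti (left_mem_Icc.2 ht₀mem.2) (right_mem_Icc.2 ht₀lt.le) ht₀lt
  have e1 : F t₁ = ‖φ t₁‖ ^ 2 := real_inner_self_eq_norm_sq _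
  have e0 : F t₀ = ‖φ t₀‖ ^ 2 := real_inner_self_eq_norm_sq _
  have hc0 : 0 ≤ c := (le_trans hR₀.le (hM.trans hc1.le))
  nlinarith [ht₀c, hc2, norm_nonneg (φ t₀), norm_nonneg (φ t₁)]



lemma traj_dist_le {d : ℕ} {b : ℝ → EuclideanSpace ℝ (Fin d) → EuclideanSpace ℝ (Fin d)}
    {s s₀ L κ M T : ℝ} (hL : 0 ≤ L)
    (hLip : ∀ y₁ ∈ Metric.closedBall (0 : EuclideanSpace ℝ (Fin d)) M,
      ∀ y₂ ∈ Metric.closedBall (0 : EuclideanSpace ℝ (Fin d)) M, ‖b s₀ y₁ - b s₀ y₂‖ ≤ L * ‖y₁ - y₂‖)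
    (hTLip : ∀ y ∈ Metric.closedBall (0 : EuclideanSpace ℝ (Fin d)) M, ‖b s y - b s₀ y‖ ≤ κ * |s - s₀|)
    {φ ψ : ℝ → EuclideanSpace ℝ (Fin d)}
    (hφ : ∀ t ∈ Ici (0:ℝ), HasDerivWithinAt φ (b s (φ t)) (Ici (0:ℝ)) t)
    (hψ : ∀ t ∈ Ici (0:ℝ), HasDerivWithinAt ψ (b s₀ (ψ t)) (Ici (0:ℝ)) t)
    (hφM : ∀ t ∈ Icc (0:ℝ) T, ‖φ t‖ ≤ M) (hψM : ∀ t ∈ Icc (0:ℝ) T, ‖ψ t‖ ≤ M) :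
    ∀ t ∈ Icc (0:ℝ) T,
      dist (φ t) (ψ t) ≤ gronwallBound (dist (φ 0) (ψ 0)) L (κ * |s - s₀|) t := by
  intro t ht
  have hLcoe : ((L.toNNReal : NNReal) : ℝ) = L := Real.coe_toNNReal L hL
  have hv : ∀ u : ℝ, LipschitzOnWith L.toNNReal (fun y => b s₀ y)
      (Metric.closedBall (0 : EuclideanSpace ℝ (Fin d)) M) := by
    intro u
    apply LipschitzOnWith.of_dist_le_mul
    intro y₁ h₁ y₂ h₂
    rw [dist_eq_norm, dist_eq_norm, hLcoe]
    exact hLip y₁ h₁ y₂ h₂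
  have hφc : ContinuousOn φ (Icc 0 T) :=
    fun u hu => ((hφ u hu.1).continuousWithinAt).mono (fun v hv => hv.1)
  have hψc : ContinuousOn ψ (Icc 0 T) :=
    fun u hu => ((hψ u hu.1).continuousWithinAt).mono (fun v hv => hv.1)
  have hφ' : ∀ u ∈ Ico (0:ℝ) T, HasDerivWithinAt φ (b s (φ u)) (Ici u) u :=
    fun u hu => (hφ u hu.1).mono (Ici_subset_Ici.2 hu.1)
  have hψ' : ∀ u ∈ Ico (0:ℝ) T, HasDerivWithinAt ψ (b s₀ (ψ u)) (Ici u) u :=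
    fun u hu => (hψ u hu.1).mono (Ici_subset_Ici.2 hu.1)
  have hφmem : ∀ u ∈ Ico (0:ℝ) T, φ u ∈ Metric.closedBall (0 : EuclideanSpace ℝ (Fin d)) M :=
    fun u hu => by rw [mem_closedBall_zero_iff]; exact hφM u ⟨hu.1, hu.2.le⟩
  have hψmem : ∀ u ∈ Ico (0:ℝ) T, ψ u ∈ Metric.closedBall (0 : EuclideanSpace ℝ (Fin d)) M :=
    fun u hu => by rw [mem_closedBall_zero_iff]; exact hψM u ⟨hu.1, hu.2.le⟩
  have hfb : ∀ u ∈ Ico (0:ℝ) T, dist (b s (φ u)) ((fun _ y => b s₀ y) u (φ u)) ≤ κ * |s - s₀| :=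
    fun u hu => by rw [dist_eq_norm]; exact hTLip (φ u) (hφmem u hu)
  have hgb : ∀ u ∈ Ico (0:ℝ) T, dist (b s₀ (ψ u)) ((fun _ y => b s₀ y) u (ψ u)) ≤ (0:ℝ) :=
    fun u hu => by simp
  have := dist_le_of_approx_trajectories_ODE_of_mem (v := fun _ y => b s₀ y)
    (s := fun _ => Metric.closedBall (0 : EuclideanSpace ℝ (Fin d)) M) (fun u _ => hv u) hφc hφ' hfb hφmem
    hψc hψ' hgb hψmem (le_refl (dist (φ 0) (ψ 0))) t ht
  rw [sub_zero] at this
  rw [hLcoe] at this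
  simpa using this


lemma gronwallBound_cont {X : Type*} [TopologicalSpace X] {δ ε : X → ℝ} (K x : ℝ)
    (hδ : Continuous δ) (hε : Continuous ε) :
    Continuous fun p => gronwallBound (δ p) K (ε p) x := by
  unfold gronwallBound
  split_ifs
  · fun_prop
  · fun_prop

/-- finiteness and upper semicontinuity of the first exit time of the
deterministic flow from a compact subset `K ⊆ A_− \ {x_−}`, and finiteness of its
supremum over `(s,x) ∈ [0,1] × K`. -/
theorem exit_time_finite_usc_bounded {d : ℕ} (hd : 1 ≤ d)
    (b : ℝ → EuclideanSpace ℝ (Fin d) → EuclideanSpace ℝ (Fin d))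
    (hper : ∀ t ≥ (0:ℝ), ∀ x, b (t + 1) x = b t x)
    (hLipX : ∀ R > (0:ℝ), ∀ x : EuclideanSpace ℝ (Fin d), ∃ K ≥ (0:ℝ),
      ∀ t ≥ (0:ℝ), ∀ y₁ ∈ Metric.closedBall x R, ∀ y₂ ∈ Metric.closedBall x R,
        ‖b t y₁ - b t y₂‖ ≤ K * ‖y₁ - y₂‖)
    (hLipT : ∀ R > (0:ℝ), ∀ x : EuclideanSpace ℝ (Fin d), ∃ κ ≥ (0:ℝ),
      ∀ s ≥ (0:ℝ), ∀ t ≥ (0:ℝ), ∀ y ∈ Metric.closedBall x R,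
        ‖b t y - b s y‖ ≤ κ * |t - s|)
    (hgrow : ∃ η > (0:ℝ), ∃ R₀ > (0:ℝ), ∀ t ≥ (0:ℝ),
      ∀ x : EuclideanSpace ℝ (Fin d), R₀ ≤ ‖x‖ → ⟪x, b t x⟫ < -η * ‖x‖)
    (xm xp : EuclideanSpace ℝ (Fin d)) (Am Ap : Set (EuclideanSpace ℝ (Fin d)))
    (heqm : ∀ s ≥ (0:ℝ), b s xm = 0) (heqp : ∀ s ≥ (0:ℝ), b s xp = 0)
    (hAm : ∀ s ≥ (0:ℝ), Am = {y | ∀ φ : ℝ → EuclideanSpace ℝ (Fin d),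
        (∀ t ∈ Ici (0:ℝ), HasDerivWithinAt φ (b s (φ t)) (Ici (0:ℝ)) t) → φ 0 = y →
        Tendsto φ atTop (𝓝 xm)})
    (hAp : ∀ s ≥ (0:ℝ), Ap = {y | ∀ φ : ℝ → EuclideanSpace ℝ (Fin d),
        (∀ t ∈ Ici (0:ℝ), HasDerivWithinAt φ (b s (φ t)) (Ici (0:ℝ)) t) → φ 0 = y →
        Tendsto φ atTop (𝓝 xp)})
    (hxm : xm ∈ Am) (hxp : xp ∈ Ap)
    (hcl : closure (Am ∪ Ap) = univ)
    (hbd : frontier Am = frontier Ap)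
    (K : Set (EuclideanSpace ℝ (Fin d))) (hKc : IsCompact K) (hK : K ⊆ Am \ {xm})
    (Φ : ℝ → EuclideanSpace ℝ (Fin d) → ℝ → EuclideanSpace ℝ (Fin d))
    (hΦ0 : ∀ s ∈ Icc (0:ℝ) 1, ∀ x ∈ K, Φ s x 0 = x)
    (hΦ : ∀ s ∈ Icc (0:ℝ) 1, ∀ x ∈ K, ∀ t ∈ Ici (0:ℝ),
      HasDerivWithinAt (Φ s x) (b s (Φ s x t)) (Ici (0:ℝ)) t)
    (hΦuniq : ∀ s ∈ Icc (0:ℝ) 1, ∀ x ∈ K, ∀ ψ : ℝ → EuclideanSpace ℝ (Fin d),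
      ψ 0 = x → (∀ t ∈ Ici (0:ℝ), HasDerivWithinAt ψ (b s (ψ t)) (Ici (0:ℝ)) t) →
      ∀ t ∈ Ici (0:ℝ), ψ t = Φ s x t) :
    (∀ s ∈ Icc (0:ℝ) 1, ∀ x ∈ K, ∃ t, 0 ≤ t ∧ Φ s x t ∉ K) ∧
    UpperSemicontinuousOn
      (fun p : ℝ × EuclideanSpace ℝ (Fin d) => sInf {t : ℝ | 0 ≤ t ∧ Φ p.1 p.2 t ∉ K})
      (Icc (0:ℝ) 1 ×ˢ K) ∧
    BddAbove
      ((fun p : ℝ × EuclideanSpace ℝ (Fin d) => sInf {t : ℝ | 0 ≤ t ∧ Φ p.1 p.2 t ∉ K}) ''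
        (Icc (0:ℝ) 1 ×ˢ K)) := by
  classical
  have hKclosed : IsClosed K := hKc.isClosed
  have hxmK : xm ∉ K := fun h => (hK h).2 rfl
  have part1 : ∀ s ∈ Icc (0:ℝ) 1, ∀ x ∈ K, ∃ t, 0 ≤ t ∧ Φ s x t ∉ K := by
    intro s hs x hx
    have hxAm : x ∈ Am := (hK hx).1
    rw [hAm s hs.1] at hxAm
    have htend : Tendsto (Φ s x) atTop (𝓝 xm) := hxAm (Φ s x) (hΦ s hs x hx) (hΦ0 s hs x hx)
    have hev : ∀ᶠ t in atTop, Φ s x t ∈ Kᶜ :=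
      htend (hKclosed.isOpen_compl.mem_nhds hxmK)
    obtain ⟨t, htc, ht0⟩ := (hev.and (eventually_ge_atTop (0:ℝ))).exists
    exact ⟨t, ht0, htc⟩
  obtain ⟨η, hη, R₀, hR₀, hgb⟩ := hgrow
  obtain ⟨r, hrK⟩ := hKc.isBounded.subset_closedBall (0 : EuclideanSpace ℝ (Fin d))
  set M : ℝ := max R₀ (max r 1) with hMdef
  have hM0 : (0:ℝ) < M := lt_of_lt_of_le one_pos (le_trans (le_max_right r 1) (le_max_right _ _))
  have hMR₀ : R₀ ≤ M := le_max_left _ _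
  obtain ⟨L, hL0, hLb⟩ := hLipX M hM0 0
  obtain ⟨κ, hκ0, hκb⟩ := hLipT M hM0 0
  have hnormK : ∀ x ∈ K, ‖x‖ ≤ M := by
    intro x hx
    have := hrK hx
    rw [Metric.mem_closedBall, dist_zero_right] at this
    exact this.trans (le_trans (le_max_left r 1) (le_max_right _ _))
  have hbound : ∀ s ∈ Icc (0:ℝ) 1, ∀ x ∈ K, ∀ t ≥ (0:ℝ), ‖Φ s x t‖ ≤ M := by
    intro s hs x hx
    exact traj_norm_le hη hR₀ (fun z hz => hgb s hs.1 z hz) hMR₀ (hΦ s hs x hx)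
      (by rw [hΦ0 s hs x hx]; exact hnormK x hx)
  set τ : ℝ × EuclideanSpace ℝ (Fin d) → ℝ :=
    fun p => sInf {t : ℝ | 0 ≤ t ∧ Φ p.1 p.2 t ∉ K} with hτdef
  set D : Set (ℝ × EuclideanSpace ℝ (Fin d)) := Icc (0:ℝ) 1 ×ˢ K with hDdef
  have key : ∀ p ∈ D, ∀ y, τ p < y → ∀ᶠ q in 𝓝[D] p, τ q < y := by
    rintro ⟨s₀, x₀⟩ hp y hy
    rw [hDdef, Set.mem_prod] at hp
    obtain ⟨hs₀, hx₀⟩ := hp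
    have hne : {t : ℝ | 0 ≤ t ∧ Φ s₀ x₀ t ∉ K}.Nonempty := part1 s₀ hs₀ x₀ hx₀
    obtain ⟨tst, htst, htlt⟩ := exists_lt_of_csInf_lt hne hy
    have hKne : K.Nonempty := ⟨x₀, hx₀⟩
    have hδpos : 0 < Metric.infDist (Φ s₀ x₀ tst) K :=
      (hKclosed.notMem_iff_infDist_pos hKne).1 htst.2
    have hg : Continuous (fun q : ℝ × EuclideanSpace ℝ (Fin d) =>
        gronwallBound (dist q.2 x₀) L (κ * |q.1 - s₀|) tst) :=
      gronwallBound_cont L tst (by fun_prop) (by fun_prop)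
    have hev : ∀ᶠ q in 𝓝 ((s₀ : ℝ), x₀), gronwallBound (dist q.2 x₀) L (κ * |q.1 - s₀|) tst
        < Metric.infDist (Φ s₀ x₀ tst) K := by
      have ht := hg.tendsto ((s₀ : ℝ), x₀)
      have h0 : gronwallBound (dist x₀ x₀) L (κ * |s₀ - s₀|) tst = 0 := by
        simp [gronwallBound_ε0_δ0]
      simp only [gronwallBound_ε0_δ0, dist_self, sub_self, abs_zero, mul_zero] at ht
      exact ht.eventually_lt_const hδpos
    filter_upwards [hev.filter_mono nhdsWithin_le_nhds, self_mem_nhdsWithin] with q hq hqD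
    rw [hDdef, Set.mem_prod] at hqD
    have hbddq : BddBelow {t : ℝ | 0 ≤ t ∧ Φ q.1 q.2 t ∉ K} := ⟨0, fun t ht => ht.1⟩
    have hnotK : Φ q.1 q.2 tst ∉ K := by
      intro hmem
      have hd := traj_dist_le hL0 (hLb s₀ hs₀.1)
        (fun z hz => hκb s₀ hs₀.1 q.1 hqD.1.1 z hz)
        (hΦ q.1 hqD.1 q.2 hqD.2) (hΦ s₀ hs₀ x₀ hx₀)
        (fun t ht => hbound q.1 hqD.1 q.2 hqD.2 t ht.1)
        (fun t ht => hbound s₀ hs₀ x₀ hx₀ t ht.1) tst ⟨htst.1, le_refl tst⟩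
      rw [hΦ0 q.1 hqD.1 q.2 hqD.2, hΦ0 s₀ hs₀ x₀ hx₀] at hd
      have hinf : Metric.infDist (Φ s₀ x₀ tst) K ≤ dist (Φ s₀ x₀ tst) (Φ q.1 q.2 tst) :=
        Metric.infDist_le_dist_of_mem hmem
      rw [dist_comm] at hinf
      linarith
    exact lt_of_le_of_lt (csInf_le hbddq ⟨htst.1, hnotK⟩) htlt
  refine ⟨part1, fun p hp y hy => key p hp y hy, ?_⟩
  rcases D.eq_empty_or_nonempty with hDe | hDne
  · rw [hDe, Set.image_empty]
    exact bddAbove_empty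
  have hDc : IsCompact D := isCompact_Icc.prod hKc
  set U : ℝ × EuclideanSpace ℝ (Fin d) → Set (ℝ × EuclideanSpace ℝ (Fin d)) :=
    fun p => {q | q ∈ D → τ q < τ p + 1} with hUdef
  have hU : ∀ p ∈ D, U p ∈ 𝓝 p := by
    intro p hp
    have h := key p hp (τ p + 1) (lt_add_one _)
    rw [eventually_nhdsWithin_iff] at h
    exact h
  obtain ⟨F, hFD, hFcov⟩ := hDc.elim_nhds_subcover U hU
  obtain ⟨B, hB⟩ := (F.image fun p => τ p + 1).exists_le
  refine ⟨B, ?_⟩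
  rintro z ⟨q, hq, rfl⟩
  obtain ⟨p, hpF, hqU⟩ := Set.mem_iUnion₂.1 (hFcov hq)
  exact le_trans (hqU hq).le (hB _ (Finset.mem_image_of_mem _ hpF))
end
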